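/- arXiv:1510.05948 — 6 statements merged into one kernel-verified Lean document; each statement's English description precedes it below -/
import Mathlib

section
/- Let n ≥ 1, let q be a positive integer, and let s, s' ∈ ℤⁿ with gcd(q, s₁, …, sₙ) = gcd(q, s'₁, …, s'ₙ) = 1. Set s_{n+1} = −(s₁ + ⋯ + sₙ) and s'_{n+1} = −(s'₁ + ⋯ + s'ₙ), let ξ_q = exp(2πi/q), and let γ_{q,s} = diag(ξ_q^{s₁}, …, ξ_q^{sₙ}, ξ_q^{s_{n+1}}) ∈ SU(n+1), and similarly γ_{q,s'}. Then the cyclic subgroups Γ_{q,s} = ⟨γ_{q,s}⟩ and Γ_{q,s'} = ⟨γ_{q,s'}⟩ are conjugate in SU(n+1) if and only if there exist a permutation σ of {1, …, n+1} and an integer ℓ coprime to q such that s_{σ(j)} ≡ ℓ s'_j (mod q) for all 1 ≤ j ≤ n+1. -/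
lemma aux_exists_perm {α : Type*} : ∀ (m : ℕ) (f g : Fin m → α),
    Multiset.map f Finset.univ.val = Multiset.map g Finset.univ.val →
    ∃ σ : Equiv.Perm (Fin m), ∀ j, f (σ j) = g j := by
  intro m
  induction m with
  | zero => intro f g _; exact ⟨1, fun j => j.elim0⟩
  | succ m ih =>
    intro f g h
    have hmem : g 0 ∈ Multiset.map f Finset.univ.val := by
      rw [h]
      exact Multiset.mem_map.2 ⟨0, Finset.mem_univ_val _, rfl⟩
    obtain ⟨i, -, hi⟩ := Multiset.mem_map.1 hmem
    set e := Equiv.swap (0 : Fin (m+1)) i with he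
    have hfe : Multiset.map (f ∘ e) Finset.univ.val = Multiset.map f Finset.univ.val := by
      have : Multiset.map (⇑e) Finset.univ.val = Finset.univ.val := by
        conv_rhs => rw [← Finset.map_univ_equiv e]
        simp [Finset.map_val]
      rw [← Multiset.map_map, this]
    have h' : Multiset.map (f ∘ e) Finset.univ.val = Multiset.map g Finset.univ.val :=
      hfe.trans h
    have huniv : (Finset.univ.val : Multiset (Fin (m+1))) =
        0 ::ₘ Multiset.map Fin.succ Finset.univ.val := by
      rw [Fin.univ_succ, Finset.cons_val, Finset.map_val]
      rfl
    rw [huniv, Multiset.map_cons, Multiset.map_cons, Multiset.map_map, Multiset.map_map] at h'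
    have h0 : (f ∘ e) 0 = g 0 := by simp [he, hi]
    rw [h0] at h'
    have h'' := (Multiset.cons_inj_right _).1 h'
    obtain ⟨τ, hτ⟩ := ih (f ∘ e ∘ Fin.succ) (g ∘ Fin.succ) h''
    refine ⟨(Equiv.Perm.decomposeFin.symm (0, τ)).trans e, fun j => ?_⟩
    refine Fin.cases ?_ (fun j' => ?_) j
    · simpa using h0
    · have := hτ j'
      simpa [Equiv.Perm.decomposeFin_symm_apply_succ] using this

lemma aux_conj_pow {M : Type*} [Monoid M] (g h x : M) (hgh : g * h = 1) (hhg : h * g = 1) :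
    ∀ k : ℕ, (g * x * h) ^ k = g * x ^ k * h := by
  intro k
  induction k with
  | zero => simpa using hgh.symm
  | succ k ih =>
    rw [pow_succ, pow_succ, ih]
    calc g * x ^ k * h * (g * x * h) = g * x ^ k * ((h * g) * (x * h)) := by
          simp only [mul_assoc]
      _ = g * (x ^ k * x) * h := by rw [hhg, one_mul]; simp only [mul_assoc]

/-- **Conjugacy of cyclic subgroups of SU(n+1).**
For `q ≥ 1` and `s, s' ∈ ℤⁿ` with `gcd(q, s) = gcd(q, s') = 1`, the cyclic subgroups of
`SU(n+1)` generated by the diagonal matrices `γ_{q,s} = diag(ξ^{s₁}, …, ξ^{sₙ}, ξ^{s_{n+1}})`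
and `γ_{q,s'}` (where `ξ = e^{2πi/q}` and `s_{n+1} = -(s₁+⋯+sₙ)`) are conjugate in `SU(n+1)`
iff `s_{σ(j)} ≡ ℓ s'_j (mod q)` for all `j`, for some permutation `σ` and some `ℓ` coprime
to `q`. -/
theorem conjugate_cyclic_subgroups_SU_iff
    (n : ℕ) (hn : 1 ≤ n) (q : ℕ) (hq : 0 < q) (s s' : Fin n → ℤ)
    (hs : Int.gcd (q : ℤ) (Finset.univ.gcd s) = 1)
    (hs' : Int.gcd (q : ℤ) (Finset.univ.gcd s') = 1)
    (sF sF' : Fin (n + 1) → ℤ)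
    (hsF : sF = Fin.snoc s (-(∑ i, s i)))
    (hsF' : sF' = Fin.snoc s' (-(∑ i, s' i)))
    (ξ : ℂ) (hξ : ξ = Complex.exp (2 * Real.pi * Complex.I / q))
    (γ γ' : Matrix (Fin (n + 1)) (Fin (n + 1)) ℂ)
    (hγ : γ = Matrix.diagonal fun i => ξ ^ sF i)
    (hγ' : γ' = Matrix.diagonal fun i => ξ ^ sF' i) :
    (∃ g : Matrix (Fin (n + 1)) (Fin (n + 1)) ℂ,
        g ∈ Matrix.specialUnitaryGroup (Fin (n + 1)) ℂ ∧
          (fun x => g * x * g⁻¹) '' {x | ∃ k : ℕ, x = γ ^ k} = {x | ∃ k : ℕ, x = γ' ^ k}) ↔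
      ∃ (σ : Equiv.Perm (Fin (n + 1))) (ℓ : ℤ), Int.gcd ℓ (q : ℤ) = 1 ∧
        ∀ j, sF (σ j) ≡ ℓ * sF' j [ZMOD (q : ℤ)] := by
  -- basic facts about ξ
  have hprim : IsPrimitiveRoot ξ q := by
    rw [hξ]; exact Complex.isPrimitiveRoot_exp q hq.ne'
  have hξ0 : ξ ≠ 0 := by rw [hξ]; exact Complex.exp_ne_zero _
  have hxi : ∀ u v : ℤ, ξ ^ u = ξ ^ v ↔ u ≡ v [ZMOD (q : ℤ)] := by
    intro u v
    rw [Int.modEq_iff_dvd, ← hprim.zpow_eq_one_iff_dvd, zpow_sub₀ hξ0,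
      div_eq_one_iff_eq (zpow_ne_zero _ hξ0)]
    exact ⟨fun h => h.symm, fun h => h.symm⟩
  -- divisibility from the gcd hypothesis
  have hdvd' : ∀ c : ℤ, (∀ i : Fin n, (q : ℤ) ∣ s' i * c) → (q : ℤ) ∣ c := by
    intro c hc
    have h1 : (q : ℤ) ∣ Finset.univ.gcd (fun i => s' i * c) :=
      Finset.dvd_gcd fun i _ => hc i
    rw [Finset.gcd_mul_right] at h1
    have hco : IsCoprime (q : ℤ) (Finset.univ.gcd s') :=
      Int.isCoprime_iff_gcd_eq_one.mpr hs'
    have h2 : (q : ℤ) ∣ normalize c := hco.dvd_of_dvd_mul_left h1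
    rwa [← Int.abs_eq_normalize, dvd_abs] at h2
  have hkey' : ∀ a b : ℤ, (∀ i, ξ ^ (sF' i * a) = ξ ^ (sF' i * b)) ↔ a ≡ b [ZMOD (q : ℤ)] := by
    intro a b
    constructor
    · intro h
      rw [Int.modEq_iff_dvd]
      apply hdvd' (b - a)
      intro i
      have := (hxi _ _).1 (h (Fin.castSucc i))
      rw [Int.modEq_iff_dvd] at this
      have hcast : sF' (Fin.castSucc i) = s' i := by rw [hsF']; simp
      rw [hcast] at this
      simpa [mul_sub] using this
    · intro h i
      exact (hxi _ _).2 (h.mul_left _)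
  have hγ'pow : ∀ k : ℕ, γ' ^ k = Matrix.diagonal (fun i => ξ ^ (sF' i * k)) := by
    intro k
    rw [hγ', Matrix.diagonal_pow]
    exact congrArg Matrix.diagonal (funext fun i => by
      rw [Pi.pow_apply, ← zpow_natCast, ← zpow_mul])
  have hγpow : ∀ k : ℕ, γ ^ k = Matrix.diagonal (fun i => ξ ^ (sF i * k)) := by
    intro k
    rw [hγ, Matrix.diagonal_pow]
    exact congrArg Matrix.diagonal (funext fun i => by
      rw [Pi.pow_apply, ← zpow_natCast, ← zpow_mul])
  have hpow' : ∀ a b : ℕ, γ' ^ a = γ' ^ b ↔ (a : ℤ) ≡ (b : ℤ) [ZMOD (q : ℤ)] := by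
    intro a b
    rw [hγ'pow, hγ'pow]
    constructor
    · intro h
      exact (hkey' a b).1 fun i => congrFun (Matrix.diagonal_injective h) i
    · intro h
      exact congrArg Matrix.diagonal (funext fun i => (hkey' a b).2 h i)
  constructor
  · -- forward direction
    rintro ⟨g, hg, hset⟩
    obtain ⟨hgu, hgdet⟩ := Matrix.mem_specialUnitaryGroup_iff.mp hg
    have hdetu : IsUnit g.det := hgdet ▸ isUnit_one
    have hginv : g * g⁻¹ = 1 := Matrix.mul_nonsing_inv g hdetu
    have hinvg : g⁻¹ * g = 1 := Matrix.nonsing_inv_mul g hdetu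
    have hγ'mem : γ' ∈ (fun x => g * x * g⁻¹) '' {x | ∃ k : ℕ, x = γ ^ k} := by
      rw [hset]; exact ⟨1, (pow_one γ').symm⟩
    obtain ⟨x, ⟨m, hx⟩, hgx⟩ := hγ'mem
    subst hx
    simp only at hgx
    have hconj : g * γ * g⁻¹ ∈ {x | ∃ k : ℕ, x = γ' ^ k} := by
      rw [← hset]; exact ⟨γ, ⟨1, (pow_one γ).symm⟩, rfl⟩
    obtain ⟨ℓ₀, hl0⟩ := hconj
    have h1 : γ' = γ' ^ (ℓ₀ * m) := by
      conv_lhs => rw [← hgx]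
      rw [← aux_conj_pow g g⁻¹ γ hginv hinvg, hl0, ← pow_mul]
    have hmod1 : ((1 : ℕ) : ℤ) ≡ ((ℓ₀ * m : ℕ) : ℤ) [ZMOD (q : ℤ)] :=
      (hpow' 1 (ℓ₀ * m)).1 (by rw [pow_one, ← h1])
    have hcop : Int.gcd (ℓ₀ : ℤ) (q : ℤ) = 1 := by
      rw [Int.modEq_iff_dvd] at hmod1
      obtain ⟨t, ht⟩ := hmod1
      rw [← Int.isCoprime_iff_gcd_eq_one]
      refine ⟨(m : ℤ), -t, ?_⟩
      push_cast at ht ⊢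
      linarith
    -- eigenvalue comparison
    have hpoly : ∀ x : ℂ, (∏ i, (x - ξ ^ sF i)) = ∏ i, (x - ξ ^ (sF' i * ℓ₀)) := by
      intro x
      have e1 : x • (1 : Matrix (Fin (n+1)) (Fin (n+1)) ℂ) - γ =
          Matrix.diagonal (fun i => x - ξ ^ sF i) := by
        rw [hγ, Matrix.smul_one_eq_diagonal, Matrix.diagonal_sub]
      have e2 : x • (1 : Matrix (Fin (n+1)) (Fin (n+1)) ℂ) - γ' ^ ℓ₀ =
          Matrix.diagonal (fun i => x - ξ ^ (sF' i * ℓ₀)) := by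
        rw [hγ'pow ℓ₀, Matrix.smul_one_eq_diagonal, Matrix.diagonal_sub]
      have e3 : g * (x • (1 : Matrix (Fin (n+1)) (Fin (n+1)) ℂ) - γ) * g⁻¹ =
          x • (1 : Matrix (Fin (n+1)) (Fin (n+1)) ℂ) - γ' ^ ℓ₀ := by
        rw [Matrix.mul_sub, Matrix.sub_mul, ← hl0]
        congr 1
        rw [Matrix.mul_smul, Matrix.smul_mul, mul_one, hginv]
      have e4 : ((x • (1 : Matrix (Fin (n+1)) (Fin (n+1)) ℂ) - γ' ^ ℓ₀)).det =
          ((x • (1 : Matrix (Fin (n+1)) (Fin (n+1)) ℂ) - γ)).det := by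
        rw [← e3, Matrix.det_mul_comm, ← Matrix.mul_assoc, hinvg, Matrix.one_mul]
      rw [e1] at e4
      rw [e2] at e4
      rw [Matrix.det_diagonal, Matrix.det_diagonal] at e4
      exact e4.symm
    have hmult : Multiset.map (fun i => ξ ^ sF i) Finset.univ.val =
        Multiset.map (fun i => ξ ^ (sF' i * ℓ₀)) Finset.univ.val := by
      have hP : ((Multiset.map (fun i => ξ ^ sF i) Finset.univ.val).map
            (fun a => Polynomial.X - Polynomial.C a)).prod =
          ((Multiset.map (fun i => ξ ^ (sF' i * ℓ₀)) Finset.univ.val).map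
            (fun a => Polynomial.X - Polynomial.C a)).prod := by
        apply Polynomial.funext
        intro x
        rw [Polynomial.eval_multiset_prod, Polynomial.eval_multiset_prod]
        simp only [Multiset.map_map]
        have := hpoly x
        rw [Finset.prod_eq_multiset_prod, Finset.prod_eq_multiset_prod] at this
        simp only [Function.comp_def, Polynomial.eval_sub, Polynomial.eval_X,
          Polynomial.eval_C]
        exact this
      have := congrArg Polynomial.roots hP
      rwa [Polynomial.roots_multiset_prod_X_sub_C, Polynomial.roots_multiset_prod_X_sub_C]
        at this
    obtain ⟨σ, hσ⟩ := aux_exists_perm _ _ _ hmult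
    refine ⟨σ, (ℓ₀ : ℤ), hcop, fun j => ?_⟩
    have := (hxi _ _).1 (hσ j)
    rwa [mul_comm] at this
  · -- backward direction
    rintro ⟨σ, ℓ, hcop, hcong⟩
    -- a natural number representative of ℓ mod q
    set m : ℕ := (ℓ % (q : ℤ)).toNat with hmdef
    have hq0 : (q : ℤ) ≠ 0 := Int.natCast_ne_zero.mpr hq.ne'
    have hmℓ : (m : ℤ) ≡ ℓ [ZMOD (q : ℤ)] := by
      rw [hmdef, Int.toNat_of_nonneg (Int.emod_nonneg ℓ hq0)]
      exact Int.mod_modEq ℓ (q : ℤ)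
    -- entries agree
    have hval : ∀ i, ξ ^ sF (σ i) = ξ ^ (sF' i * (m : ℤ)) := by
      intro i
      apply (hxi _ _).2
      calc sF (σ i) ≡ ℓ * sF' i [ZMOD (q : ℤ)] := hcong i
        _ ≡ (m : ℤ) * sF' i [ZMOD (q : ℤ)] := (hmℓ.symm.mul_right _)
        _ = sF' i * (m : ℤ) := mul_comm _ _
    -- the conjugating matrix
    set P : Matrix (Fin (n+1)) (Fin (n+1)) ℂ := σ.permMatrix ℂ with hP
    set ε : Fin (n+1) → ℂ := fun i => if i = 0 then ((Equiv.Perm.sign σ : ℤ) : ℂ) else 1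
      with hε
    set D : Matrix (Fin (n+1)) (Fin (n+1)) ℂ := Matrix.diagonal ε with hD
    set g : Matrix (Fin (n+1)) (Fin (n+1)) ℂ := P * D with hg
    have hsign2 : ((Equiv.Perm.sign σ : ℤ) : ℂ) * ((Equiv.Perm.sign σ : ℤ) : ℂ) = 1 := by
      have : (Equiv.Perm.sign σ : ℤ) * (Equiv.Perm.sign σ : ℤ) = 1 := by
        rcases Int.units_eq_one_or (Equiv.Perm.sign σ) with h | h <;> rw [h] <;> norm_num
      exact_mod_cast this
    have hεunit : ∀ i, ε i * ε i = 1 := by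
      intro i
      by_cases h : i = 0 <;> simp [hε, h, hsign2]
    have hεreal : ∀ i, (starRingEnd ℂ) (ε i) = ε i := by
      intro i
      by_cases h : i = 0 <;> simp [hε, h]
    have hdetD : D.det = ((Equiv.Perm.sign σ : ℤ) : ℂ) := by
      rw [hD, Matrix.det_diagonal, hε]
      rw [Finset.prod_ite_eq' Finset.univ (0 : Fin (n+1)) fun _ => ((Equiv.Perm.sign σ : ℤ) : ℂ)]
      simp
    have hdetg : g.det = 1 := by
      rw [hg, Matrix.det_mul, hdetD, hP, Matrix.det_permutation]
      push_cast [← hsign2]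
      ring
    -- unitarity
    have hPtrans : star P = ((σ⁻¹).permMatrix ℂ) := by
      ext i j
      simp only [hP, Matrix.star_apply, Equiv.Perm.permMatrix, PEquiv.toMatrix_apply,
        Equiv.toPEquiv_apply, Option.mem_def, Option.some.injEq]
      by_cases h : σ j = i
      · rw [if_pos h, if_pos (by simp [← h])]
        simp
      · rw [if_neg h, if_neg (by intro hc; apply h; rw [← hc]; simp)]
        simp
    have hPunit : star P * P = 1 := by
      rw [hPtrans, hP, Equiv.Perm.permMatrix, Equiv.Perm.permMatrix, ← PEquiv.toMatrix_trans,
        ← Equiv.toPEquiv_trans]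
      rw [show Equiv.trans σ⁻¹ σ = Equiv.refl (Fin (n+1)) from Equiv.ext fun x => by simp,
        Equiv.toPEquiv_refl, PEquiv.toMatrix_refl]
    have hgunitary : g ∈ Matrix.unitaryGroup (Fin (n+1)) ℂ := by
      rw [Matrix.mem_unitaryGroup_iff']
      rw [hg, StarMul.star_mul]
      calc star D * star P * (P * D) = star D * (star P * P) * D := by
            simp only [mul_assoc]
        _ = star D * D := by rw [hPunit, mul_one]
        _ = 1 := by
            rw [hD, Matrix.star_eq_conjTranspose, Matrix.diagonal_conjTranspose,
              Matrix.diagonal_mul_diagonal]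
            have hfun : (fun i : Fin (n+1) => (star ε) i * ε i) = fun _ => (1 : ℂ) := by
              funext i
              rw [Pi.star_apply, show star (ε i) = (starRingEnd ℂ) (ε i) from rfl, hεreal i]
              exact hεunit i
            rw [hfun, Matrix.diagonal_one]
    have hgmem : g ∈ Matrix.specialUnitaryGroup (Fin (n+1)) ℂ :=
      Matrix.mem_specialUnitaryGroup_iff.mpr ⟨hgunitary, hdetg⟩
    have hdetu : IsUnit g.det := hdetg ▸ isUnit_one
    have hginv : g * g⁻¹ = 1 := Matrix.mul_nonsing_inv g hdetu
    have hinvg : g⁻¹ * g = 1 := Matrix.nonsing_inv_mul g hdetu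
    -- the conjugation identity
    have hPγ : P * γ = γ' ^ m * P := by
      rw [hγ, hγ'pow m, hP, PEquiv.toMatrix_toPEquiv_mul, PEquiv.mul_toMatrix_toPEquiv]
      ext i j
      simp only [Matrix.submatrix_apply, id_eq]
      by_cases h : σ i = j
      · rw [← h, Matrix.diagonal_apply_eq, Equiv.symm_apply_apply, Matrix.diagonal_apply_eq]
        exact hval i
      · have h2 : i ≠ σ.symm j := fun hc => h (by rw [hc]; simp)
        rw [Matrix.diagonal_apply_ne _ h, Matrix.diagonal_apply_ne _ h2]
    have hcomm : D * γ = γ * D := by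
      rw [hD, hγ, Matrix.diagonal_mul_diagonal, Matrix.diagonal_mul_diagonal]
      exact congrArg Matrix.diagonal (funext fun i => mul_comm _ _)
    have hgγ : g * γ = γ' ^ m * g := by
      rw [hg, Matrix.mul_assoc, hcomm, ← Matrix.mul_assoc, hPγ, Matrix.mul_assoc]
    have hconj : g * γ * g⁻¹ = γ' ^ m := by
      rw [hgγ, Matrix.mul_assoc, hginv, Matrix.mul_one]
    have hconjk : ∀ k : ℕ, g * γ ^ k * g⁻¹ = γ' ^ (m * k) := by
      intro k
      rw [← aux_conj_pow g g⁻¹ γ hginv hinvg, hconj, ← pow_mul]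
    -- an inverse of m modulo q
    have hmcop : IsCoprime (m : ℤ) (q : ℤ) := by
      have hlq : IsCoprime (ℓ : ℤ) (q : ℤ) := Int.isCoprime_iff_gcd_eq_one.mpr hcop
      obtain ⟨a, b, hab⟩ := hlq
      obtain ⟨t, ht⟩ : (q : ℤ) ∣ ℓ - (m : ℤ) := by
        rw [← Int.modEq_iff_dvd]
        exact hmℓ
      exact ⟨a, b + a * t, by linear_combination hab - a * ht⟩
    obtain ⟨a, b, hab⟩ := hmcop
    set w : ℕ := (a % (q : ℤ)).toNat with hwdef
    have hwa : (w : ℤ) ≡ a [ZMOD (q : ℤ)] := by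
      rw [hwdef, Int.toNat_of_nonneg (Int.emod_nonneg a hq0)]
      exact Int.mod_modEq a (q : ℤ)
    have hma1 : ((m : ℤ) * a) ≡ 1 [ZMOD (q : ℤ)] := by
      symm
      rw [Int.modEq_iff_dvd]
      exact ⟨-b, by linear_combination hab⟩
    have hma : ∀ k : ℕ, ((m * (w * k) : ℕ) : ℤ) ≡ (k : ℤ) [ZMOD (q : ℤ)] := by
      intro k
      push_cast
      calc (m : ℤ) * ((w : ℤ) * (k : ℤ)) ≡ (m : ℤ) * ((a : ℤ) * (k : ℤ)) [ZMOD (q : ℤ)] :=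
            (hwa.mul_right _).mul_left _
        _ = ((m : ℤ) * a) * k := by ring
        _ ≡ 1 * k [ZMOD (q : ℤ)] := hma1.mul_right _
        _ = (k : ℤ) := one_mul _
    refine ⟨g, hgmem, ?_⟩
    ext x
    simp only [Set.mem_image, Set.mem_setOf_eq]
    constructor
    · rintro ⟨y, ⟨k, rfl⟩, rfl⟩
      exact ⟨m * k, by simpa using hconjk k⟩
    · rintro ⟨k, rfl⟩
      refine ⟨γ ^ (w * k), ⟨w * k, rfl⟩, ?_⟩
      show g * γ ^ (w * k) * g⁻¹ = γ' ^ k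
      rw [hconjk]
      exact (hpow' _ _).2 (hma k)
end

section
/- Let n ≥ 1, let q be a positive integer, and let s, s' ∈ ℤⁿ with gcd(q, s₁, …, sₙ) = gcd(q, s'₁, …, s'ₙ) = 1. Let γ_{q,s} = diag(R(2πs₁/q), …, R(2πsₙ/q), 1) ∈ SO(2n+1) be the block-diagonal matrix built from the 2×2 rotation blocks R(2πs_j/q) followed by a final diagonal entry 1, and similarly γ_{q,s'}. Then the cyclic subgroups Γ_{q,s} = ⟨γ_{q,s}⟩ and Γ_{q,s'} = ⟨γ_{q,s'}⟩ are conjugate in SO(2n+1) if and only if there exist a permutation σ of {1, …, n}, signs ε₁, …, εₙ ∈ {±1}, and an integer ℓ coprime to q such that s_{σ(j)} ≡ ε_j ℓ s'_j (mod q) for all 1 ≤ j ≤ n. -/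
/-- The 2×2 rotation matrix `R(θ)` with rows `(cos θ, sin θ)` and `(-sin θ, cos θ)`. -/
noncomputable def rotBlock (θ : ℝ) : Matrix (Fin 2) (Fin 2) ℝ :=
  !![Real.cos θ, Real.sin θ; -Real.sin θ, Real.cos θ]

open Matrix Polynomial

lemma rotBlock_zero : rotBlock 0 = 1 := by
  ext i j
  fin_cases i <;> fin_cases j <;> simp [rotBlock, Matrix.one_apply]

lemma rotBlock_mul (a b : ℝ) : rotBlock a * rotBlock b = rotBlock (a + b) := by
  ext i j
  fin_cases i <;> fin_cases j <;>
    simp [rotBlock, Matrix.mul_apply, Fin.sum_univ_succ, Real.cos_add, Real.sin_add] <;> ring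

lemma rotBlock_pow (θ : ℝ) (k : ℕ) : rotBlock θ ^ k = rotBlock (k * θ) := by
  induction k with
  | zero => simpa using rotBlock_zero.symm
  | succ k ih =>
    rw [pow_succ, ih, rotBlock_mul]
    norm_num
    ring_nf

lemma rotBlock_add_int (x : ℝ) (c : ℤ) : rotBlock (x + c * (2 * Real.pi)) = rotBlock x := by
  unfold rotBlock
  rw [Real.cos_add_int_mul_two_pi, Real.sin_add_int_mul_two_pi]

lemma rotBlock_modeq {q : ℕ} (hq : 0 < q) {a b : ℤ} (h : a ≡ b [ZMOD (q : ℤ)]) :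
    rotBlock (2 * Real.pi * (a : ℝ) / (q : ℝ)) = rotBlock (2 * Real.pi * (b : ℝ) / (q : ℝ)) := by
  obtain ⟨c, hc⟩ := (Int.modEq_iff_dvd.mp h)
  have hq' : (q : ℝ) ≠ 0 := Nat.cast_ne_zero.mpr hq.ne'
  have hb : (b : ℝ) = a + c * q := by
    have : (b : ℝ) - a = q * c := by exact_mod_cast congrArg (Int.cast : ℤ → ℝ) hc
    linarith
  rw [← rotBlock_add_int (2 * Real.pi * (a : ℝ) / (q : ℝ)) c]
  congr 1
  field_simp [hb]
  linarith [hb]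

/-- the complex number `exp(2πi a/q)`. -/
noncomputable def cc (q : ℕ) (a : ℤ) : ℂ :=
  Complex.exp ((((2 * Real.pi * (a : ℝ) / (q : ℝ)) : ℝ) : ℂ) * Complex.I)

lemma cc_cos_sin (q : ℕ) (a : ℤ) :
    cc q a = ((Real.cos (2 * Real.pi * (a : ℝ) / (q : ℝ)) : ℝ) : ℂ)
      + ((Real.sin (2 * Real.pi * (a : ℝ) / (q : ℝ)) : ℝ) : ℂ) * Complex.I := by
  rw [cc, Complex.exp_mul_I, ← Complex.ofReal_cos, ← Complex.ofReal_sin]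

lemma cc_inj {q : ℕ} (hq : 0 < q) {a b : ℤ} (h : cc q a = cc q b) : a ≡ b [ZMOD (q : ℤ)] := by
  have hq' : (q : ℝ) ≠ 0 := Nat.cast_ne_zero.mpr hq.ne'
  rw [cc, cc, Complex.exp_eq_exp_iff_exists_int] at h
  obtain ⟨m, hm⟩ := h
  have hre : (2 * Real.pi * (a : ℝ) / (q : ℝ)) = 2 * Real.pi * (b : ℝ) / (q : ℝ) + m * (2 * Real.pi) := by
    have := congrArg Complex.im hm
    simpa [Complex.add_im, Complex.mul_im] using this
  have hπ : Real.pi ≠ 0 := Real.pi_ne_zero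
  have h2 : (a : ℝ) = b + m * q := by
    field_simp at hre
    have h2' : (2 * Real.pi) * (a : ℝ) = (2 * Real.pi) * ((b : ℝ) + m * q) := by
      linear_combination (2 * Real.pi) * hre
    exact mul_left_cancel₀ (by positivity) h2'
  have ha : a = b + m * q := by exact_mod_cast h2
  rw [Int.modEq_iff_dvd]
  exact ⟨-m, by rw [ha]; ring⟩

lemma cc_modeq {q : ℕ} (hq : 0 < q) {a b : ℤ} (h : a ≡ b [ZMOD (q : ℤ)]) : cc q a = cc q b := by
  have h1 := rotBlock_modeq hq h
  have h2 := congrFun (congrFun h1 0) 0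
  have h3 := congrFun (congrFun h1 0) 1
  simp [rotBlock] at h2 h3
  rw [cc_cos_sin, cc_cos_sin, h2, h3]


noncomputable def Gm (q n : ℕ) (t : Fin n → ℤ) :
    Matrix ((Fin 2 × Fin n) ⊕ Unit) ((Fin 2 × Fin n) ⊕ Unit) ℝ :=
  Matrix.fromBlocks
    (Matrix.blockDiagonal fun i => rotBlock (2 * Real.pi * (t i : ℝ) / (q : ℝ))) 0 0 1

lemma Gm_mul (q n : ℕ) (t u : Fin n → ℤ) : Gm q n t * Gm q n u = Gm q n (t + u) := by
  unfold Gm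
  rw [Matrix.fromBlocks_multiply]
  simp only [Matrix.mul_zero, Matrix.zero_mul, add_zero, zero_add, Matrix.one_mul, Matrix.mul_one]
  rw [← Matrix.blockDiagonal_mul]
  have harg : (fun k => rotBlock (2 * Real.pi * (t k : ℝ) / (q : ℝ)) *
      rotBlock (2 * Real.pi * (u k : ℝ) / (q : ℝ)))
      = fun k => rotBlock (2 * Real.pi * (((t + u) k : ℤ) : ℝ) / (q : ℝ)) := by
    funext k
    have harg2 : 2 * Real.pi * (t k : ℝ) / (q : ℝ) + 2 * Real.pi * (u k : ℝ) / (q : ℝ)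
        = 2 * Real.pi * (((t + u) k : ℤ) : ℝ) / (q : ℝ) := by
      simp only [Pi.add_apply]
      push_cast
      ring
    rw [rotBlock_mul, harg2]
  rw [harg]

lemma Gm_zero (q n : ℕ) : Gm q n 0 = 1 := by
  unfold Gm
  have : (fun i : Fin n => rotBlock (2 * Real.pi * (((0 : Fin n → ℤ) i : ℤ) : ℝ) / (q : ℝ)))
      = fun _ => (1 : Matrix (Fin 2) (Fin 2) ℝ) := by
    funext i
    simp [rotBlock_zero]
  rw [this, show (fun _ : Fin n => (1 : Matrix (Fin 2) (Fin 2) ℝ))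
      = (1 : Fin n → Matrix (Fin 2) (Fin 2) ℝ) from rfl,
    Matrix.blockDiagonal_one, Matrix.fromBlocks_one]

lemma Gm_pow (q n : ℕ) (t : Fin n → ℤ) (k : ℕ) :
    Gm q n t ^ k = Gm q n (fun j => (k : ℤ) * t j) := by
  induction k with
  | zero =>
    have : (fun j => ((0 : ℕ) : ℤ) * t j) = (0 : Fin n → ℤ) := by funext j; simp
    rw [pow_zero, this, Gm_zero]
  | succ k ih =>
    rw [pow_succ, ih, Gm_mul]
    have : ((fun j => (k : ℤ) * t j) + t) = fun j => ((k + 1 : ℕ) : ℤ) * t j := by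
      funext j
      simp only [Pi.add_apply]
      push_cast
      ring
    rw [this]

lemma Gm_modeq {q n : ℕ} (hq : 0 < q) {t u : Fin n → ℤ}
    (h : ∀ j, t j ≡ u j [ZMOD (q : ℤ)]) : Gm q n t = Gm q n u := by
  unfold Gm
  have hfun : (fun i => rotBlock (2 * Real.pi * (t i : ℝ) / (q : ℝ)))
      = fun i => rotBlock (2 * Real.pi * (u i : ℝ) / (q : ℝ)) := by
    funext i
    exact rotBlock_modeq hq (h i)
  rw [hfun]

lemma Gm_inj {q n : ℕ} (hq : 0 < q) {t u : Fin n → ℤ}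
    (h : Gm q n t = Gm q n u) (j : Fin n) : t j ≡ u j [ZMOD (q : ℤ)] := by
  apply cc_inj hq
  have h2 := congrFun (congrFun h (Sum.inl (0, j))) (Sum.inl (0, j))
  have h3 := congrFun (congrFun h (Sum.inl (0, j))) (Sum.inl (1, j))
  simp [Gm, Matrix.blockDiagonal_apply, rotBlock] at h2 h3
  rw [cc_cos_sin, cc_cos_sin, h2, h3]

lemma Gm_pow_q {q n : ℕ} (hq : 0 < q) (t : Fin n → ℤ) : Gm q n t ^ q = 1 := by
  rw [Gm_pow]
  have : Gm q n (fun j => (q : ℤ) * t j) = Gm q n 0 := by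
    apply Gm_modeq hq
    intro j
    simp [Int.ModEq]
  rw [this, Gm_zero]

noncomputable def evm (q n : ℕ) (t : Fin n → ℤ) : Multiset ℂ :=
  (1 : ℂ) ::ₘ (Finset.univ.val.bind fun j => {cc q (t j), cc q (-(t j))})

lemma charpoly_fin2 (a b c d : ℂ) :
    (!![a, b; c, d]).charpoly = X ^ 2 - C (a + d) * X + C (a * d - b * c) := by
  rw [Matrix.charpoly, Matrix.det_fin_two]
  simp only [Matrix.charmatrix_apply_eq, Matrix.charmatrix_apply_ne _ _ _ (by decide : (0 : Fin 2) ≠ 1),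
    Matrix.charmatrix_apply_ne _ _ _ (by decide : (1 : Fin 2) ≠ 0), Matrix.cons_val', Matrix.cons_val_zero,
    Matrix.cons_val_one, Matrix.head_cons, Matrix.empty_val', Matrix.cons_val_fin_one, Matrix.head_fin_const]
  rw [show (!![a, b; c, d] : Matrix (Fin 2) (Fin 2) ℂ) 0 0 = a from rfl,
    show (!![a, b; c, d] : Matrix (Fin 2) (Fin 2) ℂ) 0 1 = b from rfl,
    show (!![a, b; c, d] : Matrix (Fin 2) (Fin 2) ℂ) 1 0 = c from rfl,
    show (!![a, b; c, d] : Matrix (Fin 2) (Fin 2) ℂ) 1 1 = d from rfl]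
  simp only [_root_.map_add, _root_.map_sub, _root_.map_mul, _root_.map_neg]
  ring

lemma charpoly_rot_map (θ : ℝ) :
    ((rotBlock θ).map (algebraMap ℝ ℂ)).charpoly
      = (X - C (Complex.exp ((θ : ℂ) * Complex.I))) *
        (X - C (Complex.exp (-(θ : ℂ) * Complex.I))) := by
  have hmat : (rotBlock θ).map (algebraMap ℝ ℂ)
      = !![(Real.cos θ : ℂ), (Real.sin θ : ℂ); -(Real.sin θ : ℂ), (Real.cos θ : ℂ)] := by
    ext i j
    fin_cases i <;> fin_cases j <;> simp [rotBlock]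
  have h1 : Complex.exp ((θ : ℂ) * Complex.I) = (Real.cos θ : ℂ) + (Real.sin θ : ℂ) * Complex.I := by
    rw [Complex.exp_mul_I, ← Complex.ofReal_cos, ← Complex.ofReal_sin]
  have h2 : Complex.exp (-(θ : ℂ) * Complex.I) = (Real.cos θ : ℂ) - (Real.sin θ : ℂ) * Complex.I := by
    rw [Complex.exp_mul_I, Complex.cos_neg, Complex.sin_neg, ← Complex.ofReal_cos,
      ← Complex.ofReal_sin]
    ring
  rw [hmat, charpoly_fin2, h1, h2]
  have kI : (C Complex.I) * (C Complex.I) = (-1 : ℂ[X]) := by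
    rw [← _root_.map_mul, Complex.I_mul_I, _root_.map_neg, _root_.map_one]
  simp only [_root_.map_add, _root_.map_sub, _root_.map_mul, _root_.map_neg]
  first
  | linear_combination (2 : ℂ[X]) * (C ((Real.sin θ : ℂ))) * (C ((Real.sin θ : ℂ))) * kI
  | linear_combination (C ((Real.sin θ : ℂ))) * (C ((Real.sin θ : ℂ))) * kI
  | linear_combination (-(C ((Real.sin θ : ℂ))) * (C ((Real.sin θ : ℂ)))) * kI
  | linear_combination (-2 : ℂ[X]) * (C ((Real.sin θ : ℂ))) * (C ((Real.sin θ : ℂ))) * kI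

lemma charmatrix_blockDiagonal {o m : Type*} [DecidableEq o] [Fintype o] [DecidableEq m]
    [Fintype m] {R : Type*} [CommRing R] (M : o → Matrix m m R) :
    Matrix.charmatrix (Matrix.blockDiagonal M)
      = Matrix.blockDiagonal fun i => Matrix.charmatrix (M i) := by
  ext ⟨i, k⟩ ⟨j, k'⟩
  by_cases hk : k = k'
  · subst hk
    by_cases hij : i = j
    · subst hij
      simp [Matrix.blockDiagonal_apply]
    · have hne : ((i, k) : m × o) ≠ (j, k) := by simp [hij]
      rw [Matrix.charmatrix_apply_ne _ _ _ hne]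
      simp [Matrix.blockDiagonal_apply, Matrix.charmatrix_apply_ne _ _ _ hij]
  · have hne : ((i, k) : m × o) ≠ (j, k') := by simp [hk]
    rw [Matrix.charmatrix_apply_ne _ _ _ hne]
    simp [Matrix.blockDiagonal_apply, hk]

lemma charpoly_blockDiagonal {o m : Type*} [DecidableEq o] [Fintype o] [DecidableEq m]
    [Fintype m] {R : Type*} [CommRing R] (M : o → Matrix m m R) :
    (Matrix.blockDiagonal M).charpoly = ∏ i, (M i).charpoly := by
  rw [Matrix.charpoly, charmatrix_blockDiagonal, Matrix.det_blockDiagonal]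
  rfl

lemma charpoly_unit_one : (1 : Matrix Unit Unit ℂ).charpoly = X - C 1 := by
  rw [Matrix.charpoly, Matrix.det_unique]
  simp

lemma cc_neg_eq (q : ℕ) (a : ℤ) :
    cc q (-a) = Complex.exp (-(((2 * Real.pi * (a : ℝ) / (q : ℝ)) : ℝ) : ℂ) * Complex.I) := by
  rw [cc]
  congr 1
  push_cast
  ring

lemma charpoly_Gm (q n : ℕ) (t : Fin n → ℤ) :
    (Gm q n t).charpoly.map (algebraMap ℝ ℂ)
      = ((evm q n t).map fun a => X - C a).prod := by
  rw [← Matrix.charpoly_map]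
  have hmap : (Gm q n t).map (algebraMap ℝ ℂ)
      = Matrix.fromBlocks
          (Matrix.blockDiagonal fun i =>
            (rotBlock (2 * Real.pi * (t i : ℝ) / (q : ℝ))).map (algebraMap ℝ ℂ)) 0 0 1 := by
    unfold Gm
    rw [Matrix.fromBlocks_map, Matrix.blockDiagonal_map _ _ (map_zero _),
      Matrix.map_zero _ (map_zero _), Matrix.map_zero _ (map_zero _),
      Matrix.map_one _ (map_zero _) (map_one _)]
  rw [hmap, Matrix.charpoly_fromBlocks_zero₂₁, charpoly_blockDiagonal, charpoly_unit_one]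
  have hprod : ∀ j : Fin n,
      ((rotBlock (2 * Real.pi * (t j : ℝ) / (q : ℝ))).map (algebraMap ℝ ℂ)).charpoly
        = (X - C (cc q (t j))) * (X - C (cc q (-(t j)))) := by
    intro j
    rw [charpoly_rot_map, cc, cc_neg_eq]
  rw [evm, Multiset.map_cons, Multiset.prod_cons, Multiset.map_bind, Multiset.prod_bind]
  have : (Multiset.map (fun j => (Multiset.map (fun a => X - C a) {cc q (t j), cc q (-(t j))}).prod)
      Finset.univ.val).prod = ∏ j : Fin n, ((X - C (cc q (t j))) * (X - C (cc q (-(t j))))) := by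
    rw [Finset.prod_eq_multiset_prod]
    congr 1
    apply Multiset.map_congr rfl
    intro j _
    simp
  rw [this]
  rw [Finset.prod_congr rfl fun j _ => (hprod j).symm]
  ring

lemma charpoly_conj_t {N : Type*} [Fintype N] [DecidableEq N] (g M : Matrix N N ℝ)
    (h1 : g * gᵀ = 1) : (g * M * gᵀ).charpoly = M.charpoly := by
  have key : Matrix.charmatrix (g * M * gᵀ)
      = g.map (⇑(Polynomial.C : ℝ →+* ℝ[X])) * Matrix.charmatrix M
          * (gᵀ).map (⇑(Polynomial.C : ℝ →+* ℝ[X])) := by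
    unfold Matrix.charmatrix
    rw [RingHom.mapMatrix_apply, RingHom.mapMatrix_apply]
    rw [mul_sub, sub_mul]
    congr 1
    · have hc : g.map (⇑(Polynomial.C : ℝ →+* ℝ[X])) * Matrix.scalar N (X : ℝ[X])
          = Matrix.scalar N (X : ℝ[X]) * g.map (⇑(Polynomial.C : ℝ →+* ℝ[X])) :=
        ((Matrix.scalar_commute (X : ℝ[X]) (fun r' => Commute.all _ _)
          (g.map (⇑(Polynomial.C : ℝ →+* ℝ[X])))).symm).eq
      rw [hc, mul_assoc, ← Matrix.map_mul, h1, Matrix.map_one _ (map_zero _) (map_one _), mul_one]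
    · rw [← Matrix.map_mul, ← Matrix.map_mul]
  rw [Matrix.charpoly, key, Matrix.det_mul, Matrix.det_mul]
  have hd : (g.map (⇑(Polynomial.C : ℝ →+* ℝ[X]))).det
      * ((gᵀ).map (⇑(Polynomial.C : ℝ →+* ℝ[X]))).det = 1 := by
    rw [← Matrix.det_mul, ← Matrix.map_mul, h1, Matrix.map_one _ (map_zero _) (map_one _),
      Matrix.det_one]
  rw [mul_comm (Matrix.det (g.map (⇑(Polynomial.C : ℝ →+* ℝ[X]))))
      (Matrix.det (Matrix.charmatrix M)), mul_assoc, hd, mul_one, Matrix.charpoly]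

lemma multiset_add_self_cancel {α : Type*} [DecidableEq α] {m m' : Multiset α}
    (h : m + m = m' + m') : m = m' := by
  ext a
  have := congrArg (Multiset.count a) h
  simp only [Multiset.count_add] at this
  omega

lemma exists_perm_comp {α β : Type*} [Fintype α] [DecidableEq α] [DecidableEq β] {f g : α → β}
    (h : Multiset.map f Finset.univ.val = Multiset.map g Finset.univ.val) :
    ∃ σ : Equiv.Perm α, ∀ a, f (σ a) = g a := by
  have key : ∀ h0 : α → β, ∀ b, Fintype.card {a // h0 a = b}
      = Multiset.count b (Multiset.map h0 Finset.univ.val) := by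
    intro h0 b
    rw [Multiset.count_map, Fintype.card_subtype, Finset.card, Finset.filter_val]
    congr 1
    exact Multiset.filter_congr (fun x _ => eq_comm)
  have hcard : ∀ b, Fintype.card {a // g a = b} = Fintype.card {a // f a = b} := by
    intro b
    rw [key f, key g, h]
  exact ⟨Equiv.ofFiberEquiv (fun b => Fintype.equivOfCardEq (hcard b)),
    fun a => Equiv.ofFiberEquiv_map _ a⟩

lemma pow_mod_eq {M : Type*} [Monoid M] (x : M) {q : ℕ} (h : x ^ q = 1) (a : ℕ) :
    x ^ a = x ^ (a % q) := by
  conv_lhs => rw [← Nat.div_add_mod a q]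
  rw [pow_add, pow_mul, h, one_pow, one_mul]

lemma q_dvd_of_forall {n q : ℕ} {s : Fin n → ℤ}
    (hs : Int.gcd (q : ℤ) (Finset.univ.gcd s) = 1)
    {t : ℤ} (h : ∀ j, (q : ℤ) ∣ t * s j) : (q : ℤ) ∣ t := by
  have h1 : (q : ℤ) ∣ Finset.univ.gcd (fun j => t * s j) := Finset.dvd_gcd fun j _ => h j
  rw [Finset.gcd_mul_left] at h1
  have hco : IsCoprime (q : ℤ) (Finset.univ.gcd s) := Int.isCoprime_iff_gcd_eq_one.mpr hs
  have h2 : (q : ℤ) ∣ normalize t := hco.dvd_of_dvd_mul_right h1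
  exact h2.trans (normalize_associated t).dvd

lemma conj_pow_mat {N : Type*} [Fintype N] [DecidableEq N] {g M : Matrix N N ℝ}
    (h1 : g * g⁻¹ = 1) (h2 : g⁻¹ * g = 1) (k : ℕ) :
    (g * M * g⁻¹) ^ k = g * M ^ k * g⁻¹ := by
  induction k with
  | zero => rw [pow_zero, pow_zero, mul_one, h1]
  | succ k ih =>
    rw [pow_succ, pow_succ, ih,
      show g * M ^ k * g⁻¹ * (g * M * g⁻¹) = g * M ^ k * (g⁻¹ * g) * (M * g⁻¹) from by
        simp only [mul_assoc], h2, mul_one]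
    simp only [mul_assoc]

lemma rotBlock_neg (x : ℝ) :
    rotBlock (-x) = !![Real.cos x, -Real.sin x; Real.sin x, Real.cos x] := by
  unfold rotBlock
  rw [Real.cos_neg, Real.sin_neg, neg_neg]


noncomputable def embedZ (q : ℕ) : ZMod q → ℂ := fun z => cc q (z.val : ℤ)

lemma embedZ_cast {q : ℕ} [NeZero q] (hq : 0 < q) (a : ℤ) :
    embedZ q ((a : ZMod q)) = cc q a := by
  apply cc_modeq hq
  have hval := ZMod.val_intCast (n := q) a
  show (((a : ZMod q)).val : ℤ) % (q : ℤ) = a % (q : ℤ)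
  rw [hval]
  exact Int.emod_emod_of_dvd a dvd_rfl

lemma embedZ_inj {q : ℕ} [NeZero q] (hq : 0 < q) : Function.Injective (embedZ q) := by
  intro z w hzw
  have h1 := cc_inj hq hzw
  have hzval : ((z.val : ℤ)) % (q : ℤ) = (z.val : ℤ) :=
    Int.emod_eq_of_lt (by positivity) (by exact_mod_cast ZMod.val_lt z)
  have hwval : ((w.val : ℤ)) % (q : ℤ) = (w.val : ℤ) :=
    Int.emod_eq_of_lt (by positivity) (by exact_mod_cast ZMod.val_lt w)
  have h2 : (z.val : ℤ) = (w.val : ℤ) := by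
    have h3 : (z.val : ℤ) % (q : ℤ) = (w.val : ℤ) % (q : ℤ) := h1
    rwa [hzval, hwval] at h3
  exact ZMod.val_injective q (by exact_mod_cast h2)

lemma map_pair {α β : Type*} (f : α → β) (x y : α) :
    Multiset.map f ({x, y} : Multiset α) = {f x, f y} := by
  simp [Multiset.insert_eq_cons]

lemma pp_neg {q : ℕ} (x : ZMod q) : s(-x, - -x) = s(x, -x) := by
  rw [neg_neg]
  exact Sym2.eq_swap

lemma expand_lemma {q n : ℕ} (v : Fin n → ZMod q) :
    Multiset.map (fun x : ZMod q => s(x, -x))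
        (Finset.univ.val.bind fun j => ({v j, -(v j)} : Multiset (ZMod q)))
      = Multiset.map (fun j => s(v j, -(v j))) Finset.univ.val
        + Multiset.map (fun j => s(v j, -(v j))) Finset.univ.val := by
  rw [Multiset.map_bind]
  have hinner : ∀ j ∈ Finset.univ.val, Multiset.map (fun x : ZMod q => s(x, -x))
      ({v j, -(v j)} : Multiset (ZMod q))
      = s(v j, -(v j)) ::ₘ {s(v j, -(v j))} := by
    intro j _
    rw [map_pair, pp_neg, Multiset.insert_eq_cons]
  rw [Multiset.bind_congr hinner, Multiset.bind_cons, Multiset.bind_singleton]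

lemma bind_pair_embed {q n : ℕ} [NeZero q] (hq : 0 < q) (v : Fin n → ℤ) :
    Multiset.map (embedZ q) (Finset.univ.val.bind fun j =>
        ({((v j : ZMod q)), -((v j : ZMod q))} : Multiset (ZMod q)))
      = Finset.univ.val.bind fun j => ({cc q (v j), cc q (-(v j))} : Multiset ℂ) := by
  rw [Multiset.map_bind]
  apply Multiset.bind_congr
  intro j _
  rw [map_pair]
  congr 1
  · exact embedZ_cast hq (v j)
  · congr 1
    rw [show -((v j : ZMod q)) = (((-(v j) : ℤ)) : ZMod q) from by push_cast; ring,
      embedZ_cast hq]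

/-- **Conjugacy of cyclic subgroups of SO(2n+1).**
For `q ≥ 1` and `s, s' ∈ ℤⁿ` with `gcd(q, s) = gcd(q, s') = 1`, the cyclic subgroups of
`SO(2n+1)` generated by `γ_{q,s} = diag(R(2πs₁/q), …, R(2πsₙ/q), 1)` and `γ_{q,s'}`
are conjugate in `SO(2n+1)` iff `s_{σ(j)} ≡ ε_j ℓ s'_j (mod q)` for all `j`, for some
permutation `σ`, signs `ε_j ∈ {±1}`, and an integer `ℓ` coprime to `q`. -/
theorem conjugate_cyclic_subgroups_SO_odd_iff
    (n : ℕ) (hn : 1 ≤ n) (q : ℕ) (hq : 0 < q) (s s' : Fin n → ℤ)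
    (hs : Int.gcd (q : ℤ) (Finset.univ.gcd s) = 1)
    (hs' : Int.gcd (q : ℤ) (Finset.univ.gcd s') = 1)
    (γ γ' : Matrix ((Fin 2 × Fin n) ⊕ Unit) ((Fin 2 × Fin n) ⊕ Unit) ℝ)
    (hγ : γ = Matrix.fromBlocks
      (Matrix.blockDiagonal fun i => rotBlock (2 * Real.pi * (s i : ℝ) / (q : ℝ))) 0 0 1)
    (hγ' : γ' = Matrix.fromBlocks
      (Matrix.blockDiagonal fun i => rotBlock (2 * Real.pi * (s' i : ℝ) / (q : ℝ))) 0 0 1) :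
    (∃ g : Matrix ((Fin 2 × Fin n) ⊕ Unit) ((Fin 2 × Fin n) ⊕ Unit) ℝ,
        g ∈ Matrix.specialOrthogonalGroup ((Fin 2 × Fin n) ⊕ Unit) ℝ ∧
          (fun x => g * x * g⁻¹) '' {x | ∃ k : ℕ, x = γ ^ k} = {x | ∃ k : ℕ, x = γ' ^ k}) ↔
      ∃ (σ : Equiv.Perm (Fin n)) (ε : Fin n → ℤ) (ℓ : ℤ),
        (∀ j, ε j = 1 ∨ ε j = -1) ∧ Int.gcd ℓ (q : ℤ) = 1 ∧
          ∀ j, s (σ j) ≡ ε j * ℓ * s' j [ZMOD (q : ℤ)] := by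
  haveI : NeZero q := ⟨hq.ne'⟩
  have hγG : γ = Gm q n s := hγ
  have hγ'G : γ' = Gm q n s' := hγ'
  subst hγG hγ'G
  clear hγ hγ'
  constructor
  · -- forward
    rintro ⟨g, hgSO, himg⟩
    obtain ⟨hgU, hgdet⟩ := Submonoid.mem_inf.mp hgSO
    have hstar : star g = gᵀ := by
      ext i j
      simp [Matrix.star_apply]
    have hg1 : g * gᵀ = 1 := by
      rw [← hstar]
      exact (Matrix.mem_unitaryGroup_iff.mp hgU)
    have hg2 : gᵀ * g = 1 := by
      rw [← hstar]
      exact (Matrix.mem_unitaryGroup_iff'.mp hgU)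
    have hginv : g⁻¹ = gᵀ := Matrix.inv_eq_right_inv hg1
    have hgg : g * g⁻¹ = 1 := by rw [hginv]; exact hg1
    have hgg2 : g⁻¹ * g = 1 := by rw [hginv]; exact hg2
    have hmem1 : g * Gm q n s * g⁻¹ ∈ {x : Matrix ((Fin 2 × Fin n) ⊕ Unit)
        ((Fin 2 × Fin n) ⊕ Unit) ℝ | ∃ k : ℕ, x = Gm q n s' ^ k} := by
      rw [← himg]
      exact ⟨Gm q n s, ⟨1, (pow_one _).symm⟩, rfl⟩
    obtain ⟨L, hL⟩ := hmem1
    have hmem2 : Gm q n s' ∈ (fun x => g * x * g⁻¹) ''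
        {x | ∃ k : ℕ, x = Gm q n s ^ k} := by
      rw [himg]
      exact ⟨1, (pow_one _).symm⟩
    obtain ⟨x, ⟨m, rfl⟩, hx⟩ := hmem2
    have hLm : Gm q n s' ^ (L * m) = Gm q n s' := by
      rw [pow_mul, ← hL, conj_pow_mat hgg hgg2]
      exact hx
    have hmodLm : ∀ j, ((L * m : ℕ) : ℤ) * s' j ≡ s' j [ZMOD (q : ℤ)] := by
      intro j
      have hGmeq : Gm q n (fun j => ((L * m : ℕ) : ℤ) * s' j) = Gm q n s' := by
        rw [← Gm_pow]
        exact hLm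
      exact Gm_inj hq hGmeq j
    have hdvd : (q : ℤ) ∣ ((L * m : ℕ) : ℤ) - 1 := by
      apply q_dvd_of_forall hs'
      intro j
      have hd := (hmodLm j).dvd
      rw [show s' j - ((L * m : ℕ) : ℤ) * s' j
          = -((((L * m : ℕ) : ℤ) - 1) * s' j) from by ring] at hd
      exact dvd_neg.mp hd
    have hcopL : Int.gcd ((L : ℕ) : ℤ) (q : ℤ) = 1 := by
      obtain ⟨c, hc⟩ := hdvd
      rw [← Int.isCoprime_iff_gcd_eq_one]
      refine ⟨(m : ℤ), -c, ?_⟩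
      push_cast at hc ⊢
      linear_combination hc
    have hcp : (Gm q n s).charpoly = (Gm q n (fun j => ((L : ℕ) : ℤ) * s' j)).charpoly := by
      rw [← Gm_pow, ← hL, hginv]
      exact (charpoly_conj_t g (Gm q n s) hg1).symm
    have hevm : evm q n s = evm q n (fun j => ((L : ℕ) : ℤ) * s' j) := by
      have h1 := charpoly_Gm q n s
      have h2 := charpoly_Gm q n (fun j => ((L : ℕ) : ℤ) * s' j)
      have h3 : ((evm q n s).map fun a => X - C a).prod
          = ((evm q n (fun j => ((L : ℕ) : ℤ) * s' j)).map fun a => X - C a).prod := by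
        rw [← h1, ← h2, hcp]
      have h4 := congrArg Polynomial.roots h3
      rwa [Polynomial.roots_multiset_prod_X_sub_C,
        Polynomial.roots_multiset_prod_X_sub_C] at h4
    have hbind : (Finset.univ.val.bind fun j => ({cc q (s j), cc q (-(s j))} : Multiset ℂ))
        = Finset.univ.val.bind fun j =>
            ({cc q (((L : ℕ) : ℤ) * s' j), cc q (-(((L : ℕ) : ℤ) * s' j))} : Multiset ℂ) := by
      have h5 := hevm
      rw [evm, evm] at h5
      exact (Multiset.cons_inj_right _).mp h5
    have hbind2 : (Finset.univ.val.bind fun j =>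
          ({((s j : ZMod q)), -((s j : ZMod q))} : Multiset (ZMod q)))
        = Finset.univ.val.bind fun j =>
            ({(((((L : ℕ) : ℤ) * s' j : ℤ) : ZMod q)), -(((((L : ℕ) : ℤ) * s' j : ℤ) : ZMod q))} :
              Multiset (ZMod q)) := by
      apply Multiset.map_injective (embedZ_inj hq)
      rw [bind_pair_embed hq s, bind_pair_embed hq (fun j => ((L : ℕ) : ℤ) * s' j)]
      exact hbind
    have hpp : Multiset.map (fun j : Fin n => s(((s j : ZMod q)), -((s j : ZMod q))))
          Finset.univ.val
        = Multiset.map (fun j : Fin n => s((((((L : ℕ) : ℤ) * s' j : ℤ) : ZMod q)),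
            -(((((L : ℕ) : ℤ) * s' j : ℤ) : ZMod q)))) Finset.univ.val := by
      apply multiset_add_self_cancel
      rw [← expand_lemma (fun j => ((s j : ZMod q))),
        ← expand_lemma (fun j => (((((L : ℕ) : ℤ) * s' j : ℤ)) : ZMod q)), hbind2]
    obtain ⟨σ, hσ⟩ := exists_perm_comp hpp
    refine ⟨σ, fun j => if ((s (σ j) : ZMod q) = (((((L : ℕ) : ℤ) * s' j : ℤ) : ZMod q)))
        then 1 else -1, ((L : ℕ) : ℤ), fun j => by dsimp only; split <;> simp, hcopL, ?_⟩
    intro j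
    have hppj := hσ j
    show s (σ j) ≡ (if ((s (σ j) : ZMod q) = (((((L : ℕ) : ℤ) * s' j : ℤ) : ZMod q)))
        then 1 else -1) * ((L : ℕ) : ℤ) * s' j [ZMOD (q : ℤ)]
    by_cases hcase : ((s (σ j) : ZMod q) = (((((L : ℕ) : ℤ) * s' j : ℤ) : ZMod q)))
    · rw [if_pos hcase, ← ZMod.intCast_eq_intCast_iff]
      push_cast
      rw [one_mul]
      push_cast at hcase
      exact hcase
    · have hneg : (s (σ j) : ZMod q) = -(((((L : ℕ) : ℤ) * s' j : ℤ) : ZMod q)) := by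
        rcases Sym2.eq_iff.mp hppj with ⟨h1, _⟩ | ⟨h1, _⟩
        · exact absurd h1 hcase
        · exact h1
      rw [if_neg hcase, ← ZMod.intCast_eq_intCast_iff]
      push_cast at hneg ⊢
      rw [hneg]
      ring
  · -- backward
    rintro ⟨σ, ε, ℓ, hε, hℓ, hcong⟩
    have hqz : (q : ℤ) ≠ 0 := by exact_mod_cast hq.ne'
    set L : ℕ := (ℓ % (q : ℤ)).toNat with hLdef
    have hLL : ((L : ℕ) : ℤ) = ℓ % (q : ℤ) := Int.toNat_of_nonneg (Int.emod_nonneg ℓ hqz)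
    have hLmod : ((L : ℕ) : ℤ) ≡ ℓ [ZMOD (q : ℤ)] := by
      rw [hLL]
      show (ℓ % (q : ℤ)) % (q : ℤ) = ℓ % (q : ℤ)
      exact Int.emod_emod_of_dvd ℓ dvd_rfl
    have hgcdL : Int.gcd ((L : ℕ) : ℤ) (q : ℤ) = 1 := by
      obtain ⟨c, hc⟩ := Int.ModEq.dvd hLmod
      obtain ⟨aℓ, b, hab⟩ := Int.isCoprime_iff_gcd_eq_one.mpr hℓ
      rw [← Int.isCoprime_iff_gcd_eq_one]
      exact ⟨aℓ, b + aℓ * c, by linear_combination hab - aℓ * hc⟩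
    have hcopLnat : Nat.Coprime L q := by
      have := hgcdL
      rwa [Int.gcd_natCast_natCast] at this
    have hkey : ∀ j, ((L : ℕ) : ℤ) * s' j ≡ ε j * s (σ j) [ZMOD (q : ℤ)] := by
      intro j
      have hε2 : ε j * ε j = 1 := by rcases hε j with h | h <;> rw [h] <;> norm_num
      have h1 := (hcong j).mul_left (ε j)
      have h3 : ε j * (ε j * ℓ * s' j) = ℓ * s' j := by
        rw [show ε j * (ε j * ℓ * s' j) = (ε j * ε j) * (ℓ * s' j) from by ring, hε2, one_mul]
      have h2 : ((L : ℕ) : ℤ) * s' j ≡ ℓ * s' j [ZMOD (q : ℤ)] := hLmod.mul_right _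
      rw [h3] at h1
      exact h2.trans h1.symm
    set ρ : ((Fin 2 × Fin n) ⊕ Unit) ≃ ((Fin 2 × Fin n) ⊕ Unit) :=
      Equiv.sumCongr (Equiv.prodCongr (Equiv.refl (Fin 2)) σ) (Equiv.refl Unit) with hρdef
    set d0 : ((Fin 2 × Fin n) ⊕ Unit) → ℝ :=
      Sum.elim (fun p : Fin 2 × Fin n => if ε p.2 = 1 ∨ p.1 = 0 then (1 : ℝ) else -1)
        (fun _ => 1) with hd0def
    have hd0sq : ∀ a, d0 a * d0 a = 1 := by
      intro a
      rcases a with p | u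
      · show (if ε p.2 = 1 ∨ p.1 = 0 then (1 : ℝ) else -1)
          * (if ε p.2 = 1 ∨ p.1 = 0 then (1 : ℝ) else -1) = 1
        split <;> norm_num
      · show (1 : ℝ) * 1 = 1
        norm_num
    set g0 : Matrix ((Fin 2 × Fin n) ⊕ Unit) ((Fin 2 × Fin n) ⊕ Unit) ℝ :=
      Matrix.of (fun a b => if b = ρ a then d0 a else 0) with hg0def
    have hg0M : ∀ (M : Matrix ((Fin 2 × Fin n) ⊕ Unit) ((Fin 2 × Fin n) ⊕ Unit) ℝ) a c,
        (g0 * M) a c = d0 a * M (ρ a) c := by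
      intro M a c
      rw [Matrix.mul_apply, Finset.sum_eq_single (ρ a)]
      · simp [hg0def]
      · intro x _ hx
        simp [hg0def, hx]
      · intro hmem
        exact absurd (Finset.mem_univ _) hmem
    have hMg0T : ∀ (M : Matrix ((Fin 2 × Fin n) ⊕ Unit) ((Fin 2 × Fin n) ⊕ Unit) ℝ) a c,
        (M * g0ᵀ) a c = M a (ρ c) * d0 c := by
      intro M a c
      rw [Matrix.mul_apply, Finset.sum_eq_single (ρ c)]
      · simp [hg0def]
      · intro x _ hx
        simp [hg0def, Matrix.transpose_apply, hx]
      · intro hmem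
        exact absurd (Finset.mem_univ _) hmem
    have hg0T1 : g0 * g0ᵀ = 1 := by
      ext a b
      rw [hMg0T g0 a b]
      by_cases hab : a = b
      · subst hab
        rw [Matrix.one_apply_eq]
        have : g0 a (ρ a) = d0 a := by simp [hg0def]
        rw [this]
        exact hd0sq a
      · rw [Matrix.one_apply_ne hab]
        have hne : ρ b ≠ ρ a := fun hc => hab (ρ.injective hc).symm
        have : g0 a (ρ b) = 0 := by simp [hg0def, hne]
        rw [this, zero_mul]
    have hdet0 : g0.det * g0.det = 1 := by
      have hdt := congrArg Matrix.det hg0T1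
      rwa [Matrix.det_mul, Matrix.det_transpose, Matrix.det_one] at hdt
    set κ : ℝ := g0.det with hκdef
    set dE : ((Fin 2 × Fin n) ⊕ Unit) → ℝ :=
      fun a => if a = Sum.inr () then κ else 1 with hdEdef
    set E : Matrix ((Fin 2 × Fin n) ⊕ Unit) ((Fin 2 × Fin n) ⊕ Unit) ℝ :=
      Matrix.diagonal dE with hEdef
    have hdEsq : ∀ a, dE a * dE a = 1 := by
      intro a
      show (if a = Sum.inr () then κ else 1) * (if a = Sum.inr () then κ else 1) = 1
      split
      · exact hdet0
      · norm_num
    have hE2 : E * E = 1 := by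
      rw [hEdef, Matrix.diagonal_mul_diagonal]
      rw [show (fun a => dE a * dE a) = fun _ => (1 : ℝ) from funext fun a => hdEsq a]
      exact Matrix.diagonal_one
    have hET : Eᵀ = E := by rw [hEdef]; exact Matrix.diagonal_transpose _
    set g : Matrix ((Fin 2 × Fin n) ⊕ Unit) ((Fin 2 × Fin n) ⊕ Unit) ℝ := E * g0 with hgdef
    have hgT : g * gᵀ = 1 := by
      rw [hgdef, Matrix.transpose_mul, hET]
      rw [show E * g0 * (g0ᵀ * E) = E * (g0 * g0ᵀ) * E from by simp only [mul_assoc]]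
      rw [hg0T1, mul_one, hE2]
    have hgTg : gᵀ * g = 1 := mul_eq_one_comm.mp hgT
    have hginv : g⁻¹ = gᵀ := Matrix.inv_eq_right_inv hgT
    have hgg : g * g⁻¹ = 1 := by rw [hginv]; exact hgT
    have hgg2 : g⁻¹ * g = 1 := by rw [hginv]; exact hgTg
    have hdetE : E.det = κ := by
      rw [hEdef, Matrix.det_diagonal]
      rw [hdEdef]
      rw [Finset.prod_ite_eq' Finset.univ (Sum.inr ()) (fun _ => κ)]
      simp
    have hgdet : g.det = 1 := by
      rw [hgdef, Matrix.det_mul, hdetE]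
      exact hdet0
    have hstar : star g = gᵀ := by
      ext i j
      simp [Matrix.star_apply]
    have hgSO : g ∈ Matrix.specialOrthogonalGroup ((Fin 2 × Fin n) ⊕ Unit) ℝ := by
      refine Submonoid.mem_inf.mpr ⟨?_, ?_⟩
      · exact Matrix.mem_unitaryGroup_iff.mpr (by rw [hstar]; exact hgT)
      · rw [MonoidHom.mem_mker]
        simpa using hgdet
    -- conjugation identity
    have hconj0 : g0 * Gm q n s * g0ᵀ = Gm q n (fun j => ((L : ℕ) : ℤ) * s' j) := by
      ext a b
      rw [hMg0T (g0 * Gm q n s) a b, hg0M (Gm q n s) a (ρ b)]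
      rcases a with ⟨e, j⟩ | u
      · rcases b with ⟨e', j'⟩ | u'
        · have hρ1 : ρ (Sum.inl (e, j)) = Sum.inl (e, σ j) := rfl
          have hρ2 : ρ (Sum.inl (e', j')) = Sum.inl (e', σ j') := rfl
          rw [hρ1, hρ2]
          by_cases hj : j = j'
          · subst hj
            have hGm1 : Gm q n s (Sum.inl (e, σ j)) (Sum.inl (e', σ j))
                = rotBlock (2 * Real.pi * (s (σ j) : ℝ) / (q : ℝ)) e e' :=
              Matrix.blockDiagonal_apply_eq
                (fun i => rotBlock (2 * Real.pi * (s i : ℝ) / (q : ℝ))) e e' (σ j)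
            have hGm2 : Gm q n (fun j => ((L : ℕ) : ℤ) * s' j) (Sum.inl (e, j)) (Sum.inl (e', j))
                = rotBlock (2 * Real.pi * ((((L : ℕ) : ℤ) * s' j : ℤ) : ℝ) / (q : ℝ)) e e' :=
              Matrix.blockDiagonal_apply_eq
                (fun i => rotBlock (2 * Real.pi * ((((L : ℕ) : ℤ) * s' i : ℤ) : ℝ) / (q : ℝ)))
                e e' j
            rw [hGm1, hGm2]
            rw [rotBlock_modeq hq (hkey j)]
            rcases hε j with hε1 | hε1
            · rw [hε1, one_mul]
              have hd1 : d0 (Sum.inl (e, j)) = 1 := by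
                show (if ε j = 1 ∨ e = 0 then (1 : ℝ) else -1) = 1
                rw [if_pos (Or.inl hε1)]
              have hd2 : d0 (Sum.inl (e', j)) = 1 := by
                show (if ε j = 1 ∨ e' = 0 then (1 : ℝ) else -1) = 1
                rw [if_pos (Or.inl hε1)]
              rw [hd1, hd2, one_mul, mul_one]
            · rw [hε1]
              have harg : 2 * Real.pi * (((-1 : ℤ) * s (σ j) : ℤ) : ℝ) / (q : ℝ)
                  = -(2 * Real.pi * ((s (σ j) : ℤ) : ℝ) / (q : ℝ)) := by
                push_cast
                ring
              rw [harg, rotBlock_neg]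
              have hd : ∀ e0 : Fin 2, d0 (Sum.inl (e0, j)) = if e0 = 0 then 1 else -1 := by
                intro e0
                show (if ε j = 1 ∨ e0 = 0 then (1 : ℝ) else -1) = if e0 = 0 then 1 else -1
                have : ¬ (ε j = 1) := by rw [hε1]; norm_num
                by_cases h0 : e0 = 0
                · rw [if_pos (Or.inr h0), if_pos h0]
                · rw [if_neg (by tauto), if_neg h0]
              rw [hd e, hd e']
              fin_cases e <;> fin_cases e' <;>
                simp [rotBlock] <;> ring
          · have hσj : σ j ≠ σ j' := fun hc => hj (σ.injective hc)
            have hGm1 : Gm q n s (Sum.inl (e, σ j)) (Sum.inl (e', σ j')) = 0 :=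
              Matrix.blockDiagonal_apply_ne
                (fun i => rotBlock (2 * Real.pi * (s i : ℝ) / (q : ℝ))) e e' hσj
            have hGm2 : Gm q n (fun j => ((L : ℕ) : ℤ) * s' j)
                (Sum.inl (e, j)) (Sum.inl (e', j')) = 0 :=
              Matrix.blockDiagonal_apply_ne
                (fun i => rotBlock (2 * Real.pi * ((((L : ℕ) : ℤ) * s' i : ℤ) : ℝ) / (q : ℝ)))
                e e' hj
            rw [hGm1, hGm2, mul_zero, zero_mul]
        · have hρ1 : ρ (Sum.inl (e, j)) = Sum.inl (e, σ j) := rfl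
          have hρ2 : ρ (Sum.inr u') = Sum.inr u' := rfl
          rw [hρ1, hρ2]
          have hGm1 : Gm q n s (Sum.inl (e, σ j)) (Sum.inr u') = 0 := rfl
          have hGm2 : Gm q n (fun j => ((L : ℕ) : ℤ) * s' j) (Sum.inl (e, j)) (Sum.inr u')
              = 0 := rfl
          rw [hGm1, hGm2, mul_zero, zero_mul]
      · rcases b with ⟨e', j'⟩ | u'
        · have hρ1 : ρ (Sum.inr u) = Sum.inr u := rfl
          have hρ2 : ρ (Sum.inl (e', j')) = Sum.inl (e', σ j') := rfl
          rw [hρ1, hρ2]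
          have hGm1 : Gm q n s (Sum.inr u) (Sum.inl (e', σ j')) = 0 := rfl
          have hGm2 : Gm q n (fun j => ((L : ℕ) : ℤ) * s' j) (Sum.inr u) (Sum.inl (e', j'))
              = 0 := rfl
          rw [hGm1, hGm2, mul_zero, zero_mul]
        · have hρ1 : ρ (Sum.inr u) = Sum.inr u := rfl
          rw [hρ1]
          have hGm1 : Gm q n s (Sum.inr u) (Sum.inr u') = 1 := rfl
          have hGm2 : Gm q n (fun j => ((L : ℕ) : ℤ) * s' j) (Sum.inr u) (Sum.inr u') = 1 := rfl
          have hd1 : d0 (Sum.inr u) = 1 := rfl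
          rw [hGm1, hGm2, hd1]
          norm_num
    have hEcomm : E * Gm q n (fun j => ((L : ℕ) : ℤ) * s' j) * E
        = Gm q n (fun j => ((L : ℕ) : ℤ) * s' j) := by
      ext a b
      rw [hEdef, Matrix.mul_diagonal, Matrix.diagonal_mul]
      rcases a with p | u
      · rcases b with p' | u'
        · have h1 : dE (Sum.inl p) = 1 := by
            show (if (Sum.inl p : (Fin 2 × Fin n) ⊕ Unit) = Sum.inr () then κ else 1) = 1
            rw [if_neg (by simp)]
          have h2 : dE (Sum.inl p') = 1 := by
            show (if (Sum.inl p' : (Fin 2 × Fin n) ⊕ Unit) = Sum.inr () then κ else 1) = 1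
            rw [if_neg (by simp)]
          rw [h1, h2, one_mul, mul_one]
        · have hGm1 : Gm q n (fun j => ((L : ℕ) : ℤ) * s' j) (Sum.inl p) (Sum.inr u') = 0 := rfl
          rw [hGm1, mul_zero, zero_mul]
      · rcases b with p' | u'
        · have hGm1 : Gm q n (fun j => ((L : ℕ) : ℤ) * s' j) (Sum.inr u) (Sum.inl p') = 0 := rfl
          rw [hGm1, mul_zero, zero_mul]
        · cases u
          cases u'
          have hGm1 : Gm q n (fun j => ((L : ℕ) : ℤ) * s' j) (Sum.inr ()) (Sum.inr ()) = 1 := rfl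
          have h1 : dE (Sum.inr ()) = κ := if_pos rfl
          rw [hGm1, h1, mul_one]
          exact hdet0
    have hconj : g * Gm q n s * g⁻¹ = Gm q n s' ^ L := by
      rw [hginv, hgdef, Matrix.transpose_mul, hET]
      rw [show E * g0 * Gm q n s * (g0ᵀ * E) = E * (g0 * Gm q n s * g0ᵀ) * E from by
        simp only [mul_assoc]]
      rw [hconj0, hEcomm, Gm_pow]
    refine ⟨g, hgSO, ?_⟩
    have hq1 : Gm q n s' ^ q = 1 := Gm_pow_q hq s'
    ext x
    simp only [Set.mem_image, Set.mem_setOf_eq]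
    constructor
    · rintro ⟨y, ⟨k, rfl⟩, rfl⟩
      exact ⟨L * k, by rw [← conj_pow_mat hgg hgg2 k, hconj, ← pow_mul]⟩
    · rintro ⟨m, rfl⟩
      have hk1 := ZMod.natCast_rightInverse (n := q)
        ((((ZMod.unitOfCoprime L hcopLnat)⁻¹ : (ZMod q)ˣ) : ZMod q) * (m : ZMod q))
      set k : ℕ := (((((ZMod.unitOfCoprime L hcopLnat)⁻¹ : (ZMod q)ˣ) : ZMod q))
        * (m : ZMod q)).val with hkdef
      have hLu : ((L : ℕ) : ZMod q) = ((ZMod.unitOfCoprime L hcopLnat : (ZMod q)ˣ) : ZMod q) :=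
        (ZMod.coe_unitOfCoprime L hcopLnat).symm
      have hcast : ((L * k : ℕ) : ZMod q) = (m : ZMod q) := by
        push_cast
        rw [show ((k : ℕ) : ZMod q) = ((((ZMod.unitOfCoprime L hcopLnat)⁻¹ : (ZMod q)ˣ) : ZMod q)
          * (m : ZMod q)) from hk1]
        rw [hLu, ← mul_assoc, Units.mul_inv, one_mul]
      have hmodk : (L * k) % q = m % q := (ZMod.natCast_eq_natCast_iff _ _ _).mp hcast
      refine ⟨Gm q n s ^ k, ⟨k, rfl⟩, ?_⟩
      rw [← conj_pow_mat hgg hgg2 k, hconj, ← pow_mul, pow_mod_eq _ hq1 (L * k),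
        pow_mod_eq _ hq1 m, hmodk]
end

section
/- Let n ≥ 1 and k ≥ 0 be integers, and let μ = (a₁, …, a_{n+1}) ∈ ℤ^{n+1} with a₁ ≥ a₂ ≥ ⋯ ≥ a_{n+1} and a₁ + ⋯ + a_{n+1} = 0. Set ‖μ‖₁ = |a₁| + ⋯ + |a_{n+1}| (an even integer). Let λ be the Young diagram with one row of length 2k followed by n−1 rows of length k. Then the number of semistandard Young tableaux of shape λ with entries in {1, …, n+1} in which the value i occurs exactly aᵢ + k times (for each 1 ≤ i ≤ n+1) equals the binomial coefficient C(k − ‖μ‖₁/2 + n − 1, n − 1) if ‖μ‖₁ ≤ 2k, and equals 0 if ‖μ‖₁ > 2k. -/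
/-- The Young diagram with one row of length `2k` followed by `n - 1` rows of length `k`. -/
def hookShape (n k : ℕ) : YoungDiagram :=
  YoungDiagram.ofRowLens (2 * k :: List.replicate (n - 1) k) (by
    have hrep : ∀ m : ℕ, List.Pairwise (· ≥ ·) (List.replicate m k) := by
      intro m
      induction m with
      | zero => simp
      | succ m ih =>
        rw [List.replicate_succ]
        exact List.pairwise_cons.mpr ⟨fun b hb => (List.eq_of_mem_replicate hb).le, ih⟩
    exact (List.pairwise_cons.mpr
      ⟨fun b hb => by rw [List.eq_of_mem_replicate hb]; omega, hrep (n - 1)⟩).sortedGE)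

namespace KostkaHook

open Finset

lemma mem_hookShape {n k : ℕ} (hn : 1 ≤ n) {i j : ℕ} :
    (i, j) ∈ hookShape n k ↔ i < n ∧ j < (if i = 0 then 2 * k else k) := by
  rw [hookShape, YoungDiagram.mem_ofRowLens]
  have hlen : (2 * k :: List.replicate (n - 1) k).length = n := by
    simp; omega
  constructor
  · rintro ⟨h, hj⟩
    rw [hlen] at h
    refine ⟨h, ?_⟩
    cases i with
    | zero => simpa using hj
    | succ i =>
      simp only [List.getElem_cons_succ] at hj
      rw [List.getElem_replicate] at hj
      simpa using hj
  · rintro ⟨h, hj⟩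
    refine ⟨by rw [hlen]; exact h, ?_⟩
    cases i with
    | zero => simpa using hj
    | succ i =>
      simp only [List.getElem_cons_succ]
      rw [List.getElem_replicate]
      simpa using hj

lemma card_filter_downclosed (N : ℕ) (p : ℕ → Prop) [DecidablePred p]
    (hdc : ∀ u v : ℕ, u ≤ v → v < N → p v → p u) {i : ℕ} (hi : i < N) :
    i < ((Finset.range N).filter p).card ↔ p i := by
  constructor
  · intro h
    by_contra hp
    have hsub : (Finset.range N).filter p ⊆ Finset.range i := by
      intro v hv
      simp only [Finset.mem_filter, Finset.mem_range] at hv ⊢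
      by_contra hvi
      push_neg at hvi
      exact hp (hdc i v hvi hv.1 hv.2)
    have := Finset.card_le_card hsub
    simp only [Finset.card_range] at this
    omega
  · intro hp
    have hsub : Finset.range (i + 1) ⊆ (Finset.range N).filter p := by
      intro u hu
      simp only [Finset.mem_range] at hu
      simp only [Finset.mem_filter, Finset.mem_range]
      exact ⟨by omega, hdc u i (by omega) hi hp⟩
    have := Finset.card_le_card hsub
    simp only [Finset.card_range] at this
    omega


open Finset

variable (n k : ℕ) (a : Fin (n + 1) → ℤ) (M : Fin (n + 1) → ℕ)

/-- `Fm M v = ∑_{w ≥ v} M w`. -/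
def Fm (v : ℕ) : ℕ := ∑ w : Fin (n + 1), if v ≤ (w : ℕ) then M w else 0

/-- `Gm M v = ∑_{w < v} (a w + M w).toNat`. -/
def Gm (v : ℕ) : ℕ := ∑ w : Fin (n + 1), if (w : ℕ) < v then (a w + M w).toNat else 0

/-- Missing value of the `j`-th full column. -/
def mcol (j : ℕ) : ℕ := ((range (n + 1)).filter fun v => j < Fm n M (v + 1)).card

/-- Value of the `r`-th tail cell. -/
def tv (r : ℕ) : ℕ := ((range (n + 1)).filter fun v => Gm n a M (v + 1) ≤ r).card

/-- Entry function of the tableau built from `M`. -/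
def ent (i j : ℕ) : ℕ :=
  if i < n ∧ j < k then (if mcol n M j ≤ i then i + 1 else i)
  else if i = 0 ∧ k ≤ j ∧ j < 2 * k then tv n a M (j - k) else 0

variable {n k a M}


lemma sum_ite_eq_fin (f : Fin (n + 1) → ℕ) {v : ℕ} (hv : v < n + 1) :
    ∑ w : Fin (n + 1), (if (w : ℕ) = v then f w else 0) = f ⟨v, hv⟩ := by
  rw [Finset.sum_eq_single (⟨v, hv⟩ : Fin (n + 1))]
  · simp
  · intro w _ hw
    simp only [ite_eq_right_iff]
    intro h
    exact absurd (Fin.ext h) hw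
  · simp

lemma Fm_anti {u v : ℕ} (huv : u ≤ v) : Fm n M v ≤ Fm n M u := by
  refine Finset.sum_le_sum fun w _ => ?_
  split_ifs <;> omega

lemma Gm_mono {u v : ℕ} (huv : u ≤ v) : Gm n a M u ≤ Gm n a M v := by
  refine Finset.sum_le_sum fun w _ => ?_
  split_ifs <;> omega

lemma Fm_zero (hMk : ∑ v, M v = k) : Fm n M 0 = k := by
  rw [← hMk, Fm]
  exact Finset.sum_congr rfl fun w _ => by simp

lemma Fm_last : Fm n M (n + 1) = 0 := by
  refine Finset.sum_eq_zero fun w _ => ?_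
  have := w.is_lt
  simp only [ite_eq_right_iff]
  omega

lemma Fm_succ {v : ℕ} (hv : v < n + 1) : Fm n M v = M ⟨v, hv⟩ + Fm n M (v + 1) := by
  have : ∀ w : Fin (n + 1), (if v ≤ (w : ℕ) then M w else 0)
      = (if (w : ℕ) = v then M w else 0) + (if v + 1 ≤ (w : ℕ) then M w else 0) := by
    intro w
    split_ifs <;> omega
  rw [Fm, Finset.sum_congr rfl fun w _ => this w, Finset.sum_add_distrib,
    sum_ite_eq_fin M hv]
  rfl

lemma Gm_zero : Gm n a M 0 = 0 := by
  refine Finset.sum_eq_zero fun w _ => by simp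

lemma Gm_succ {v : ℕ} (hv : v < n + 1) :
    Gm n a M (v + 1) = Gm n a M v + (a ⟨v, hv⟩ + M ⟨v, hv⟩).toNat := by
  have : ∀ w : Fin (n + 1), (if (w : ℕ) < v + 1 then (a w + M w).toNat else 0)
      = (if (w : ℕ) < v then (a w + M w).toNat else 0)
        + (if (w : ℕ) = v then (a w + M w).toNat else 0) := by
    intro w
    split_ifs <;> omega
  rw [Gm, Finset.sum_congr rfl fun w _ => this w, Finset.sum_add_distrib,
    sum_ite_eq_fin (fun w => (a w + M w).toNat) hv]
  rfl

lemma Gm_last (hMk : ∑ v, M v = k) (hMa : ∀ v, 0 ≤ a v + M v) (hsum : ∑ i, a i = 0) :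
    Gm n a M (n + 1) = k := by
  have h1 : Gm n a M (n + 1) = ∑ w : Fin (n + 1), (a w + M w).toNat := by
    refine Finset.sum_congr rfl fun w _ => ?_
    have := w.is_lt
    simp only [ite_eq_left_iff]
    omega
  have h2 : ((∑ w : Fin (n + 1), (a w + M w).toNat : ℕ) : ℤ) = ∑ w : Fin (n + 1), (a w + M w) := by
    push_cast
    exact Finset.sum_congr rfl fun w _ => Int.toNat_of_nonneg (hMa w)
  have h3 : ∑ w : Fin (n + 1), (a w + M w) = k := by
    rw [Finset.sum_add_distrib, hsum, zero_add, ← Nat.cast_sum, hMk]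
  omega

lemma Fm_le (hMk : ∑ v, M v = k) (v : ℕ) : Fm n M v ≤ k := by
  rw [← Fm_zero hMk]
  exact Fm_anti (Nat.zero_le v)

lemma Gm_le (hMk : ∑ v, M v = k) (hMa : ∀ v, 0 ≤ a v + M v) (hsum : ∑ i, a i = 0) (v : ℕ)
    (hv : v ≤ n + 1) : Gm n a M v ≤ k := by
  rw [← Gm_last hMk hMa hsum]
  exact Gm_mono hv

-- key iff for mcol
lemma lt_mcol_iff {v j : ℕ} (hv : v < n + 1) : v < mcol n M j ↔ j < Fm n M (v + 1) := by
  refine card_filter_downclosed _ _ (fun u v' huv _ hp => ?_) hv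
  exact lt_of_lt_of_le hp (Fm_anti (by omega))

lemma lt_tv_iff {v r : ℕ} (hv : v < n + 1) : v < tv n a M r ↔ Gm n a M (v + 1) ≤ r := by
  refine card_filter_downclosed _ _ (fun u v' huv _ hp => ?_) hv
  exact le_trans (Gm_mono (by omega)) hp

lemma mcol_pos (hM0 : M 0 = 0) (hMk : ∑ v, M v = k) {j : ℕ} (hj : j < k) :
    1 ≤ mcol n M j := by
  have h0 : (0 : ℕ) < mcol n M j ↔ j < Fm n M 1 := lt_mcol_iff (by omega)
  have h1 : Fm n M 0 = M ⟨0, by omega⟩ + Fm n M 1 := Fm_succ (by omega)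
  rw [Fm_zero hMk] at h1
  have hM0' : M ⟨0, by omega⟩ = 0 := hM0
  have : j < Fm n M 1 := by omega
  exact h0.mpr this

lemma mcol_le_n {j : ℕ} : mcol n M j ≤ n := by
  by_contra h
  push_neg at h
  have := (lt_mcol_iff (show n < n + 1 by omega)).mp h
  rw [Fm_last] at this
  omega

lemma tv_le_n (hMk : ∑ v, M v = k) (hMa : ∀ v, 0 ≤ a v + M v) (hsum : ∑ i, a i = 0)
    {r : ℕ} (hr : r < k) : tv n a M r ≤ n := by
  by_contra h
  push_neg at h
  have := (lt_tv_iff (show n < n + 1 by omega)).mp h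
  rw [Gm_last hMk hMa hsum] at this
  omega

lemma mcol_anti {j1 j2 : ℕ} (h : j1 ≤ j2) : mcol n M j2 ≤ mcol n M j1 := by
  refine Finset.card_le_card fun v hv => ?_
  simp only [Finset.mem_filter] at hv ⊢
  exact ⟨hv.1, by omega⟩

lemma tv_mono {r1 r2 : ℕ} (h : r1 ≤ r2) : tv n a M r1 ≤ tv n a M r2 := by
  refine Finset.card_le_card fun v hv => ?_
  simp only [Finset.mem_filter] at hv ⊢
  exact ⟨hv.1, by omega⟩

lemma mcol_eq_iff (hM0 : M 0 = 0) (hMk : ∑ v, M v = k) {j v : ℕ} (hj : j < k) (hv : v < n + 1) :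
    mcol n M j = v ↔ Fm n M (v + 1) ≤ j ∧ j < Fm n M v := by
  have h1 : v < mcol n M j ↔ j < Fm n M (v + 1) := lt_mcol_iff hv
  have h2 : mcol n M j ≤ n := mcol_le_n
  cases v with
  | zero =>
    have h0 : Fm n M 0 = k := Fm_zero hMk
    have hpos := mcol_pos hM0 hMk hj
    constructor
    · intro h; omega
    · intro h; omega
  | succ u =>
    have h3 : u < mcol n M j ↔ j < Fm n M (u + 1) := lt_mcol_iff (by omega)
    omega

lemma tv_eq_iff {r v : ℕ} (hv : v < n + 1) :
    tv n a M r = v ↔ Gm n a M v ≤ r ∧ r < Gm n a M (v + 1) := by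
  have h1 : v < tv n a M r ↔ Gm n a M (v + 1) ≤ r := lt_tv_iff hv
  have h2 : tv n a M r ≤ n + 1 := by
    rw [tv]
    exact le_trans (Finset.card_filter_le _ _) (by simp)
  cases v with
  | zero =>
    have h0 : Gm n a M 0 = 0 := Gm_zero
    constructor
    · intro h; omega
    · intro h; omega
  | succ u =>
    have h3 : u < tv n a M r ↔ Gm n a M (u + 1) ≤ r := lt_tv_iff (by omega)
    omega

/-- Number of full columns whose missing value is `v`. -/
lemma card_mcol_fiber (hM0 : M 0 = 0) (hMk : ∑ v, M v = k) (v : Fin (n + 1)) :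
    ((range k).filter fun j => mcol n M j = (v : ℕ)).card = M v := by
  have hFle : Fm n M v ≤ k := Fm_le hMk _
  have hsucc : Fm n M v = M v + Fm n M ((v : ℕ) + 1) := by
    have := Fm_succ v.is_lt (M := M)
    simpa using this
  have : ((range k).filter fun j => mcol n M j = (v : ℕ)) = Finset.Ico (Fm n M ((v : ℕ) + 1)) (Fm n M (v : ℕ)) := by
    ext j
    simp only [Finset.mem_filter, Finset.mem_range, Finset.mem_Ico]
    constructor
    · rintro ⟨hj, hm⟩
      exact (mcol_eq_iff hM0 hMk hj v.is_lt).mp hm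
    · rintro ⟨h1, h2⟩
      have hj : j < k := by omega
      exact ⟨hj, (mcol_eq_iff hM0 hMk hj v.is_lt).mpr ⟨h1, h2⟩⟩
  rw [this, Nat.card_Ico]
  omega

/-- Number of tail cells with value `v`. -/
lemma card_tv_fiber (hMk : ∑ v, M v = k) (hMa : ∀ v, 0 ≤ a v + M v) (hsum : ∑ i, a i = 0)
    (v : Fin (n + 1)) :
    ((range k).filter fun r => tv n a M r = (v : ℕ)).card = (a v + M v).toNat := by
  have hGle : Gm n a M ((v : ℕ) + 1) ≤ k := Gm_le hMk hMa hsum _ (by omega)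
  have hsucc : Gm n a M ((v : ℕ) + 1) = Gm n a M (v : ℕ) + (a v + M v).toNat := by
    have := Gm_succ v.is_lt (a := a) (M := M)
    simpa using this
  have : ((range k).filter fun r => tv n a M r = (v : ℕ))
      = Finset.Ico (Gm n a M (v : ℕ)) (Gm n a M ((v : ℕ) + 1)) := by
    ext r
    simp only [Finset.mem_filter, Finset.mem_range, Finset.mem_Ico]
    constructor
    · rintro ⟨hr, hm⟩
      exact (tv_eq_iff v.is_lt).mp hm
    · rintro ⟨h1, h2⟩
      exact ⟨by omega, (tv_eq_iff v.is_lt).mpr ⟨h1, h2⟩⟩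
  rw [this, Nat.card_Ico]
  omega

lemma cells_hookShape (hn : 1 ≤ n) :
    (hookShape n k).cells
      = (range n ×ˢ range k) ∪ (({0} : Finset ℕ) ×ˢ Finset.Ico k (2 * k)) := by
  ext ⟨i, j⟩
  rw [YoungDiagram.mem_cells, mem_hookShape hn]
  simp only [Finset.mem_union, Finset.mem_product, Finset.mem_range, Finset.mem_Ico,
    Finset.mem_singleton]
  by_cases h : i = 0 <;> simp [h] <;> omega

lemma col_count {m v : ℕ} (hm : m ≤ n) (hv : v ≤ n) :
    (∑ i ∈ range n, if (if m ≤ i then i + 1 else i) = v then 1 else 0)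
      = if m = v then 0 else 1 := by
  rcases lt_trichotomy v m with h | h | h
  · rw [Finset.sum_congr rfl (fun i _ => show (if (if m ≤ i then i + 1 else i) = v then 1 else 0)
        = if i = v then 1 else 0 by split_ifs <;> omega)]
    rw [Finset.sum_ite_eq' (range n) v (fun _ => 1)]
    have : v ∈ range n := by simp; omega
    rw [if_pos this, if_neg (by omega)]
  · rw [Finset.sum_eq_zero (fun i _ => by split_ifs <;> omega), if_pos h.symm]
  · rw [Finset.sum_congr rfl (fun i _ => show (if (if m ≤ i then i + 1 else i) = v then 1 else 0)
        = if i = v - 1 then 1 else 0 by split_ifs <;> omega)]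
    rw [Finset.sum_ite_eq' (range n) (v - 1) (fun _ => 1)]
    have : v - 1 ∈ range n := by simp; omega
    rw [if_pos this, if_neg (by omega)]

lemma count_cells (hn : 1 ≤ n) (E : ℕ → ℕ → ℕ) (m : ℕ → ℕ)
    (hm : ∀ j, j < k → m j ≤ n)
    (hfull : ∀ i j, i < n → j < k → E i j = if m j ≤ i then i + 1 else i)
    {v : ℕ} (hv : v ≤ n) :
    (((hookShape n k).cells).filter fun c => E c.1 c.2 = v).card
      + ((range k).filter fun j => m j = v).card
      = k + ((range k).filter fun r => E 0 (k + r) = v).card := by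
  rw [cells_hookShape hn, Finset.filter_union]
  rw [Finset.card_union_of_disjoint]
  · have hfullcount : ((((range n) ×ˢ (range k)).filter fun c => E c.1 c.2 = v).card)
        + ((range k).filter fun j => m j = v).card = k := by
      rw [Finset.card_filter, Finset.sum_product]
      rw [Finset.sum_comm]
      have hinner : ∀ j ∈ range k,
          (∑ i ∈ range n, if E i j = v then 1 else 0) = if m j = v then 0 else 1 := by
        intro j hj
        simp only [Finset.mem_range] at hj
        rw [Finset.sum_congr rfl (fun i hi => by
          rw [hfull i j (Finset.mem_range.mp hi) hj])]
        exact col_count (hm j hj) hv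
      rw [Finset.sum_congr rfl hinner]
      have h1 : (∑ j ∈ range k, if m j = v then 0 else 1)
          = ((range k).filter fun j => ¬(m j = v)).card := by
        rw [Finset.card_filter]
        exact Finset.sum_congr rfl fun j _ => by split_ifs <;> simp_all
      rw [h1]
      have := Finset.card_filter_add_card_filter_not
        (s := range k) (p := fun j => m j = v)
      rw [Finset.card_range] at this
      omega
    have htail : (((({0} : Finset ℕ) ×ˢ Finset.Ico k (2 * k)).filter
          fun c => E c.1 c.2 = v).card)
        = ((range k).filter fun r => E 0 (k + r) = v).card := by
      rw [Finset.card_filter, Finset.sum_product, Finset.sum_singleton]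
      rw [Finset.sum_Ico_eq_sum_range]
      rw [show 2 * k - k = k by omega]
      rw [Finset.card_filter]
    omega
  · rw [Finset.disjoint_left]
    rintro ⟨i, j⟩ hc1 hc2
    simp only [Finset.mem_filter, Finset.mem_product, Finset.mem_range, Finset.mem_Ico,
      Finset.mem_singleton] at hc1 hc2
    omega

section construct

variable (hn : 1 ≤ n) (hM0 : M 0 = 0) (hMk : ∑ v, M v = k)

lemma ent_full {i j : ℕ} (hi : i < n) (hj : j < k) :
    ent n k a M i j = if mcol n M j ≤ i then i + 1 else i := by
  rw [ent, if_pos ⟨hi, hj⟩]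

lemma ent_tail {j : ℕ} (h1 : k ≤ j) (h2 : j < 2 * k) :
    ent n k a M 0 j = tv n a M (j - k) := by
  rw [ent, if_neg (by omega), if_pos ⟨rfl, h1, h2⟩]

include hn hM0 hMk in
lemma ent_row0 {j : ℕ} (hj : j < k) : ent n k a M 0 j = 0 := by
  rw [ent_full (by omega) hj]
  have := mcol_pos hM0 hMk hj
  rw [if_neg (by omega)]

include hn hM0 hMk in
lemma ent_zeros {i j : ℕ} (hc : (i, j) ∉ hookShape n k) : ent n k a M i j = 0 := by
  rw [mem_hookShape hn] at hc
  have hA : ¬(i < n ∧ j < k) := by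
    rintro ⟨ha1, ha2⟩
    exact hc ⟨ha1, by split_ifs <;> omega⟩
  have hB : ¬(i = 0 ∧ k ≤ j ∧ j < 2 * k) := by
    rintro ⟨h0, hb1, hb2⟩
    exact hc ⟨by omega, by rw [h0, if_pos rfl]; omega⟩
  rw [ent, if_neg hA, if_neg hB]

/-- The tableau constructed from the multiplicity vector `M`. -/
def tab : SemistandardYoungTableau (hookShape n k) where
  entry := ent n k a M
  row_weak' := by
    intro i j1 j2 hj hcell
    rw [mem_hookShape hn] at hcell
    obtain ⟨hi, hj2⟩ := hcell
    by_cases hx : j2 < k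
    · have hj1 : j1 < k := by omega
      rw [ent_full hi hx, ent_full hi hj1]
      have := mcol_anti (M := M) (le_of_lt hj)
      split_ifs <;> omega
    · have hi0 : i = 0 := by by_contra h; rw [if_neg h] at hj2; omega
      subst hi0
      rw [if_pos rfl] at hj2
      rw [ent_tail (by omega) hj2]
      by_cases hy : j1 < k
      · rw [ent_row0 hn hM0 hMk hy]
        exact Nat.zero_le _
      · rw [ent_tail (by omega) (by omega)]
        exact tv_mono (by omega)
  col_strict' := by
    intro i1 i2 j hi hcell
    rw [mem_hookShape hn] at hcell
    obtain ⟨h2n, hj⟩ := hcell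
    rw [if_neg (by omega)] at hj
    rw [ent_full (by omega) hj, ent_full h2n hj]
    split_ifs <;> omega
  zeros' := fun {i j} hc => ent_zeros hn hM0 hMk hc

@[simp]
lemma tab_apply (i j : ℕ) : tab (a := a) hn hM0 hMk i j = ent n k a M i j := rfl

variable (hMa : ∀ v, 0 ≤ a v + M v) (hsum : ∑ i, a i = 0)

include hn hM0 hMk hMa hsum in
lemma tab_bound : ∀ c ∈ (hookShape n k).cells, ent n k a M c.1 c.2 < n + 1 := by
  rintro ⟨i, j⟩ hc
  rw [YoungDiagram.mem_cells, mem_hookShape hn] at hc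
  obtain ⟨hi, hj⟩ := hc
  by_cases hx : j < k
  · rw [ent_full hi hx]
    split_ifs <;> omega
  · have hi0 : i = 0 := by by_contra h; rw [if_neg h] at hj; omega
    subst hi0
    rw [if_pos rfl] at hj
    rw [ent_tail (by omega) hj]
    have := tv_le_n hMk hMa hsum (r := j - k) (by omega)
    omega

include hn hM0 hMk hMa hsum in
lemma tab_weight (v : Fin (n + 1)) :
    (((((hookShape n k).cells).filter fun c => ent n k a M c.1 c.2 = (v : ℕ)).card : ℤ))
      = a v + k := by
  have hcnt := count_cells hn (ent n k a M) (mcol n M)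
    (fun j _ => mcol_le_n) (fun i j hi hj => ent_full hi hj)
    (v := (v : ℕ)) (by omega)
  rw [card_mcol_fiber hM0 hMk v] at hcnt
  have htail : ((range k).filter fun r => ent n k a M 0 (k + r) = (v : ℕ))
      = (range k).filter fun r => tv n a M r = (v : ℕ) := by
    apply Finset.filter_congr
    intro r hr
    simp only [Finset.mem_range] at hr
    rw [ent_tail (by omega) (by omega), show k + r - k = r by omega]
  rw [htail, card_tv_fiber hMk hMa hsum v] at hcnt
  have hMvk : M v ≤ k := by
    rw [← hMk]
    exact Finset.single_le_sum (f := M) (fun i _ => Nat.zero_le _) (Finset.mem_univ v)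
  have := hMa v
  omega

include hn in
lemma card_ent_fixed {j : ℕ} (hj : j < k) :
    ((range n).filter fun i => ent n k a M i j = i).card = mcol n M j := by
  have hmn : mcol n M j ≤ n := mcol_le_n
  have hsub : ((range n).filter fun i => ent n k a M i j = i) = range (mcol n M j) := by
    ext i
    simp only [Finset.mem_filter, Finset.mem_range]
    constructor
    · rintro ⟨hi, he⟩
      rw [ent_full hi hj] at he
      split_ifs at he <;> omega
    · intro hi
      refine ⟨by omega, ?_⟩
      rw [ent_full (by omega) hj, if_neg (by omega)]
  rw [hsub, Finset.card_range]


end construct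

lemma fin_sum_if_le (g : ℕ → ℕ) (c : ℕ) :
    (∑ w : Fin (n + 1), if c ≤ (w : ℕ) then g (w : ℕ) else 0)
      = ∑ w ∈ Finset.Ico c (n + 1), g w := by
  rw [Fin.sum_univ_eq_sum_range (fun w => if c ≤ w then g w else 0) (n + 1)]
  rw [← Finset.sum_filter]
  congr 1
  ext w
  simp only [Finset.mem_filter, Finset.mem_range, Finset.mem_Ico]
  omega

lemma fin_sum_if_lt (g : ℕ → ℕ) {c : ℕ} (hc : c ≤ n + 1) :
    (∑ w : Fin (n + 1), if (w : ℕ) < c then g (w : ℕ) else 0)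
      = ∑ w ∈ Finset.range c, g w := by
  rw [Fin.sum_univ_eq_sum_range (fun w => if w < c then g w else 0) (n + 1)]
  rw [← Finset.sum_filter]
  congr 1
  ext w
  simp only [Finset.mem_filter, Finset.mem_range]
  omega

section recover

variable (T : SemistandardYoungTableau (hookShape n k))

/-- The missing value of the `j`-th column of `T`. -/
def mT (j : ℕ) : ℕ := ((range n).filter fun i => T i j = i).card

/-- The multiplicity vector recovered from `T`. -/
def MT : Fin (n + 1) → ℕ := fun v => ((range k).filter fun j => mT T j = (v : ℕ)).card

/-- Tail value counts of `T`. -/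
def TT (w : ℕ) : ℕ := ((range k).filter fun r => T 0 (k + r) = w).card

variable {T}
variable (hn : 1 ≤ n)

include hn in
lemma T_chain {j : ℕ} (hj : j < k) :
    ∀ d i : ℕ, i + d < n → T i j + d ≤ T (i + d) j := by
  intro d
  induction d with
  | zero => intro i _; simp
  | succ d ih =>
    intro i h
    have h1 := ih i (by omega)
    have h2 : T (i + d) j < T (i + d + 1) j := by
      refine T.col_strict (by omega) ((mem_hookShape hn).mpr ⟨by omega, ?_⟩)
      rw [if_neg (by omega)]
      exact hj
    have : i + (d + 1) = i + d + 1 := rfl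
    rw [this]
    omega

include hn in
lemma T_ge {i j : ℕ} (hi : i < n) (hj : j < k) : i ≤ T i j := by
  have h := T_chain (T := T) hn hj i 0 (by omega)
  rw [Nat.zero_add] at h
  have h0 : 0 ≤ T 0 j := Nat.zero_le _
  omega

variable (hTb : ∀ c ∈ (hookShape n k).cells, T c.1 c.2 < n + 1)

include hn hTb in
lemma T_le {i j : ℕ} (hi : i < n) (hj : j < k) : T i j ≤ i + 1 := by
  have h1 := T_chain (T := T) hn hj (n - 1 - i) i (by omega)
  rw [show i + (n - 1 - i) = n - 1 by omega] at h1
  have h2 : T (n - 1) j < n + 1 := by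
    refine hTb (n - 1, j) ?_
    rw [YoungDiagram.mem_cells, mem_hookShape hn]
    exact ⟨by omega, by split_ifs <;> omega⟩
  omega

include hn in
lemma lt_mT_iff {i j : ℕ} (hi : i < n) (hj : j < k) : i < mT T j ↔ T i j = i := by
  refine card_filter_downclosed n _ (fun u v huv hv hp => ?_) hi
  have hc := T_chain (T := T) hn hj (v - u) u (by omega)
  rw [show u + (v - u) = v by omega] at hc
  have := T_ge (T := T) hn (show u < n by omega) hj
  omega

lemma mT_le (j : ℕ) : mT T j ≤ n :=
  le_trans (Finset.card_filter_le _ _) (by rw [Finset.card_range])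

include hn hTb in
lemma T_full_eq {i j : ℕ} (hi : i < n) (hj : j < k) :
    T i j = if mT T j ≤ i then i + 1 else i := by
  by_cases h : i < mT T j
  · rw [if_neg (by omega)]
    exact (lt_mT_iff hn hi hj).mp h
  · rw [if_pos (by omega)]
    have h1 : ¬ T i j = i := fun hc => h ((lt_mT_iff hn hi hj).mpr hc)
    have h2 := T_ge (T := T) hn hi hj
    have h3 := T_le hn hTb hi hj
    omega

include hn hTb in
lemma mT_anti {j1 j2 : ℕ} (h12 : j1 ≤ j2) (hj2 : j2 < k) : mT T j2 ≤ mT T j1 := by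
  rcases eq_or_lt_of_le h12 with rfl | hlt
  · exact le_refl _
  by_contra hcon
  push_neg at hcon
  set i := mT T j1 with hi
  have hin : i < n := lt_of_lt_of_le hcon (mT_le j2)
  have h1 : T i j2 = i := (lt_mT_iff hn hin hj2).mp hcon
  have h2 : T i j1 = i + 1 := by
    rw [T_full_eq hn hTb hin (by omega), if_pos (le_refl _)]
  have h3 : T i j1 ≤ T i j2 := by
    refine T.row_weak hlt ((mem_hookShape hn).mpr ⟨hin, ?_⟩)
    split_ifs <;> omega
  omega

include hn in
lemma T_tail_mono {r1 r2 : ℕ} (h : r1 ≤ r2) (hr2 : r2 < k) : T 0 (k + r1) ≤ T 0 (k + r2) := by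
  refine T.row_weak_of_le (by omega) ((mem_hookShape hn).mpr ⟨by omega, ?_⟩)
  rw [if_pos rfl]
  omega

include hn hTb in
lemma T_tail_le {r : ℕ} (hr : r < k) : T 0 (k + r) ≤ n := by
  have := hTb (0, k + r) (by
    rw [YoungDiagram.mem_cells, mem_hookShape hn]
    exact ⟨by omega, by rw [if_pos rfl]; omega⟩)
  simpa using Nat.lt_succ_iff.mp this

variable (hTw : ∀ v : Fin (n + 1),
    ((((hookShape n k).cells).filter fun c => T c.1 c.2 = (v : ℕ)).card : ℤ) = a v + k)

include hn hTb hTw in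
lemma TT_eq (v : Fin (n + 1)) : (TT T (v : ℕ) : ℤ) = a v + MT T v := by
  have hcnt := count_cells hn (fun i j => T i j) (mT T)
    (fun j _ => mT_le j) (fun i j hi hj => T_full_eq hn hTb hi hj)
    (v := (v : ℕ)) (by omega)
  have hw := hTw v
  have hc2 : (((hookShape n k).cells).filter fun c => T c.1 c.2 = (v : ℕ)).card
      + MT T v = k + TT T (v : ℕ) := hcnt
  omega

include hn hTb hTw in
lemma MT_nonneg (v : Fin (n + 1)) : 0 ≤ a v + MT T v := by
  have := TT_eq hn hTb hTw v
  omega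

lemma sum_MT : ∑ v : Fin (n + 1), MT T v = k := by
  have hfib := Finset.card_eq_sum_card_fiberwise (s := range k) (t := range (n + 1))
    (f := fun j => mT T j) (fun j _ => by
      simp only [Finset.mem_coe, Finset.mem_range]
      have := mT_le (T := T) j
      omega)
  rw [Finset.card_range] at hfib
  simp only [MT]
  rw [Fin.sum_univ_eq_sum_range (fun w => ((range k).filter fun j => mT T j = w).card) (n + 1)]
  exact hfib.symm

include hn hTb hTw in
lemma MT_zero (ha0 : 0 ≤ a 0) : MT T 0 = 0 := by
  by_contra h
  have hpos : 0 < MT T 0 := Nat.pos_of_ne_zero h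
  rw [MT] at hpos
  obtain ⟨j, hj⟩ := Finset.card_pos.mp hpos
  simp only [Finset.mem_filter, Finset.mem_range] at hj
  have hval : (((0 : Fin (n + 1)) : ℕ)) = 0 := rfl
  rw [hval] at hj
  have hk1 : 1 ≤ k := by omega
  have hmk : mT T (k - 1) = 0 := by
    have := mT_anti hn hTb (show j ≤ k - 1 by omega) (show k - 1 < k by omega)
    omega
  have hT1 : T 0 (k - 1) = 1 := by
    rw [T_full_eq (i := 0) (j := k - 1) hn hTb (by omega) (by omega), hmk]
    norm_num
  have htail : ∀ r, r < k → 1 ≤ T 0 (k + r) := by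
    intro r hr
    have hcell : ((0 : ℕ), k + r) ∈ hookShape n k :=
      (mem_hookShape hn).mpr ⟨by omega, by rw [if_pos rfl]; omega⟩
    have := T.row_weak (show k - 1 < k + r by omega) hcell
    omega
  have hTT0 : TT T 0 = 0 := by
    rw [TT, Finset.card_eq_zero]
    rw [Finset.filter_eq_empty_iff]
    intro r hr
    simp only [Finset.mem_range] at hr
    have := htail r hr
    omega
  have := TT_eq hn hTb hTw 0
  rw [hval, hTT0] at this
  have : a 0 + MT T 0 = 0 := by omega
  omega

include hn hTb in
lemma Fm_MT_eq {v : ℕ} (hv : v ≤ n) :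
    Fm n (MT T) (v + 1) = ((range k).filter fun j => v < mT T j).card := by
  have h1 : Fm n (MT T) (v + 1)
      = ∑ w ∈ Finset.Ico (v + 1) (n + 1), ((range k).filter fun j => mT T j = w).card := by
    rw [Fm]
    exact fin_sum_if_le (fun w => ((range k).filter fun j => mT T j = w).card) (v + 1)
  rw [h1]
  have h2 := Finset.card_eq_sum_card_fiberwise (s := (range k).filter fun j => v < mT T j)
    (t := Finset.Ico (v + 1) (n + 1)) (f := fun j => mT T j) (fun j hj => by
      simp only [Finset.mem_coe, Finset.mem_filter, Finset.mem_range] at hj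
      simp only [Finset.mem_coe, Finset.mem_Ico]
      have := mT_le (T := T) j
      omega)
  rw [h2]
  refine Finset.sum_congr rfl fun w hw => ?_
  simp only [Finset.mem_Ico] at hw
  congr 1
  rw [Finset.filter_filter]
  refine Finset.filter_congr fun j _ => ?_
  show mT T j = w ↔ v < mT T j ∧ mT T j = w
  constructor
  · intro hh; exact ⟨by omega, hh⟩
  · intro hh; exact hh.2

include hn hTb in
lemma mcol_MT_eq {j : ℕ} (hj : j < k) : mcol n (MT T) j = mT T j := by
  have key : ∀ v, v < n + 1 → (v < mcol n (MT T) j ↔ v < mT T j) := by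
    intro v hv
    rw [lt_mcol_iff hv, Fm_MT_eq hn hTb (by omega)]
    exact card_filter_downclosed k _ (fun u v' huv hv' hp =>
      lt_of_lt_of_le hp (mT_anti hn hTb huv hv')) hj
  have hb1 : mcol n (MT T) j ≤ n := mcol_le_n
  have hb2 : mT T j ≤ n := mT_le j
  have e1 : ¬ (mcol n (MT T) j < mT T j) := fun h =>
    lt_irrefl _ ((key _ (by omega)).mpr h)
  have e2 : ¬ (mT T j < mcol n (MT T) j) := fun h =>
    lt_irrefl _ ((key _ (by omega)).mp h)
  omega

include hn hTb hTw in
lemma Gm_MT_eq {v : ℕ} (hv : v ≤ n) :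
    Gm n a (MT T) (v + 1) = ((range k).filter fun r => T 0 (k + r) ≤ v).card := by
  have h0 : ∀ w : Fin (n + 1), (a w + MT T w).toNat = TT T (w : ℕ) := by
    intro w
    have := TT_eq hn hTb hTw w
    omega
  have h1 : Gm n a (MT T) (v + 1) = ∑ w ∈ Finset.range (v + 1), TT T w := by
    rw [Gm, Finset.sum_congr rfl fun w _ => by rw [h0 w]]
    exact fin_sum_if_lt (fun w => TT T w) (by omega)
  rw [h1]
  have h2 := Finset.card_eq_sum_card_fiberwise (s := (range k).filter fun r => T 0 (k + r) ≤ v)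
    (t := Finset.range (v + 1)) (f := fun r => T 0 (k + r)) (fun r hr => by
      simp only [Finset.mem_coe, Finset.mem_filter, Finset.mem_range] at hr
      simp only [Finset.mem_coe, Finset.mem_range]
      omega)
  rw [h2]
  refine Finset.sum_congr rfl fun w hw => ?_
  simp only [Finset.mem_range] at hw
  rw [TT]
  congr 1
  rw [Finset.filter_filter]
  refine Finset.filter_congr fun r _ => ?_
  show T 0 (k + r) = w ↔ T 0 (k + r) ≤ v ∧ T 0 (k + r) = w
  constructor
  · intro hh; exact ⟨by omega, hh⟩
  · intro hh; exact hh.2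

include hn hTb hTw in
lemma tv_MT_eq (hsum : ∑ i, a i = 0) {r : ℕ} (hr : r < k) : tv n a (MT T) r = T 0 (k + r) := by
  have key : ∀ v, v < n + 1 → (v < tv n a (MT T) r ↔ v < T 0 (k + r)) := by
    intro v hv
    rw [lt_tv_iff hv, Gm_MT_eq hn hTb hTw (by omega)]
    have hdc := card_filter_downclosed k (fun r' => T 0 (k + r') ≤ v)
      (fun u v' huv hv' hp => le_trans (T_tail_mono hn huv hv') hp) hr
    constructor
    · intro h
      by_contra hcon
      push_neg at hcon
      have := hdc.mpr hcon
      omega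
    · intro h
      by_contra hcon
      push_neg at hcon
      have := hdc.mp (by omega)
      omega
  have hb1 : tv n a (MT T) r ≤ n :=
    tv_le_n (sum_MT) (MT_nonneg hn hTb hTw) hsum hr
  have hb2 : T 0 (k + r) ≤ n := T_tail_le hn hTb hr
  have e1 : ¬ (tv n a (MT T) r < T 0 (k + r)) := fun h =>
    lt_irrefl _ ((key _ (by omega)).mpr h)
  have e2 : ¬ (T 0 (k + r) < tv n a (MT T) r) := fun h =>
    lt_irrefl _ ((key _ (by omega)).mp h)
  omega

include hn hTb hTw in
lemma T_eq_ent (hsum : ∑ i, a i = 0) (ha0 : 0 ≤ a 0) (i j : ℕ) :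
    T i j = ent n k a (MT T) i j := by
  have hM0 : MT T 0 = 0 := MT_zero hn hTb hTw ha0
  have hMk : ∑ v, MT T v = k := sum_MT
  by_cases hc : (i, j) ∈ hookShape n k
  · rw [mem_hookShape hn] at hc
    obtain ⟨hi, hj⟩ := hc
    by_cases hx : j < k
    · rw [ent_full hi hx, mcol_MT_eq hn hTb hx]
      exact T_full_eq hn hTb hi hx
    · have hi0 : i = 0 := by by_contra h; rw [if_neg h] at hj; omega
      subst hi0
      rw [if_pos rfl] at hj
      rw [ent_tail (by omega) hj]
      have := tv_MT_eq hn hTb hTw hsum (r := j - k) (by omega)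
      rw [show k + (j - k) = j by omega] at this
      omega
  · rw [T.zeros hc, ent_zeros hn hM0 hMk (by exact hc)]
end recover

lemma multiset_card_finset_sum {ι α : Type*} (s : Finset ι) (f : ι → Multiset α) :
    Multiset.card (∑ i ∈ s, f i) = ∑ i ∈ s, Multiset.card (f i) := by
  induction s using Finset.cons_induction with
  | empty => simp
  | cons i s hi ih => simp [Finset.sum_cons, ih]

/-- Stars and bars. -/
lemma nat_card_sum_fiber (N m : ℕ) :
    Nat.card {f : Fin N → ℕ // ∑ i, f i = m} = (N + m - 1).choose m := by
  have e : {f : Fin N → ℕ // ∑ i, f i = m} ≃ Sym (Fin N) m :=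
    { toFun := fun f => ⟨∑ i, f.1 i • ({i} : Multiset (Fin N)), by
        rw [multiset_card_finset_sum]
        simpa using f.2⟩
      invFun := fun s => ⟨fun i => s.1.count i, by
        have h := Multiset.toFinset_sum_count_eq s.1
        have h2 : ∑ i ∈ s.1.toFinset, s.1.count i = ∑ i : Fin N, s.1.count i :=
          Finset.sum_subset (Finset.subset_univ _) (fun x _ hx =>
            Multiset.count_eq_zero_of_notMem
              (fun hm => hx (Multiset.mem_toFinset.mpr hm)))
        rw [← h2, h, s.2]⟩
      left_inv := fun f => by
        ext i
        simp [Multiset.count_sum', Multiset.count_singleton]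
      right_inv := fun s => by
        refine Subtype.ext ?_
        show ∑ i : Fin N, s.1.count i • ({i} : Multiset (Fin N)) = s.1
        conv_rhs => rw [← Multiset.toFinset_sum_count_nsmul_eq s.1]
        exact (Finset.sum_subset (Finset.subset_univ _) (fun x _ hx => by
          rw [Multiset.count_eq_zero_of_notMem
            (fun hm => hx (Multiset.mem_toFinset.mpr hm)), zero_smul])).symm }
  rw [Nat.card_congr e, Nat.card_eq_fintype_card, Sym.card_sym_eq_choose, Fintype.card_fin]

lemma nat_card_zero_fiber (hn : 1 ≤ n) (m : ℕ) :
    Nat.card {g : Fin (n + 1) → ℕ // g 0 = 0 ∧ ∑ v, g v = m}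
      = (m + (n - 1)).choose (n - 1) := by
  have e : {g : Fin (n + 1) → ℕ // g 0 = 0 ∧ ∑ v, g v = m}
      ≃ {f : Fin n → ℕ // ∑ i, f i = m} :=
    { toFun := fun g => ⟨fun i => g.1 i.succ, by
        have h := Fin.sum_univ_succ g.1
        rw [g.2.1, zero_add] at h
        rw [← h, g.2.2]⟩
      invFun := fun f => ⟨Fin.cases 0 f.1, by
        refine ⟨rfl, ?_⟩
        rw [Fin.sum_univ_succ]
        simpa using f.2⟩
      left_inv := fun g => by
        refine Subtype.ext (funext fun v => ?_)
        induction v using Fin.cases with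
        | zero => simp [g.2.1]
        | succ i => simp
      right_inv := fun f => by
        refine Subtype.ext (funext fun i => ?_)
        simp }
  rw [Nat.card_congr e, nat_card_sum_fiber]
  have h1 : n + m - 1 = m + (n - 1) := by omega
  rw [h1]
  have h5 := Nat.choose_symm (show m ≤ m + (n - 1) by omega)
  rw [show m + (n - 1) - m = n - 1 by omega] at h5
  exact h5.symm

lemma main_card (hn : 1 ≤ n) (ha0 : 0 ≤ a 0) (hsum : ∑ i, a i = 0) :
    Nat.card {T : SemistandardYoungTableau (hookShape n k) |
        (∀ c ∈ (hookShape n k).cells, T c.1 c.2 < n + 1) ∧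
          ∀ v : Fin (n + 1),
            ((((hookShape n k).cells).filter fun c => T c.1 c.2 = (v : ℕ)).card : ℤ)
              = a v + k}
      = Nat.card {M : Fin (n + 1) → ℕ //
          M 0 = 0 ∧ (∀ v : Fin (n + 1), 0 ≤ a v + (M v : ℤ)) ∧ ∑ v, M v = k} := by
  let f : {M : Fin (n + 1) → ℕ //
        M 0 = 0 ∧ (∀ v : Fin (n + 1), 0 ≤ a v + (M v : ℤ)) ∧ ∑ v, M v = k}
      → {T : SemistandardYoungTableau (hookShape n k) |
        (∀ c ∈ (hookShape n k).cells, T c.1 c.2 < n + 1) ∧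
          ∀ v : Fin (n + 1),
            ((((hookShape n k).cells).filter fun c => T c.1 c.2 = (v : ℕ)).card : ℤ)
              = a v + k} :=
    fun M => ⟨tab (a := a) hn M.2.1 M.2.2.2,
      ⟨tab_bound hn M.2.1 M.2.2.2 M.2.2.1 hsum,
        fun v => tab_weight hn M.2.1 M.2.2.2 M.2.2.1 hsum v⟩⟩
  refine (Nat.card_eq_of_bijective f ⟨?_, ?_⟩).symm
  · intro M1 M2 hf
    have h0 : (f M1).1 = (f M2).1 := congrArg Subtype.val hf
    have hent : ∀ i j, ent n k a M1.1 i j = ent n k a M2.1 i j := fun i j =>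
      congrFun (DFunLike.congr_fun h0 i) j
    refine Subtype.ext (funext fun v => ?_)
    rw [← card_mcol_fiber M1.2.1 M1.2.2.2 v, ← card_mcol_fiber M2.2.1 M2.2.2.2 v]
    refine congrArg Finset.card (Finset.filter_congr fun j hj => ?_)
    have hj' := Finset.mem_range.mp hj
    have hm : mcol n M1.1 j = mcol n M2.1 j := by
      rw [← card_ent_fixed (a := a) hn hj' (M := M1.1),
        ← card_ent_fixed (a := a) hn hj' (M := M2.1)]
      exact congrArg Finset.card (Finset.filter_congr fun i _ => by rw [hent i j])
    rw [hm]
  · rintro ⟨T, hTb, hTw⟩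
    refine ⟨⟨MT T, MT_zero hn hTb hTw ha0, MT_nonneg hn hTb hTw, sum_MT⟩, ?_⟩
    apply Subtype.ext
    apply SemistandardYoungTableau.ext
    intro i j
    exact (T_eq_ent hn hTb hTw hsum ha0 i j).symm

end KostkaHook

open Finset in
/-- **Weight multiplicities for `SU(n+1)` spherical representations as Kostka numbers.**
Let `μ = (a₁, …, a_{n+1})` be a weakly decreasing integer vector summing to `0`.  The number
of semistandard Young tableaux of shape `(2k, k, …, k)` (with `n - 1` rows of length `k`)
with entries in `{0, …, n}` in which the value `i` occurs exactly `aᵢ + k` times equals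
`C(k - ‖μ‖₁/2 + n - 1, n - 1)` if `‖μ‖₁ ≤ 2k`, and `0` otherwise, where
`‖μ‖₁ = |a₁| + ⋯ + |a_{n+1}|`. -/
theorem kostka_count_hookShape (n k : ℕ) (hn : 1 ≤ n) (a : Fin (n + 1) → ℤ)
    (hmono : Antitone a) (hsum : ∑ i, a i = 0) :
    Set.ncard {T : SemistandardYoungTableau (hookShape n k) |
        (∀ c ∈ (hookShape n k).cells, T c.1 c.2 < n + 1) ∧
          ∀ v : Fin (n + 1),
            ((((hookShape n k).cells).filter fun c => T c.1 c.2 = (v : ℕ)).card : ℤ)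
              = a v + k} =
      if (∑ i, (a i).natAbs) ≤ 2 * k then
        Nat.choose (k - (∑ i, (a i).natAbs) / 2 + (n - 1)) (n - 1)
      else 0 := by
  classical
  have ha0 : 0 ≤ a 0 := by
    have h1 : ∀ i : Fin (n + 1), a i ≤ a 0 := fun i => hmono (Fin.zero_le i)
    have h2 : (0 : ℤ) ≤ (n + 1) * a 0 := by
      have h3 := Finset.sum_le_sum (fun i (_ : i ∈ Finset.univ) => h1 i)
      rw [hsum] at h3
      simpa [Finset.sum_const, Finset.card_univ, nsmul_eq_mul] using h3
    by_contra hc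
    push_neg at hc
    nlinarith [h2]
  set Cs := ∑ v : Fin (n + 1), (-(a v)).toNat with hCs
  have hCs2 : 2 * Cs = ∑ i, (a i).natAbs := by
    have hP : ∑ v : Fin (n + 1), (a v).toNat = Cs := by
      have h3 : ((∑ v : Fin (n + 1), (a v).toNat : ℕ) : ℤ) - (Cs : ℤ)
          = ∑ v : Fin (n + 1), a v := by
        rw [hCs, Nat.cast_sum, Nat.cast_sum, ← Finset.sum_sub_distrib]
        exact Finset.sum_congr rfl (fun v _ => by omega)
      rw [hsum] at h3
      omega
    have h4 : ∑ i, (a i).natAbs = ∑ v : Fin (n + 1), ((a v).toNat + (-(a v)).toNat) :=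
      Finset.sum_congr rfl (fun v _ => by omega)
    rw [h4, Finset.sum_add_distrib, hP]
    omega
  rw [← Nat.card_coe_set_eq, KostkaHook.main_card hn ha0 hsum]
  by_cases hcase : (∑ i, (a i).natAbs) ≤ 2 * k
  · rw [if_pos hcase]
    have hCsk : Cs ≤ k := by omega
    have e1 : {M : Fin (n + 1) → ℕ //
          M 0 = 0 ∧ (∀ v : Fin (n + 1), 0 ≤ a v + (M v : ℤ)) ∧ ∑ v, M v = k}
        ≃ {g : Fin (n + 1) → ℕ // g 0 = 0 ∧ ∑ v, g v = k - Cs} :=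
      { toFun := fun M => ⟨fun v => M.1 v - (-(a v)).toNat, by
          have hle : ∀ v, (-(a v)).toNat ≤ M.1 v := fun v => by
            have := M.2.2.1 v; omega
          constructor
          · show M.1 0 - (-(a 0)).toNat = 0
            have h1 := M.2.1
            omega
          · show ∑ v, (M.1 v - (-(a v)).toNat) = k - Cs
            have hsplit : ∑ v, M.1 v = (∑ v, (M.1 v - (-(a v)).toNat)) + Cs := by
              rw [hCs, ← Finset.sum_add_distrib]
              exact Finset.sum_congr rfl fun v _ => by have := hle v; omega
            have h2 := M.2.2.2
            omega⟩
        invFun := fun g => ⟨fun v => g.1 v + (-(a v)).toNat, by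
          refine ⟨?_, fun v => by
            show 0 ≤ a v + ((g.1 v + (-(a v)).toNat : ℕ) : ℤ)
            omega, ?_⟩
          · show g.1 0 + (-(a 0)).toNat = 0
            have h0 := g.2.1
            omega
          · show ∑ v, (g.1 v + (-(a v)).toNat) = k
            rw [Finset.sum_add_distrib]
            have h2 := g.2.2
            omega⟩
        left_inv := fun M => Subtype.ext (funext fun v => by
          show M.1 v - (-(a v)).toNat + (-(a v)).toNat = M.1 v
          have := M.2.2.1 v; omega)
        right_inv := fun g => Subtype.ext (funext fun v => by
          show g.1 v + (-(a v)).toNat - (-(a v)).toNat = g.1 v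
          omega) }
    rw [Nat.card_congr e1, KostkaHook.nat_card_zero_fiber hn]
    rw [show (∑ i, (a i).natAbs) / 2 = Cs from by omega]
  · rw [if_neg hcase]
    have hemp : IsEmpty {M : Fin (n + 1) → ℕ //
        M 0 = 0 ∧ (∀ v : Fin (n + 1), 0 ≤ a v + (M v : ℤ)) ∧ ∑ v, M v = k} := by
      refine ⟨fun M => ?_⟩
      have hle : ∀ v : Fin (n + 1), (-(a v)).toNat ≤ M.1 v := fun v => by
        have := M.2.2.1 v; omega
      have h5 := Finset.sum_le_sum (fun v (_ : v ∈ Finset.univ) => hle v)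
      rw [M.2.2.2] at h5
      rw [← hCs] at h5
      omega
    exact Nat.card_of_isEmpty
end

section
/- Let n ≥ 1, let q be a positive integer, and let s ∈ ℤⁿ with gcd(q, s₁, …, sₙ) = 1. For k ≥ 0 let N(k) = #{(a₁, …, aₙ) ∈ ℤⁿ : a₁s₁ + ⋯ + aₙsₙ ≡ 0 (mod q) and |a₁| + ⋯ + |aₙ| = k}, and let θ(z) = Σ_{k≥0} N(k) z^k as a formal power series over ℤ. Then there exists a polynomial p(z) with integer coefficients of degree strictly less than (n+1)q such that (1 − z^q)^{n+1} · θ(z) = (1 − z) · p(z) as formal power series. -/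
open PowerSeries Finset

noncomputable def cnt (q : ℕ) {n : ℕ} (s : Fin n → ℤ) (u : ℤ) (k : ℕ) : ℕ :=
  ((Fintype.piFinset fun _ : Fin n => Finset.Icc (-(k:ℤ)) (k:ℤ)).filter
    (fun a => (q:ℤ) ∣ ((∑ i, a i * s i) - u) ∧ (∑ i, (a i).natAbs) = k)).card

lemma cnt_eq_ncard (q : ℕ) {n : ℕ} (s : Fin n → ℤ) (u : ℤ) (k : ℕ) :
    Set.ncard {a : Fin n → ℤ | (q:ℤ) ∣ ((∑ i, a i * s i) - u) ∧ (∑ i, (a i).natAbs) = k}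
      = cnt q s u k := by
  rw [cnt, ← Set.ncard_coe_finset]
  congr 1
  ext a
  simp only [Finset.coe_filter, Fintype.mem_piFinset, Finset.mem_Icc, Set.mem_setOf_eq]
  constructor
  · rintro ⟨h1, h2⟩
    refine ⟨fun i => ?_, h1, h2⟩
    have : (a i).natAbs ≤ k := h2 ▸ Finset.single_le_sum (f := fun i => (a i).natAbs)
      (fun _ _ => Nat.zero_le _) (Finset.mem_univ i)
    omega
  · rintro ⟨_, h1, h2⟩; exact ⟨h1, h2⟩

lemma sum_succ_eq (s : Fin (n+1) → ℤ) (a : Fin (n+1) → ℤ) :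
    (∑ i, a i * s i) = a 0 * s 0 + ∑ i, Fin.tail a i * s i.succ := by
  rw [Fin.sum_univ_succ]; rfl

lemma cnt_succ (q : ℕ) {n : ℕ} (s : Fin (n+1) → ℤ) (u : ℤ) (k : ℕ) :
    cnt q s u k = ∑ m ∈ Finset.Icc (-(k:ℤ)) (k:ℤ),
      cnt q (fun i => s i.succ) (u - m * s 0) (k - m.natAbs) := by
  classical
  simp only [cnt]
  rw [← Finset.card_sigma]
  apply Finset.card_bij' (fun a _ => (⟨a 0, Fin.tail a⟩ : Σ _ : ℤ, (Fin n → ℤ)))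
    (fun p _ => Fin.cons p.1 p.2)
  · intro a _; exact Fin.cons_self_tail a
  · rintro ⟨m, b⟩ _; simp [Fin.tail_cons]
  · -- forward membership
    intro a ha
    simp only [Finset.mem_filter, Fintype.mem_piFinset, Finset.mem_Icc] at ha
    obtain ⟨hbox, hdvd, hsum⟩ := ha
    have hsum' : (a 0).natAbs + ∑ i, (Fin.tail a i).natAbs = k := by
      rw [← hsum, Fin.sum_univ_succ]; rfl
    have h0 : (a 0).natAbs ≤ k := by omega
    simp only [Finset.mem_sigma, Finset.mem_Icc, Finset.mem_filter, Fintype.mem_piFinset,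
      Finset.mem_Icc]
    refine ⟨⟨(hbox 0).1, (hbox 0).2⟩, fun i => ?_, ?_, by omega⟩
    · have hi : (Fin.tail a i).natAbs ≤ k - (a 0).natAbs := by
        have := Finset.single_le_sum (f := fun i => (Fin.tail a i).natAbs)
          (fun _ _ => Nat.zero_le _) (Finset.mem_univ i)
        beta_reduce at this
        omega
      have hk : ((k - (a 0).natAbs : ℕ) : ℤ) = (k : ℤ) - (a 0).natAbs := by
        push_cast [h0]; omega
      omega
    · rw [show (∑ i, Fin.tail a i * s i.succ) - (u - a 0 * s 0)
          = (∑ i, a i * s i) - u by rw [sum_succ_eq s a]; ring]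
      exact hdvd
  · -- backward membership
    rintro ⟨m, b⟩ hp
    simp only [Finset.mem_sigma, Finset.mem_Icc, Finset.mem_filter, Fintype.mem_piFinset,
      Finset.mem_Icc] at hp
    obtain ⟨⟨hm1, hm2⟩, hbox, hdvd, hsum⟩ := hp
    have hmk : m.natAbs ≤ k := by omega
    simp only [Finset.mem_filter, Fintype.mem_piFinset, Finset.mem_Icc]
    refine ⟨?_, ?_, ?_⟩
    · intro i
      refine Fin.cases ?_ ?_ i
      · simpa using ⟨hm1, hm2⟩
      · intro j
        have := hbox j
        simp only [Fin.cons_succ]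
        have hk : ((k - m.natAbs : ℕ) : ℤ) ≤ (k : ℤ) := by
          exact_mod_cast Nat.sub_le k m.natAbs
        omega
    · rw [sum_succ_eq s (Fin.cons m b)]
      simp only [Fin.cons_zero, Fin.tail_cons]
      rw [show m * s 0 + (∑ i, b i * s i.succ) - u
          = (∑ i, b i * s i.succ) - (u - m * s 0) by ring]
      exact hdvd
    · rw [Fin.sum_univ_succ]
      simp only [Fin.cons_zero, Fin.cons_succ]
      omega

lemma sum_Icc_int_split {M : Type*} [AddCommMonoid M] (k : ℕ) (f : ℤ → M) :
    ∑ m ∈ Finset.Icc (-(k:ℤ)) (k:ℤ), f m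
      = (∑ j ∈ Finset.range (k+1), f (j:ℤ)) + ∑ j ∈ Finset.range k, f (-(j+1:ℤ)) := by
  classical
  have hunion : Finset.Icc (-(k:ℤ)) (k:ℤ)
      = (Finset.Icc (0:ℤ) (k:ℤ)) ∪ (Finset.Icc (-(k:ℤ)) (-1:ℤ)) := by
    ext x; simp only [Finset.mem_Icc, Finset.mem_union]; omega
  have hdisj : Disjoint (Finset.Icc (0:ℤ) (k:ℤ)) (Finset.Icc (-(k:ℤ)) (-1:ℤ)) := by
    rw [Finset.disjoint_left]; intro x hx hy
    simp only [Finset.mem_Icc] at hx hy; omega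
  rw [hunion, Finset.sum_union hdisj]
  congr 1
  · have himg : Finset.Icc (0:ℤ) (k:ℤ) = (Finset.range (k+1)).image (fun j : ℕ => (j:ℤ)) := by
      ext x
      simp only [Finset.mem_Icc, Finset.mem_image, Finset.mem_range]
      constructor
      · intro hx; exact ⟨x.toNat, by omega, by omega⟩
      · rintro ⟨j, hj, rfl⟩; omega
    rw [himg, Finset.sum_image (by intro a _ b _ h; beta_reduce at h; exact_mod_cast h)]
  · have himg : Finset.Icc (-(k:ℤ)) (-1:ℤ)
        = (Finset.range k).image (fun j : ℕ => -(j+1:ℤ)) := by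
      ext x
      simp only [Finset.mem_Icc, Finset.mem_image, Finset.mem_range]
      constructor
      · intro hx; exact ⟨(-x-1).toNat, by omega, by omega⟩
      · rintro ⟨j, hj, rfl⟩; omega
    rw [himg, Finset.sum_image (by intro a _ b _ h; beta_reduce at h; omega)]

lemma cnt_congr' (q : ℕ) {n : ℕ} (s : Fin n → ℤ) {u u' : ℤ} (h : (q:ℤ) ∣ (u - u')) (k : ℕ) :
    cnt q s u k = cnt q s u' k := by
  unfold cnt
  congr 1
  apply Finset.filter_congr
  intro a _
  have key : ∀ x : ℤ, (q:ℤ) ∣ (x - u) ↔ (q:ℤ) ∣ (x - u') := by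
    intro x
    constructor
    · intro hd; have h2 := dvd_add hd h; rwa [sub_add_sub_cancel] at h2
    · intro hd
      have h2 := dvd_sub hd h
      rwa [show x - u' - (u - u') = x - u by ring] at h2
  simp [key]

/-- θ for the congruence `∑ aᵢ sᵢ ≡ u (mod q)`. -/
noncomputable def theta (q : ℕ) {n : ℕ} (s : Fin n → ℤ) (u : ℤ) : PowerSeries ℤ :=
  PowerSeries.mk fun k => (cnt q s u k : ℤ)

noncomputable def Aser (q : ℕ) {n : ℕ} (s : Fin n → ℤ) (c u : ℤ) : PowerSeries ℤ :=
  PowerSeries.mk fun k => ∑ m ∈ Finset.range (k+1), (cnt q s (u - m * c) (k - m) : ℤ)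

lemma theta_succ (q : ℕ) {n : ℕ} (s : Fin (n+1) → ℤ) (u : ℤ) :
    theta q s u = Aser q (fun i => s i.succ) (s 0) u
      + PowerSeries.X * Aser q (fun i => s i.succ) (-(s 0)) (u + s 0) := by
  ext k
  rw [map_add, theta, Aser, Aser, PowerSeries.coeff_mk]
  rw [cnt_succ q s u k]
  push_cast [sum_Icc_int_split k (fun m => (cnt q (fun i => s i.succ) (u - m * s 0) (k - m.natAbs) : ℤ))]
  congr 1
  · rw [PowerSeries.coeff_mk]
    apply Finset.sum_congr rfl
    intro j _
    norm_num
  · cases k with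
    | zero => simp [PowerSeries.coeff_zero_X_mul]
    | succ k =>
      rw [PowerSeries.coeff_succ_X_mul, PowerSeries.coeff_mk]
      apply Finset.sum_congr rfl
      intro j hj
      simp only [Finset.mem_range] at hj
      have h1 : (-(j+1:ℤ)).natAbs = j + 1 := by omega
      have h2 : u - (-(j+1:ℤ)) * s 0 = u + s 0 - (j:ℤ) * (-(s 0)) := by ring
      have h3 : k + 1 - (j + 1) = k - j := by omega
      rw [h1, h2, h3]

lemma sum_range_ite_le {M : Type*} [AddCommMonoid M] (q k : ℕ) (g : ℕ → M) :
    ∑ m ∈ Finset.range q, (if m ≤ k then g m else 0)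
      = ∑ m ∈ Finset.range (min (k+1) q), g m := by
  rw [← Finset.sum_subset (Finset.range_subset_range.2 (min_le_right (k+1) q))
    (fun x _ hx => ?_)]
  · apply Finset.sum_congr rfl
    intro m hm
    simp only [Finset.mem_range] at hm
    have := min_le_left (k+1) q
    rw [if_pos (by omega)]
  · simp only [Finset.mem_range, not_lt] at hx ⊢
    rcases le_total (k+1) q with h | h
    · rw [min_eq_left h] at hx; rw [if_neg (by omega)]
    · rw [min_eq_right h] at hx
      rename_i hmem
      simp only [Finset.mem_range] at hmem
      omega

lemma one_sub_Xq_mul_Aser (q : ℕ) (hq : 0 < q) {n : ℕ} (s : Fin n → ℤ) (c u : ℤ) :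
    (1 - PowerSeries.X ^ q) * Aser q s c u
      = ∑ m ∈ Finset.range q, PowerSeries.X ^ m * theta q s (u - m * c) := by
  ext k
  rw [sub_mul, one_mul, map_sub, PowerSeries.coeff_X_pow_mul', map_sum]
  have hrhs : ∀ m ∈ Finset.range q,
      (PowerSeries.coeff k) (PowerSeries.X ^ m * theta q s (u - m * c))
        = if m ≤ k then (cnt q s (u - m * c) (k - m) : ℤ) else 0 := by
    intro m _
    rw [PowerSeries.coeff_X_pow_mul', theta]
    split_ifs <;> simp
  rw [Finset.sum_congr rfl hrhs, sum_range_ite_le]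
  simp only [Aser, PowerSeries.coeff_mk]
  by_cases hk : q ≤ k
  · rw [if_pos hk]
    have hmin : min (k+1) q = q := by omega
    rw [hmin]
    have hsplit : ∑ m ∈ Finset.range (k+1), (cnt q s (u - m * c) (k - m) : ℤ)
        = (∑ m ∈ Finset.range q, (cnt q s (u - m * c) (k - m) : ℤ))
          + ∑ m ∈ Finset.Ico q (k+1), (cnt q s (u - m * c) (k - m) : ℤ) := by
      rw [Finset.range_eq_Ico,
        ← Finset.sum_Ico_consecutive _ (Nat.zero_le q) (by omega : q ≤ k + 1),
        ← Finset.range_eq_Ico]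
    rw [hsplit]
    have htail : ∑ m ∈ Finset.Ico q (k+1), (cnt q s (u - m * c) (k - m) : ℤ)
        = ∑ m ∈ Finset.range (k - q + 1), (cnt q s (u - m * c) (k - q - m) : ℤ) := by
      rw [Finset.sum_Ico_eq_sum_range]
      have hrng : k + 1 - q = k - q + 1 := by omega
      rw [hrng]
      apply Finset.sum_congr rfl
      intro i _
      have hper : cnt q s (u - (q + i : ℕ) * c) (k - (q + i)) = cnt q s (u - i * c) (k - q - i) := by
        have h1 : k - (q + i) = k - q - i := by omega
        rw [h1]
        apply cnt_congr' q s
        have : (u - ((q + i : ℕ) : ℤ) * c) - (u - (i : ℤ) * c) = -((q : ℤ) * c) := by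
          push_cast; ring
        rw [this]
        exact dvd_neg.mpr ⟨c, rfl⟩
      rw [hper]
    rw [htail]
    ring
  · rw [if_neg hk]
    have hmin : min (k+1) q = k + 1 := by omega
    rw [hmin, sub_zero]

lemma cnt_zero_pos (q : ℕ) (s : Fin 0 → ℤ) (u : ℤ) (k : ℕ) (hk : k ≠ 0) :
    cnt q s u k = 0 := by
  rw [cnt, Finset.card_eq_zero, Finset.filter_false_of_mem]
  intro a _
  simp only [Finset.univ_eq_empty, Finset.sum_empty]
  tauto

lemma coePS_sum {ι : Type*} (t : Finset ι) (f : ι → Polynomial ℤ) :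
    ((∑ m ∈ t, f m : Polynomial ℤ) : PowerSeries ℤ)
      = ∑ m ∈ t, ((f m : Polynomial ℤ) : PowerSeries ℤ) := by
  rw [← Polynomial.coeToPowerSeries.ringHom_apply, map_sum]
  simp [Polynomial.coeToPowerSeries.ringHom_apply]

lemma key (q : ℕ) (hq : 0 < q) :
    ∀ (n : ℕ) (s : Fin n → ℤ) (u : ℤ),
    ∃ Q : Polynomial ℤ, Q.degree ≤ ((n * q : ℕ) : WithBot ℕ) ∧
      (1 - PowerSeries.X ^ q) ^ n * theta q s u = (Q : PowerSeries ℤ) := by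
  intro n
  induction n with
  | zero =>
    intro s u
    refine ⟨Polynomial.C ((cnt q s u 0 : ℤ)), le_trans Polynomial.degree_C_le (by simp), ?_⟩
    rw [pow_zero, one_mul]
    ext k
    rw [theta, PowerSeries.coeff_mk, Polynomial.coeff_coe, Polynomial.coeff_C]
    cases k with
    | zero => simp
    | succ k => simp [cnt_zero_pos q s u (k+1) (by omega)]
  | succ n IH =>
    intro s u
    set s' : Fin n → ℤ := fun i => s i.succ with hs'
    choose Q₁ hdeg₁ heq₁ using fun v : ℤ => IH s' v
    have hA := one_sub_Xq_mul_Aser q hq s' (s 0) u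
    have hB := one_sub_Xq_mul_Aser q hq s' (-(s 0)) (u + s 0)
    set QQ : Polynomial ℤ :=
      (∑ m ∈ Finset.range q, Polynomial.X ^ m * Q₁ (u - m * s 0))
        + Polynomial.X * ∑ m ∈ Finset.range q,
            Polynomial.X ^ m * Q₁ (u + s 0 - m * (-(s 0))) with hQQ
    refine ⟨QQ, ?_, ?_⟩
    · -- degree bound
      have hq1 : 1 ≤ (n+1) * q := Nat.mul_pos (Nat.succ_pos n) hq
      have hmul : (n+1) * q = n * q + q := by ring
      have hterm : ∀ (v : ℤ) (m : ℕ), m ∈ Finset.range q →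
          (Polynomial.X ^ m * Q₁ v).degree ≤ (((n+1) * q - 1 : ℕ) : WithBot ℕ) := by
        intro v m hm
        simp only [Finset.mem_range] at hm
        refine le_trans (Polynomial.degree_mul_le _ _) ?_
        refine le_trans (add_le_add (Polynomial.degree_X_pow_le m) (hdeg₁ v)) ?_
        rw [← Nat.cast_add]
        exact Nat.cast_le.mpr (by omega)
      have h1 : (∑ m ∈ Finset.range q, Polynomial.X ^ m * Q₁ (u - m * s 0)).degree
          ≤ (((n+1) * q - 1 : ℕ) : WithBot ℕ) :=
        le_trans (Polynomial.degree_sum_le _ _)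
          (Finset.sup_le fun m hm => hterm _ m hm)
      have h2 : (Polynomial.X * ∑ m ∈ Finset.range q,
            Polynomial.X ^ m * Q₁ (u + s 0 - m * (-(s 0)))).degree
          ≤ (((n+1) * q : ℕ) : WithBot ℕ) := by
        refine le_trans (Polynomial.degree_mul_le _ _) ?_
        refine le_trans (add_le_add Polynomial.degree_X_le
          (le_trans (Polynomial.degree_sum_le _ _)
            (Finset.sup_le fun m hm => hterm _ m hm))) ?_
        rw [← Nat.cast_one, ← Nat.cast_add]
        exact Nat.cast_le.mpr (by omega)
      refine le_trans (Polynomial.degree_add_le _ _) (max_le (le_trans h1 ?_) h2)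
      exact Nat.cast_le.mpr (by omega)
    · -- the identity
      have hstep : (1 - PowerSeries.X ^ q) ^ (n+1) * theta q s u
          = (∑ m ∈ Finset.range q, PowerSeries.X ^ m
              * ((1 - PowerSeries.X ^ q) ^ n * theta q s' (u - m * s 0)))
            + PowerSeries.X * ∑ m ∈ Finset.range q, PowerSeries.X ^ m
              * ((1 - PowerSeries.X ^ q) ^ n * theta q s' (u + s 0 - m * (-(s 0)))) := by
        have e1 : (1 - PowerSeries.X ^ q) ^ (n+1) * theta q s u
            = (1 - PowerSeries.X ^ q) ^ n
              * (((1 - PowerSeries.X ^ q) * Aser q s' (s 0) u)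
                + PowerSeries.X * ((1 - PowerSeries.X ^ q) * Aser q s' (-(s 0)) (u + s 0))) := by
          rw [theta_succ q s u]
          ring
        rw [e1, hA, hB]
        simp only [mul_add, Finset.mul_sum]
        congr 1
        · exact Finset.sum_congr rfl fun m _ => by ring
        · exact Finset.sum_congr rfl fun m _ => by ring
      rw [hstep]
      have hc : ∀ (v : ℤ) (m : ℕ),
          PowerSeries.X ^ m * ((1 - PowerSeries.X ^ q) ^ n * theta q s' v)
            = ((Polynomial.X ^ m * Q₁ v : Polynomial ℤ) : PowerSeries ℤ) := by
        intro v m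
        rw [heq₁ v, Polynomial.coe_mul, Polynomial.coe_pow, Polynomial.coe_X]
      rw [hQQ, Polynomial.coe_add, Polynomial.coe_mul, Polynomial.coe_X,
        coePS_sum, coePS_sum]
      congr 1
      · exact Finset.sum_congr rfl fun m _ => hc _ m
      · congr 1
        exact Finset.sum_congr rfl fun m _ => hc _ m

/-- **Ehrhart-type rationality of the generating theta function of a congruence lattice.**
Let `L_{q,s} = {a ∈ ℤⁿ : Σᵢ aᵢsᵢ ≡ 0 (mod q)}` with `gcd(q, s₁, …, sₙ) = 1`, let
`N(k) = #{a ∈ L_{q,s} : ‖a‖₁ = k}` and `θ(z) = Σ_k N(k) z^k`.  Then there is an integer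
polynomial `p` of degree `< (n+1)q` with `(1 - z^q)^{n+1} θ(z) = (1 - z) p(z)`. -/
theorem theta_congruence_lattice_rational
    (n : ℕ) (hn : 1 ≤ n) (q : ℕ) (hq : 0 < q) (s : Fin n → ℤ)
    (hs : Int.gcd (q : ℤ) (Finset.univ.gcd s) = 1)
    (N : ℕ → ℕ)
    (hN : ∀ k, N k = Set.ncard {a : Fin n → ℤ |
        (q : ℤ) ∣ (∑ i, a i * s i) ∧ (∑ i, (a i).natAbs) = k})
    (θ : PowerSeries ℤ) (hθ : θ = PowerSeries.mk fun k => (N k : ℤ)) :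
    ∃ p : Polynomial ℤ, p.degree < ((n + 1) * q : ℕ) ∧
      (1 - PowerSeries.X ^ q) ^ (n + 1) * θ = (1 - PowerSeries.X) * (p : PowerSeries ℤ) := by
  have hθ' : θ = theta q s 0 := by
    rw [hθ]
    ext k
    rw [PowerSeries.coeff_mk, theta, PowerSeries.coeff_mk, hN k]
    rw [← cnt_eq_ncard q s 0 k]
    simp [sub_zero]
  obtain ⟨Q, hdeg, hEq⟩ := key q hq n s 0
  set g : Polynomial ℤ := ∑ i ∈ Finset.range q, Polynomial.X ^ i with hg
  refine ⟨g * Q, ?_, ?_⟩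
  · have hgdeg : g.degree ≤ ((q - 1 : ℕ) : WithBot ℕ) :=
      le_trans (Polynomial.degree_sum_le _ _)
        (Finset.sup_le fun i hi => le_trans (Polynomial.degree_X_pow_le i)
          (Nat.cast_le.mpr (by simp only [Finset.mem_range] at hi; omega)))
    have hb : (g * Q).degree ≤ ((q - 1 + n * q : ℕ) : WithBot ℕ) := by
      refine le_trans (Polynomial.degree_mul_le _ _)
        (le_trans (add_le_add hgdeg hdeg) ?_)
      rw [← Nat.cast_add]
    refine lt_of_le_of_lt hb ?_
    have hm : (n+1) * q = n * q + q := by ring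
    exact Nat.cast_lt.mpr (by omega)
  · have hpoly : (1 - Polynomial.X) * (g * Q)
        = (1 - Polynomial.X ^ q) * Q := by
      have h := geom_sum_mul (Polynomial.X : Polynomial ℤ) q
      rw [hg]
      linear_combination (-Q) * h
    calc (1 - PowerSeries.X ^ q) ^ (n + 1) * θ
        = (1 - PowerSeries.X ^ q) * ((1 - PowerSeries.X ^ q) ^ n * θ) := by ring
      _ = (1 - PowerSeries.X ^ q) * (Q : PowerSeries ℤ) := by rw [hθ', hEq]
      _ = (((1 - Polynomial.X ^ q) * Q : Polynomial ℤ) : PowerSeries ℤ) := by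
          rw [Polynomial.coe_mul, Polynomial.coe_sub, Polynomial.coe_pow,
            Polynomial.coe_X, Polynomial.coe_one]
      _ = (((1 - Polynomial.X) * (g * Q) : Polynomial ℤ) : PowerSeries ℤ) := by rw [hpoly]
      _ = (1 - PowerSeries.X) * ((g * Q : Polynomial ℤ) : PowerSeries ℤ) := by
          rw [Polynomial.coe_mul, Polynomial.coe_sub, Polynomial.coe_X, Polynomial.coe_one]
end

section
/- Let q be a positive integer and let s = (s₁, s₂) ∈ ℤ² with gcd(q, s₁, s₂) = 1. Let L = {(a, b) ∈ ℤ² : a + b ≡ 0 (mod 2) and a s₁ + b s₂ ≡ 0 (mod q)}. For k ≥ 0 let N(k) = #{(a, b) ∈ L : max(|a|, |b|) = k}, and let θ(z) = Σ_{k≥0} N(k) z^k as a formal power series over ℤ. Then there exists a polynomial p(z) with integer coefficients of degree strictly less than 3q such that (1 − z^q)³ · θ(z) = (1 − z) · p(z) as formal power series. -/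
open Finset

namespace Sp2Aux

/-- the congruence condition defining the lattice. -/
def cnd (q : ℕ) (s₁ s₂ : ℤ) (p : ℤ × ℤ) : Prop :=
  (2 ∣ (p.1 + p.2)) ∧ ((q : ℤ) ∣ (p.1 * s₁ + p.2 * s₂))

instance (q : ℕ) (s₁ s₂ : ℤ) : DecidablePred (cnd q s₁ s₂) := fun _ => instDecidableAnd

/-- 1D counting function. -/
def ee (q : ℕ) (x k : ℤ) : ℤ := (k - x) / (2 * q) + (k + x) / (2 * q) + 1

/-- fundamental domain. -/
noncomputable def FF (q : ℕ) (s₁ s₂ : ℤ) : Finset (ℤ × ℤ) :=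
  (Finset.Icc 0 (2 * (q : ℤ) - 1) ×ˢ Finset.Icc 0 (2 * (q : ℤ) - 1)).filter (cnd q s₁ s₂)

noncomputable def Mf (q : ℕ) (s₁ s₂ : ℤ) (k : ℤ) : ℤ :=
  ∑ p ∈ FF q s₁ s₂, ee q p.1 k * ee q p.2 k

noncomputable def Gf (q : ℕ) (s₁ s₂ : ℤ) (k : ℤ) : ℤ :=
  ∑ p ∈ FF q s₁ s₂, (ee q p.1 k + ee q p.2 k)

noncomputable def Bf (q : ℕ) (s₁ s₂ : ℤ) (m : ℤ) : Finset (ℤ × ℤ) :=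
  (Finset.Icc (-m) m ×ˢ Finset.Icc (-m) m).filter (cnd q s₁ s₂)

noncomputable def Sph (q : ℕ) (s₁ s₂ : ℤ) (j : ℕ) : Finset (ℤ × ℤ) :=
  (Bf q s₁ s₂ j).filter (fun p => max p.1.natAbs p.2.natAbs = j)

variable {q : ℕ} {s₁ s₂ : ℤ}

lemma ee_add_q (hq : 0 < q) (x k : ℤ) : ee q x (k + q) = ee q (x + q) k + 1 := by
  have h2q : (2 * q : ℤ) ≠ 0 := by positivity
  unfold ee
  rw [show k + q - x = (k - (x + q)) + 1 * (2 * q) by ring,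
    show k + q + x = k + (x + q) by ring,
    Int.add_mul_ediv_right _ _ h2q]
  ring

lemma ee_mod (hq : 0 < q) (x k : ℤ) : ee q (x % (2 * q)) k = ee q x k := by
  have h2q : (2 * q : ℤ) ≠ 0 := by positivity
  unfold ee
  rw [Int.emod_def x (2 * q),
    show k - (x - 2 * q * (x / (2 * q))) = (k - x) + (x / (2 * q)) * (2 * q) by ring,
    show k + (x - 2 * q * (x / (2 * q))) = (k + x) + (-(x / (2 * q))) * (2 * q) by ring,
    Int.add_mul_ediv_right _ _ h2q, Int.add_mul_ediv_right _ _ h2q]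
  ring

/-- 1D counting lemma. -/
lemma card_filter_emod (hq : 0 < q) {x m : ℤ} (hx0 : 0 ≤ x) (hxQ : x < 2 * q)
    (hm : 0 ≤ m) :
    (((Finset.Icc (-m) m).filter (fun t => t % (2 * q) = x)).card : ℤ) = ee q x m := by
  have hQ : (0 : ℤ) < 2 * q := by positivity
  have hQ' : (2 * q : ℤ) ≠ 0 := hQ.ne'
  set A : ℤ := -((m + x) / (2 * q)) with hA
  set B : ℤ := (m - x) / (2 * q) with hB
  have hcard : ((Finset.Icc (-m) m).filter (fun t => t % (2 * q) = x)).card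
      = (Finset.Icc A B).card := by
    apply Finset.card_bij' (fun t _ => (t - x) / (2 * q)) (fun c _ => x + 2 * q * c)
    · intro t ht
      simp only [Finset.mem_filter, Finset.mem_Icc] at ht
      obtain ⟨⟨h1, h2⟩, h3⟩ := ht
      have hdvd : (2 * q : ℤ) ∣ (t - x) := by
        have : t % (2 * q) = x % (2 * q) := by
          rw [h3, Int.emod_eq_of_lt hx0 hxQ]
        rw [Int.emod_eq_emod_iff_emod_sub_eq_zero] at this
        exact Int.dvd_of_emod_eq_zero this
      simp only [Finset.mem_Icc]
      constructor
      · rw [hA, neg_le]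
        have : -((t - x) / (2 * q)) = (x - t) / (2 * q) := by
          obtain ⟨c, hc⟩ := hdvd
          have hxt : x - t = 2 * q * (-c) := by linarith
          rw [hc, hxt, Int.mul_ediv_cancel_left _ hQ', Int.mul_ediv_cancel_left _ hQ']
        rw [this]
        exact Int.ediv_le_ediv hQ (by linarith)
      · exact Int.ediv_le_ediv hQ (by linarith)
    · intro c hc
      simp only [Finset.mem_Icc] at hc
      obtain ⟨h1, h2⟩ := hc
      simp only [Finset.mem_filter, Finset.mem_Icc]
      refine ⟨⟨?_, ?_⟩, ?_⟩
      · have : 2 * (q : ℤ) * A ≥ -(m + x) := by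
          rw [hA, show 2 * (q:ℤ) * -((m + x) / (2 * q)) = -((m+x) / (2*q) * (2*q)) by ring]
          have := Int.ediv_mul_le (m + x) hQ'
          linarith
        nlinarith [mul_le_mul_of_nonneg_left h1 (le_of_lt hQ)]
      · have : 2 * (q : ℤ) * B ≤ m - x := by
          rw [hB, mul_comm]
          exact Int.ediv_mul_le _ hQ'
        nlinarith [mul_le_mul_of_nonneg_left h2 (le_of_lt hQ)]
      · rw [mul_comm (2 * (q:ℤ)) c, Int.add_mul_emod_self_right,
          Int.emod_eq_of_lt hx0 hxQ]
    · intro t ht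
      simp only [Finset.mem_filter, Finset.mem_Icc] at ht
      have hdvd : (2 * q : ℤ) ∣ (t - x) := by
        have : t % (2 * q) = x % (2 * q) := by
          rw [ht.2, Int.emod_eq_of_lt hx0 hxQ]
        rw [Int.emod_eq_emod_iff_emod_sub_eq_zero] at this
        exact Int.dvd_of_emod_eq_zero this
      obtain ⟨c, hc⟩ := hdvd
      rw [hc, Int.mul_ediv_cancel_left _ hQ']
      linarith
    · intro c _
      rw [show x + 2 * (q:ℤ) * c - x = 2 * q * c by ring, Int.mul_ediv_cancel_left _ hQ']
  rw [hcard, Int.card_Icc]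
  have hAle : A ≤ 0 := by
    rw [hA, neg_nonpos]
    exact Int.ediv_nonneg (by linarith) (le_of_lt hQ)
  have hBge : -1 ≤ B := by
    rw [hB]
    have h1 : ((1 : ℤ) - 2 * q) / (2 * q) = -1 := by
      rw [show (1 : ℤ) - 2 * q = 1 + (-1) * (2 * q) by ring,
        Int.add_mul_ediv_right _ _ hQ', Int.ediv_eq_zero_of_lt (by norm_num) (by linarith)]
      norm_num
    calc (-1 : ℤ) = (1 - 2 * q) / (2 * q) := h1.symm
      _ ≤ (m - x) / (2 * q) := Int.ediv_le_ediv hQ (by linarith)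
  rw [Int.toNat_of_nonneg (by linarith), hA, hB]
  unfold ee
  ring

lemma cnd_mod_pair (hq : 0 < q) (a b : ℤ) :
    cnd q s₁ s₂ (a % (2 * q), b % (2 * q)) ↔ cnd q s₁ s₂ (a, b) := by
  have h2 : (2 : ℤ) ∣ 2 * q := ⟨q, rfl⟩
  have hqd : (q : ℤ) ∣ 2 * q := ⟨2, by ring⟩
  unfold cnd
  have e2 : (a % (2 * q) + b % (2 * q)) % 2 = (a + b) % 2 := by
    conv_rhs => rw [Int.add_emod]
    rw [Int.add_emod, Int.emod_emod_of_dvd a h2, Int.emod_emod_of_dvd b h2]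
  have eq' : (a % (2 * q) * s₁ + b % (2 * q) * s₂) % q = (a * s₁ + b * s₂) % q := by
    have h1 : a % (2 * q) % q = a % q := Int.emod_emod_of_dvd a hqd
    have h1' : a % (2 * q) ≡ a [ZMOD q] := h1
    have h2' : b % (2 * q) ≡ b [ZMOD q] := Int.emod_emod_of_dvd b hqd
    exact Int.ModEq.add (h1'.mul_right s₁) (h2'.mul_right s₂)
  constructor <;> rintro ⟨hpar, hdvd⟩ <;> constructor <;>
    simp only [Int.dvd_iff_emod_eq_zero] at * <;> simp only [e2, eq'] at * <;> assumption

lemma cnd_shift (hq : 0 < q) (a b : ℤ) :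
    cnd q s₁ s₂ (a + q, b + q) ↔ cnd q s₁ s₂ (a, b) := by
  unfold cnd
  have h1 : a + q + (b + q) = 2 * q + (a + b) := by ring
  have h2 : (a + q) * s₁ + (b + q) * s₂ = q * (s₁ + s₂) + (a * s₁ + b * s₂) := by ring
  rw [h1, h2, Int.dvd_add_right ⟨(q : ℤ), by ring⟩, Int.dvd_add_right ⟨s₁ + s₂, rfl⟩]

/-- the involution on the fundamental domain. -/
def sig (q : ℕ) (p : ℤ × ℤ) : ℤ × ℤ := ((p.1 + q) % (2 * q), (p.2 + q) % (2 * q))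

lemma sig_mem (hq : 0 < q) {p : ℤ × ℤ} (hp : p ∈ FF q s₁ s₂) :
    sig q p ∈ FF q s₁ s₂ := by
  have hQ : (0 : ℤ) < 2 * q := by positivity
  simp only [FF, sig, Finset.mem_filter, Finset.mem_product, Finset.mem_Icc] at hp ⊢
  obtain ⟨⟨⟨_, _⟩, _, _⟩, hc⟩ := hp
  refine ⟨⟨⟨Int.emod_nonneg _ hQ.ne', by have := Int.emod_lt_of_pos (p.1 + q) hQ; linarith⟩,
    Int.emod_nonneg _ hQ.ne', by have := Int.emod_lt_of_pos (p.2 + q) hQ; linarith⟩, ?_⟩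
  exact (cnd_mod_pair hq _ _).mpr ((cnd_shift hq p.1 p.2).mpr hc)

lemma sig_sig (hq : 0 < q) {p : ℤ × ℤ} (hp : p ∈ FF q s₁ s₂) : sig q (sig q p) = p := by
  have hQ : (0 : ℤ) < 2 * q := by positivity
  simp only [FF, Finset.mem_filter, Finset.mem_product, Finset.mem_Icc] at hp
  obtain ⟨⟨⟨h1, h2⟩, h3, h4⟩, _⟩ := hp
  have key : ∀ x : ℤ, 0 ≤ x → x ≤ 2 * q - 1 → ((x + q) % (2 * q) + q) % (2 * q) = x := by
    intro x hx0 hx1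
    rw [Int.add_emod ((x + q) % (2 * q)) q, Int.emod_emod_of_dvd _ dvd_rfl,
      ← Int.add_emod, show x + q + q = x + 2 * q * 1 by ring,
      Int.add_mul_emod_self_left, Int.emod_eq_of_lt hx0 (by linarith)]
  simp only [sig]
  exact Prod.ext (key p.1 h1 h2) (key p.2 h3 h4)

lemma sum_sig (hq : 0 < q) (f : ℤ × ℤ → ℤ) :
    ∑ p ∈ FF q s₁ s₂, f (sig q p) = ∑ p ∈ FF q s₁ s₂, f p := by
  apply Finset.sum_nbij' (fun p => sig q p) (fun p => sig q p)
  · exact fun a ha => sig_mem hq ha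
  · exact fun a ha => sig_mem hq ha
  · exact fun a ha => sig_sig hq ha
  · exact fun a ha => sig_sig hq ha
  · intro a ha
    rfl

lemma ee_step (hq : 0 < q) {p : ℤ × ℤ} (k : ℤ) :
    ee q p.1 (k + q) = ee q (sig q p).1 k + 1 ∧
      ee q p.2 (k + q) = ee q (sig q p).2 k + 1 := by
  constructor <;> rw [ee_add_q hq _ k] <;> simp only [sig] <;> rw [ee_mod hq]

lemma Mf_step (hq : 0 < q) (k : ℤ) :
    Mf q s₁ s₂ (k + q) = Mf q s₁ s₂ k + Gf q s₁ s₂ k + (FF q s₁ s₂).card := by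
  have h1 : Mf q s₁ s₂ (k + q)
      = ∑ p ∈ FF q s₁ s₂, ((ee q (sig q p).1 k + 1) * (ee q (sig q p).2 k + 1)) := by
    unfold Mf
    refine Finset.sum_congr rfl fun p hp => ?_
    rw [(ee_step hq k).1, (ee_step hq k).2]
  rw [h1, sum_sig hq (fun p => (ee q p.1 k + 1) * (ee q p.2 k + 1))]
  calc ∑ p ∈ FF q s₁ s₂, (ee q p.1 k + 1) * (ee q p.2 k + 1)
      = ∑ p ∈ FF q s₁ s₂, (ee q p.1 k * ee q p.2 k + (ee q p.1 k + ee q p.2 k) + 1) :=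
        Finset.sum_congr rfl fun p _ => by ring
    _ = Mf q s₁ s₂ k + Gf q s₁ s₂ k + (FF q s₁ s₂).card := by
        rw [Finset.sum_add_distrib, Finset.sum_add_distrib, Finset.sum_const]
        simp only [nsmul_eq_mul, mul_one, Mf, Gf]

lemma Gf_step (hq : 0 < q) (k : ℤ) :
    Gf q s₁ s₂ (k + q) = Gf q s₁ s₂ k + 2 * (FF q s₁ s₂).card := by
  have h1 : Gf q s₁ s₂ (k + q)
      = ∑ p ∈ FF q s₁ s₂, ((ee q (sig q p).1 k + 1) + (ee q (sig q p).2 k + 1)) := by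
    unfold Gf
    refine Finset.sum_congr rfl fun p hp => ?_
    rw [(ee_step hq k).1, (ee_step hq k).2]
  rw [h1, sum_sig hq (fun p => (ee q p.1 k + 1) + (ee q p.2 k + 1))]
  calc ∑ p ∈ FF q s₁ s₂, (ee q p.1 k + 1 + (ee q p.2 k + 1))
      = ∑ p ∈ FF q s₁ s₂, ((ee q p.1 k + ee q p.2 k) + 2) :=
        Finset.sum_congr rfl fun p _ => by ring
    _ = Gf q s₁ s₂ k + 2 * (FF q s₁ s₂).card := by
        rw [Finset.sum_add_distrib, Finset.sum_const]
        simp only [nsmul_eq_mul, Gf]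
        ring

lemma Mf_third (hq : 0 < q) (k : ℤ) :
    Mf q s₁ s₂ (k + 3 * q) - 3 * Mf q s₁ s₂ (k + 2 * q) + 3 * Mf q s₁ s₂ (k + q)
      - Mf q s₁ s₂ k = 0 := by
  have e1 := Mf_step (s₁ := s₁) (s₂ := s₂) hq k
  have e2 := Mf_step (s₁ := s₁) (s₂ := s₂) hq (k + q)
  have e3 := Mf_step (s₁ := s₁) (s₂ := s₂) hq (k + 2 * q)
  have g1 := Gf_step (s₁ := s₁) (s₂ := s₂) hq k
  have g2 := Gf_step (s₁ := s₁) (s₂ := s₂) hq (k + q)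
  rw [show k + q + q = k + 2 * q by ring] at e2 g2
  rw [show k + 2 * q + q = k + 3 * q by ring] at e3
  linarith

lemma Bf_neg (m : ℤ) (hm : m < 0) : Bf q s₁ s₂ m = ∅ := by
  unfold Bf
  rw [Finset.Icc_eq_empty (by omega), Finset.empty_product, Finset.filter_empty]

/-- 2D counting lemma. -/
lemma Bf_card (hq : 0 < q) {m : ℤ} (hm : 0 ≤ m) :
    ((Bf q s₁ s₂ m).card : ℤ) = Mf q s₁ s₂ m := by
  have hQ : (0 : ℤ) < 2 * q := by positivity
  have hcard : (Bf q s₁ s₂ m).card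
      = ∑ r ∈ FF q s₁ s₂, ((Bf q s₁ s₂ m).filter
          (fun p => (p.1 % (2 * (q : ℤ)), p.2 % (2 * (q : ℤ))) = r)).card := by
    apply Finset.card_eq_sum_card_fiberwise
    intro p hp
    simp only [Finset.mem_coe, Bf, Finset.mem_filter, Finset.mem_product, Finset.mem_Icc] at hp
    simp only [Finset.mem_coe, FF, Finset.mem_filter, Finset.mem_product, Finset.mem_Icc]
    refine ⟨⟨⟨Int.emod_nonneg _ hQ.ne', by have := Int.emod_lt_of_pos p.1 hQ; linarith⟩,
      Int.emod_nonneg _ hQ.ne', by have := Int.emod_lt_of_pos p.2 hQ; linarith⟩, ?_⟩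
    exact (cnd_mod_pair hq p.1 p.2).mpr hp.2
  have hfib : ∀ r ∈ FF q s₁ s₂,
      ((((Bf q s₁ s₂ m).filter
          (fun p => (p.1 % (2 * (q : ℤ)), p.2 % (2 * (q : ℤ))) = r)).card : ℤ))
        = ee q r.1 m * ee q r.2 m := by
    intro r hr
    simp only [FF, Finset.mem_filter, Finset.mem_product, Finset.mem_Icc] at hr
    obtain ⟨⟨⟨hr1, hr2⟩, hr3, hr4⟩, hrc⟩ := hr
    have hset : (Bf q s₁ s₂ m).filter
          (fun p => (p.1 % (2 * (q : ℤ)), p.2 % (2 * (q : ℤ))) = r)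
        = ((Finset.Icc (-m) m).filter (fun t => t % (2 * (q : ℤ)) = r.1)) ×ˢ
          ((Finset.Icc (-m) m).filter (fun t => t % (2 * (q : ℤ)) = r.2)) := by
      ext p
      simp only [Bf, Finset.mem_filter, Finset.mem_product, Finset.mem_Icc, Prod.ext_iff]
      constructor
      · rintro ⟨⟨⟨ha, hb⟩, hc⟩, h1, h2⟩
        exact ⟨⟨ha, h1⟩, hb, h2⟩
      · rintro ⟨⟨ha, h1⟩, hb, h2⟩
        refine ⟨⟨⟨ha, hb⟩, ?_⟩, h1, h2⟩
        have : cnd q s₁ s₂ (p.1 % (2 * (q : ℤ)), p.2 % (2 * (q : ℤ))) := by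
          rw [h1, h2]
          exact hrc
        exact (cnd_mod_pair hq p.1 p.2).mp this
    rw [hset, Finset.card_product]
    push_cast
    rw [card_filter_emod hq hr1 (by linarith) hm, card_filter_emod hq hr3 (by linarith) hm]
  rw [hcard]
  push_cast
  rw [Finset.sum_congr rfl hfib, Mf]

/-- decomposition of the ball count into sphere counts. -/
lemma Bf_sum_sph (m : ℕ) :
    (Bf q s₁ s₂ (m : ℤ)).card = ∑ j ∈ Finset.range (m + 1), (Sph q s₁ s₂ j).card := by
  have h := Finset.card_eq_sum_card_fiberwise
    (f := fun p : ℤ × ℤ => max p.1.natAbs p.2.natAbs)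
    (s := Bf q s₁ s₂ (m : ℤ)) (t := Finset.range (m + 1)) ?_
  · rw [h]
    apply Finset.sum_congr rfl
    intro j hj
    simp only [Finset.mem_range] at hj
    congr 1
    ext p
    simp only [Sph, Bf, Finset.mem_filter, Finset.mem_product, Finset.mem_Icc]
    constructor
    · rintro ⟨⟨⟨⟨h1, h2⟩, h3, h4⟩, hc⟩, h5⟩
      refine ⟨⟨⟨⟨by omega, by omega⟩, by omega, by omega⟩, hc⟩, h5⟩
    · rintro ⟨⟨⟨⟨h1, h2⟩, h3, h4⟩, hc⟩, h5⟩
      refine ⟨⟨⟨⟨by omega, by omega⟩, by omega, by omega⟩, hc⟩, h5⟩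
  · intro p hp
    simp only [Finset.mem_coe, Bf, Finset.mem_filter, Finset.mem_product, Finset.mem_Icc] at hp
    obtain ⟨⟨⟨h1, h2⟩, h3, h4⟩, _⟩ := hp
    simp only [Finset.mem_coe, Finset.mem_range]
    omega

lemma coeff_Xpow_mul (f : PowerSeries ℤ) (a n : ℕ) :
    PowerSeries.coeff n (PowerSeries.X ^ a * f)
      = if a ≤ n then PowerSeries.coeff (n - a) f else 0 := by
  by_cases h : a ≤ n
  · have h2 := PowerSeries.coeff_X_pow_mul f a (n - a)
    rw [show n - a + a = n by omega] at h2
    rw [if_pos h, h2]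
  · rw [if_neg h, PowerSeries.coeff_mul]
    apply Finset.sum_eq_zero
    rintro ⟨i, j⟩ hij
    rw [Finset.HasAntidiagonal.mem_antidiagonal] at hij
    rw [PowerSeries.coeff_X_pow, if_neg (by omega), zero_mul]

end Sp2Aux

/-- **Ehrhart-type rationality of the theta function for `P¹(ℍ)` (group `Sp(2)`).**
Let `L = D₂ ∩ L_{q,s} = {(a,b) ∈ ℤ² : a + b ≡ 0 (mod 2), a s₁ + b s₂ ≡ 0 (mod q)}` with
`gcd(q, s₁, s₂) = 1`, let `N(k) = #{(a,b) ∈ L : max(|a|,|b|) = k}` and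
`θ(z) = Σ_k N(k) z^k`.  Then there is an integer polynomial `p` of degree `< 3q` with
`(1 - z^q)³ θ(z) = (1 - z) p(z)`. -/
theorem theta_congruence_lattice_Sp2_rational
    (q : ℕ) (hq : 0 < q) (s₁ s₂ : ℤ)
    (hs : Nat.gcd q (Int.gcd s₁ s₂) = 1)
    (N : ℕ → ℕ)
    (hN : ∀ k, N k = Set.ncard {p : ℤ × ℤ |
        (2 ∣ (p.1 + p.2)) ∧ ((q : ℤ) ∣ (p.1 * s₁ + p.2 * s₂)) ∧
          max p.1.natAbs p.2.natAbs = k})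
    (θ : PowerSeries ℤ) (hθ : θ = PowerSeries.mk fun k => (N k : ℤ)) :
    ∃ p : Polynomial ℤ, p.degree < (3 * q : ℕ) ∧
      (1 - PowerSeries.X ^ q) ^ 3 * θ = (1 - PowerSeries.X) * (p : PowerSeries ℤ) := by
  classical
  set Msz : ℤ → ℤ := fun n => ((Sp2Aux.Bf q s₁ s₂ n).card : ℤ) with hMsz
  set Sz : ℤ → ℤ := fun n =>
    Msz n - 3 * Msz (n - q) + 3 * Msz (n - 2 * q) - Msz (n - 3 * q) with hSz
  have hNS : ∀ j : ℕ, (N j : ℤ) = ((Sp2Aux.Sph q s₁ s₂ j).card : ℤ) := by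
    intro j
    rw [hN j]
    have hset : {p : ℤ × ℤ |
        (2 ∣ (p.1 + p.2)) ∧ ((q : ℤ) ∣ (p.1 * s₁ + p.2 * s₂)) ∧
          max p.1.natAbs p.2.natAbs = j} = ↑(Sp2Aux.Sph q s₁ s₂ j) := by
      ext p
      simp only [Sp2Aux.Sph, Sp2Aux.Bf, Sp2Aux.cnd, Finset.coe_filter, Finset.mem_filter,
        Finset.mem_product, Finset.mem_Icc, Set.mem_setOf_eq]
      constructor
      · rintro ⟨h1, h2, h3⟩
        exact ⟨⟨⟨⟨by omega, by omega⟩, by omega, by omega⟩, h1, h2⟩, h3⟩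
      · rintro ⟨⟨_, h1, h2⟩, h3⟩
        exact ⟨h1, h2, h3⟩
    rw [hset, Set.ncard_coe_finset]
  have hMs_neg : ∀ n : ℤ, n < 0 → Msz n = 0 := by
    intro n hn
    simp [hMsz, Sp2Aux.Bf_neg n hn]
  have hMs_sum : ∀ n : ℕ, Msz n = ∑ j ∈ Finset.range (n + 1), (N j : ℤ) := by
    intro n
    rw [hMsz]
    dsimp only
    rw [Sp2Aux.Bf_sum_sph]
    push_cast
    exact Finset.sum_congr rfl fun j _ => (hNS j).symm
  have hNz : ∀ n : ℕ, (N n : ℤ) = Msz n - Msz ((n : ℤ) - 1) := by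
    intro n
    cases n with
    | zero =>
      rw [show ((0 : ℕ) : ℤ) - 1 = -1 by norm_num, hMs_sum 0, hMs_neg (-1) (by norm_num)]
      simp
    | succ k =>
      have h1 : ((k : ℤ) + 1) - 1 = (k : ℤ) := by ring
      push_cast
      rw [h1, show ((k : ℤ) + 1) = ((k + 1 : ℕ) : ℤ) by push_cast; ring,
        hMs_sum (k + 1), hMs_sum k, Finset.sum_range_succ]
      ring
  have hSzvan : ∀ n : ℤ, 3 * (q : ℤ) ≤ n → Sz n = 0 := by
    intro n hn
    have hq' : (0 : ℤ) < q := by exact_mod_cast hq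
    have e := Sp2Aux.Mf_third (q := q) (s₁ := s₁) (s₂ := s₂) hq (n - 3 * q)
    rw [show n - 3 * (q : ℤ) + 3 * q = n by ring, show n - 3 * (q : ℤ) + 2 * q = n - q by ring,
      show n - 3 * (q : ℤ) + q = n - 2 * q by ring] at e
    simp only [hSz, hMsz]
    rw [Sp2Aux.Bf_card hq (by linarith : (0 : ℤ) ≤ n),
      Sp2Aux.Bf_card hq (by linarith : (0 : ℤ) ≤ n - q),
      Sp2Aux.Bf_card hq (by linarith : (0 : ℤ) ≤ n - 2 * q),
      Sp2Aux.Bf_card hq (by linarith : (0 : ℤ) ≤ n - 3 * q)]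
    linarith
  set Msr : PowerSeries ℤ := PowerSeries.mk fun n => Msz n with hMsr
  have hterm : ∀ (a n : ℕ),
      PowerSeries.coeff n (PowerSeries.X ^ a * Msr) = Msz ((n : ℤ) - a) := by
    intro a n
    rw [Sp2Aux.coeff_Xpow_mul]
    split
    · simp only [hMsr, PowerSeries.coeff_mk]
      congr 1
      omega
    · rw [hMs_neg _ (by omega)]
  have hθM : θ = (1 - PowerSeries.X) * Msr := by
    rw [hθ]
    ext n
    rw [sub_mul, one_mul, map_sub]
    cases n with
    | zero =>
      rw [PowerSeries.coeff_zero_X_mul, PowerSeries.coeff_mk]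
      simp only [hMsr, PowerSeries.coeff_mk]
      have h0 := hNz 0
      rw [show ((0 : ℕ) : ℤ) - 1 = -1 by norm_num, hMs_neg (-1) (by norm_num)] at h0
      simpa using h0
    | succ k =>
      rw [PowerSeries.coeff_succ_X_mul, PowerSeries.coeff_mk]
      simp only [hMsr, PowerSeries.coeff_mk]
      have := hNz (k + 1)
      rw [show ((k + 1 : ℕ) : ℤ) - 1 = (k : ℤ) by push_cast; ring] at this
      rw [this]
  set P : Polynomial ℤ := ∑ n ∈ Finset.range (3 * q), Polynomial.C (Sz n) * Polynomial.X ^ n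
    with hP
  have hPcoeff : ∀ n : ℕ, P.coeff n = if n < 3 * q then Sz n else 0 := by
    intro n
    rw [hP, Polynomial.finset_sum_coeff]
    simp only [Polynomial.coeff_C_mul, Polynomial.coeff_X_pow, mul_ite, mul_one, mul_zero]
    rw [Finset.sum_ite_eq (Finset.range (3 * q)) n (fun k => Sz k)]
    simp [Finset.mem_range]
  have hPdeg : P.degree < (3 * q : ℕ) := by
    apply lt_of_le_of_lt (Polynomial.degree_sum_le _ _)
    rw [Finset.sup_lt_iff (show (⊥ : WithBot ℕ) < (3 * q : ℕ) from WithBot.bot_lt_coe _)]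
    intro b hb
    apply lt_of_le_of_lt (Polynomial.degree_C_mul_X_pow_le _ _)
    exact_mod_cast Finset.mem_range.mp hb
  have hMsrP : (1 - PowerSeries.X ^ q) ^ 3 * Msr = (P : PowerSeries ℤ) := by
    have hexp : (1 - PowerSeries.X ^ q : PowerSeries ℤ) ^ 3 * Msr
        = Msr - (PowerSeries.X ^ q * Msr + PowerSeries.X ^ q * Msr + PowerSeries.X ^ q * Msr)
          + (PowerSeries.X ^ (2 * q) * Msr + PowerSeries.X ^ (2 * q) * Msr
            + PowerSeries.X ^ (2 * q) * Msr) - PowerSeries.X ^ (3 * q) * Msr := by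
      rw [show 2 * q = q + q by ring, show 3 * q = q + q + q by ring, pow_add, pow_add,
        pow_add]
      ring
    ext n
    rw [hexp, Polynomial.coeff_coe, hPcoeff n, map_sub, map_add, map_sub, map_add, map_add,
      map_add, map_add, hterm, hterm, hterm]
    simp only [hMsr, PowerSeries.coeff_mk]
    push_cast
    split
    · simp only [hSz]
      ring
    · have := hSzvan n (by push_cast; omega)
      simp only [hSz] at this
      linarith
  refine ⟨P, hPdeg, ?_⟩
  calc (1 - PowerSeries.X ^ q) ^ 3 * θ
      = (1 - PowerSeries.X) * ((1 - PowerSeries.X ^ q) ^ 3 * Msr) := by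
        rw [hθM]; ring
    _ = (1 - PowerSeries.X) * (P : PowerSeries ℤ) := by rw [hMsrP]
end

section
/- Let n ≥ 1, let q be a positive integer, and let s ∈ ℤⁿ with gcd(q, s₁, …, sₙ) = 1. For k ≥ 0 let N(k) = #{(a₁, …, aₙ) ∈ ℤⁿ : a₁s₁ + ⋯ + aₙsₙ ≡ 0 (mod q) and |a₁| + ⋯ + |aₙ| = k}, and let ξ_q = exp(2πi/q). Then for every complex number z with |z| < 1, the series Σ_{k≥0} N(k) z^k converges and equals ((1 − z²)ⁿ / q) · Σ_{l=0}^{q−1} ∏_{j=1}^{n} 1 / ((z − ξ_q^{l s_j})(z − ξ_q^{−l s_j})). -/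
open Complex Finset

lemma zpow_finset_sum' {ι : Type*} (x : ℂ) (hx : x ≠ 0) (t : Finset ι) (m : ι → ℤ) :
    ∏ j ∈ t, x ^ m j = x ^ (∑ j ∈ t, m j) := by
  induction t using Finset.cons_induction with
  | empty => simp
  | cons a t ha ih => rw [Finset.prod_cons, Finset.sum_cons, ih, zpow_add₀ hx]

set_option maxHeartbeats 1000000 in
lemma hasSum_geom_int (z x : ℂ) (hz : ‖z‖ < 1) (hx : ‖x‖ = 1) :
    HasSum (fun a : ℤ => z ^ a.natAbs * x ^ a)
      ((1 - z ^ 2) / ((1 - z * x) * (1 - z * x⁻¹))) := by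
  have hx0 : x ≠ 0 := by
    intro h; rw [h, norm_zero] at hx; exact one_ne_zero hx.symm
  have hzx : ‖z * x‖ < 1 := by rw [norm_mul, hx, mul_one]; exact hz
  have hzxi : ‖z * x⁻¹‖ < 1 := by
    rw [norm_mul, norm_inv, hx, inv_one, mul_one]; exact hz
  have h1 : HasSum (fun n : ℕ => (z * x) ^ n) (1 - z * x)⁻¹ :=
    hasSum_geometric_of_norm_lt_one hzx
  have h2 : HasSum (fun n : ℕ => (z * x⁻¹) * (z * x⁻¹) ^ n)
      ((z * x⁻¹) * (1 - z * x⁻¹)⁻¹) :=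
    (hasSum_geometric_of_norm_lt_one hzxi).mul_left _
  have h1' : HasSum (fun n : ℕ => z ^ (Int.natAbs n) * x ^ (n : ℤ)) (1 - z * x)⁻¹ := by
    refine h1.congr_fun fun n => ?_
    rw [Int.natAbs_natCast, zpow_natCast, mul_pow]
  have h2' : HasSum (fun n : ℕ => z ^ (Int.natAbs (-(n+1))) * x ^ (-((n : ℤ)+1)))
      ((z * x⁻¹) * (1 - z * x⁻¹)⁻¹) := by
    refine h2.congr_fun fun n => ?_
    rw [show (-((n : ℤ)+1)).natAbs = n + 1 by omega]
    rw [show (-((n : ℤ)+1)) = -(((n+1 : ℕ) : ℤ)) by push_cast; ring]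
    rw [zpow_neg, zpow_natCast, ← inv_pow, ← mul_pow, pow_succ']
  have htot := HasSum.of_nat_of_neg_add_one (f := fun a : ℤ => z ^ a.natAbs * x ^ a) h1' h2'
  have hne1 : (1 - z * x) ≠ 0 := by
    intro h; rw [sub_eq_zero] at h; rw [← h, norm_one] at hzx; exact lt_irrefl _ hzx
  have hne2 : (1 - z * x⁻¹) ≠ 0 := by
    intro h; rw [sub_eq_zero] at h; rw [← h, norm_one] at hzxi; exact lt_irrefl _ hzxi
  have : (1 - z * x)⁻¹ + (z * x⁻¹) * (1 - z * x⁻¹)⁻¹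
      = (1 - z ^ 2) / ((1 - z * x) * (1 - z * x⁻¹)) := by
    have hxx : x * x⁻¹ = 1 := mul_inv_cancel₀ hx0
    have hA : (1 - z * x)⁻¹ * (1 - z * x) = 1 := inv_mul_cancel₀ hne1
    have hB : (1 - z * x⁻¹)⁻¹ * (1 - z * x⁻¹) = 1 := inv_mul_cancel₀ hne2
    rw [eq_div_iff (mul_ne_zero hne1 hne2)]
    linear_combination (1 - z * x⁻¹) * hA + (z * x⁻¹ * (1 - z * x)) * hB - z ^ 2 * hxx
  rw [this] at htot
  exact htot

lemma summable_norm_geom_int (z x : ℂ) (hz : ‖z‖ < 1) (hx : ‖x‖ = 1) :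
    Summable (fun a : ℤ => ‖z ^ a.natAbs * x ^ a‖) := by
  have h := (hasSum_geom_int ((‖z‖ : ℝ) : ℂ) 1 (by simpa using hz) (by simp)).summable
  have h2 : Summable (fun a : ℤ => ((‖z‖ ^ a.natAbs : ℝ) : ℂ)) := by
    refine h.congr fun a => ?_
    push_cast
    simp
  rw [summable_ofReal] at h2
  refine h2.congr fun a => ?_
  rw [norm_mul, norm_pow, norm_zpow, hx, one_zpow, mul_one]

lemma hasSum_pi_prod : ∀ (n : ℕ) (f : Fin n → ℤ → ℂ) (S : Fin n → ℂ),
    (∀ j, HasSum (f j) (S j)) → (∀ j, Summable (fun a => ‖f j a‖)) →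
    HasSum (fun a : Fin n → ℤ => ∏ j, f j (a j)) (∏ j, S j) ∧
      Summable (fun a : Fin n → ℤ => ‖∏ j, f j (a j)‖) := by
  intro n
  induction n with
  | zero =>
    intro f S _ _
    constructor
    · have := hasSum_fintype (fun a : Fin 0 → ℤ => ∏ j, f j (a j))
      simpa using this
    · exact .of_finite
  | succ n ih =>
    intro f S hf hnorm
    obtain ⟨ihS, ihN⟩ := ih (fun j => f j.succ) (fun j => S j.succ)
      (fun j => hf j.succ) (fun j => hnorm j.succ)
    set P : (Fin n → ℤ) → ℂ := fun a : Fin n → ℤ => ∏ j : Fin n, f j.succ (a j) with hP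
    set g : ℤ → ℂ := f 0 with hg
    have hmulsum : Summable (fun p : ℤ × (Fin n → ℤ) => g p.1 * P p.2) :=
      summable_mul_of_summable_norm (hnorm 0) ihN
    have hprod : HasSum (fun p : ℤ × (Fin n → ℤ) => g p.1 * P p.2)
        (S 0 * ∏ j : Fin n, S j.succ) :=
      (hf 0).mul ihS hmulsum
    have hnormsum : Summable (fun p : ℤ × (Fin n → ℤ) => ‖g p.1 * P p.2‖) :=
      Summable.mul_norm (hnorm 0) ihN
    set e := Fin.consEquiv (fun _ : Fin (n+1) => ℤ) with he
    have hcomp : ((fun a : Fin (n+1) → ℤ => ∏ j, f j (a j)) ∘ e)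
        = fun p : ℤ × (Fin n → ℤ) => g p.1 * P p.2 := by
      funext p
      simp only [Function.comp_apply, he, Fin.consEquiv_apply, hP, hg]
      rw [Fin.prod_univ_succ]
      simp
    have hcompn : ((fun a : Fin (n+1) → ℤ => ‖∏ j, f j (a j)‖) ∘ e)
        = fun p : ℤ × (Fin n → ℤ) => ‖g p.1 * P p.2‖ := by
      funext p
      simp only [Function.comp_apply, he, Fin.consEquiv_apply, hP, hg]
      rw [Fin.prod_univ_succ]
      simp
    constructor
    · rw [Fin.prod_univ_succ]
      exact (Equiv.hasSum_iff e).mp (by rw [hcomp]; exact hprod)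
    · exact (Equiv.summable_iff e).mp (by rw [hcompn]; exact hnormsum)

lemma char_sum (q : ℕ) (hq : 0 < q) (ξ : ℂ)
    (hξ : ξ = Complex.exp (2 * Real.pi * Complex.I / q)) (m : ℤ) :
    ∑ l ∈ Finset.range q, ξ ^ ((l : ℤ) * m) = if (q : ℤ) ∣ m then (q : ℂ) else 0 := by
  have hprim : IsPrimitiveRoot ξ q := hξ ▸ Complex.isPrimitiveRoot_exp q hq.ne'
  have hξ0 : ξ ≠ 0 := hprim.ne_zero hq.ne'
  have step : ∀ l ∈ Finset.range q, ξ ^ ((l : ℤ) * m) = (ξ ^ m) ^ l := by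
    intro l _
    rw [mul_comm, zpow_mul, zpow_natCast]
  rw [Finset.sum_congr rfl step]
  by_cases hdvd : (q : ℤ) ∣ m
  · rw [if_pos hdvd]
    have : ξ ^ m = 1 := (hprim.zpow_eq_one_iff_dvd m).mpr hdvd
    simp [this]
  · rw [if_neg hdvd]
    have hne1 : ξ ^ m ≠ 1 := fun h => hdvd ((hprim.zpow_eq_one_iff_dvd m).mp h)
    rw [geom_sum_eq hne1]
    have : (ξ ^ m) ^ q = 1 := by
      rw [← zpow_natCast, ← zpow_mul, mul_comm, zpow_mul, zpow_natCast, hprim.pow_eq_one,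
        one_zpow]
    rw [this, sub_self, zero_div]

set_option maxHeartbeats 1000000

/-- **Zagier's formula for the generating theta function of a lens-space lattice.**
Let `N(k) = #{a ∈ ℤⁿ : Σᵢ aᵢsᵢ ≡ 0 (mod q), ‖a‖₁ = k}` with `gcd(q, s₁, …, sₙ) = 1` and
`ξ = e^{2πi/q}`.  Then for `|z| < 1`,
`Σ_k N(k) z^k = ((1-z²)ⁿ/q) Σ_{l=0}^{q-1} Π_j 1/((z - ξ^{l sⱼ})(z - ξ^{-l sⱼ}))`. -/
theorem theta_congruence_lattice_eq_sum
    (n : ℕ) (hn : 1 ≤ n) (q : ℕ) (hq : 0 < q) (s : Fin n → ℤ)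
    (hs : Int.gcd (q : ℤ) (Finset.univ.gcd s) = 1)
    (N : ℕ → ℕ)
    (hN : ∀ k, N k = Set.ncard {a : Fin n → ℤ |
        (q : ℤ) ∣ (∑ i, a i * s i) ∧ (∑ i, (a i).natAbs) = k})
    (ξ : ℂ) (hξ : ξ = Complex.exp (2 * Real.pi * Complex.I / q))
    (z : ℂ) (hz : ‖z‖ < 1) :
    HasSum (fun k : ℕ => (N k : ℂ) * z ^ k)
      ((1 - z ^ 2) ^ n / (q : ℂ) *
        ∑ l ∈ Finset.range q, ∏ j : Fin n,
          1 / ((z - ξ ^ ((l : ℤ) * s j)) * (z - ξ ^ (-((l : ℤ) * s j))))) := by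
  classical
  clear hn hs
  have hznorm : ‖z‖ < 1 := by exact hz
  have hq0 : (q : ℂ) ≠ 0 := Nat.cast_ne_zero.mpr hq.ne'
  have hprim : IsPrimitiveRoot ξ q := hξ ▸ Complex.isPrimitiveRoot_exp q hq.ne'
  have hξ0 : ξ ≠ 0 := hprim.ne_zero hq.ne'
  have hξnorm : ‖ξ‖ = 1 := by
    have h2 : (2 * Real.pi * Complex.I / q) = ((2 * Real.pi / q : ℝ) : ℂ) * Complex.I := by
      push_cast; ring
    rw [hξ, h2, Complex.norm_exp_ofReal_mul_I]
  have hxnorm : ∀ m : ℤ, ‖ξ ^ m‖ = 1 := fun m => by rw [norm_zpow, hξnorm, one_zpow]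
  have hx0 : ∀ m : ℤ, ξ ^ m ≠ 0 := fun m => zpow_ne_zero m hξ0
  -- Step 1 : for each l, the product sum over ℤⁿ
  have hstep1 : ∀ l : ℕ, HasSum
      (fun a : Fin n → ℤ => ∏ j : Fin n, (z ^ (a j).natAbs * (ξ ^ ((l:ℤ) * s j)) ^ (a j)))
      (∏ j : Fin n, (1 - z ^ 2) /
        ((1 - z * ξ ^ ((l:ℤ) * s j)) * (1 - z * (ξ ^ ((l:ℤ) * s j))⁻¹))) := by
    intro l
    exact (hasSum_pi_prod n
      (fun j => fun a : ℤ => z ^ a.natAbs * (ξ ^ ((l:ℤ) * s j)) ^ a)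
      (fun j => (1 - z ^ 2) /
        ((1 - z * ξ ^ ((l:ℤ) * s j)) * (1 - z * (ξ ^ ((l:ℤ) * s j))⁻¹)))
      (fun j => hasSum_geom_int z _ hznorm (hxnorm _))
      (fun j => summable_norm_geom_int z _ hznorm (hxnorm _))).1
  have hsum : HasSum
      (fun a : Fin n → ℤ => (∑ l ∈ Finset.range q,
        ∏ j : Fin n, (z ^ (a j).natAbs * (ξ ^ ((l:ℤ) * s j)) ^ (a j))) / q)
      ((∑ l ∈ Finset.range q, ∏ j : Fin n, (1 - z ^ 2) /
        ((1 - z * ξ ^ ((l:ℤ) * s j)) * (1 - z * (ξ ^ ((l:ℤ) * s j))⁻¹))) / q) :=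
    (hasSum_sum (fun l _ => hstep1 l)).div_const _
  -- pointwise identification with the indicator function
  set G : (Fin n → ℤ) → ℂ := fun a =>
    (if (q:ℤ) ∣ (∑ i, a i * s i) then 1 else 0) * z ^ (∑ i, (a i).natAbs) with hG
  have hpoint : ∀ a : Fin n → ℤ,
      (∑ l ∈ Finset.range q,
        ∏ j : Fin n, (z ^ (a j).natAbs * (ξ ^ ((l:ℤ) * s j)) ^ (a j))) / q = G a := by
    intro a
    have h1 : ∀ l ∈ Finset.range q,
        ∏ j : Fin n, (z ^ (a j).natAbs * (ξ ^ ((l:ℤ) * s j)) ^ (a j))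
        = z ^ (∑ i, (a i).natAbs) * ξ ^ ((l:ℤ) * (∑ i, a i * s i)) := by
      intro l _
      rw [Finset.prod_mul_distrib]
      congr 1
      · exact Finset.prod_pow_eq_pow_sum _ _ _
      · calc ∏ j : Fin n, (ξ ^ ((l:ℤ) * s j)) ^ (a j)
            = ∏ j : Fin n, ξ ^ ((l:ℤ) * s j * (a j)) := by
              exact Finset.prod_congr rfl fun j _ => (zpow_mul ξ _ _).symm
          _ = ξ ^ (∑ j : Fin n, (l:ℤ) * s j * (a j)) := zpow_finset_sum' ξ hξ0 _ _
          _ = ξ ^ ((l:ℤ) * (∑ i, a i * s i)) := by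
              rw [Finset.mul_sum]
              congr 1
              exact Finset.sum_congr rfl fun j _ => by ring
    rw [Finset.sum_congr rfl h1, ← Finset.mul_sum, char_sum q hq ξ hξ]
    by_cases hd : (q:ℤ) ∣ (∑ i, a i * s i)
    · rw [if_pos hd, hG]
      simp only [if_pos hd, one_mul]
      rw [mul_div_assoc, div_self hq0, mul_one]
    · rw [if_neg hd, hG]
      simp only [if_neg hd, zero_mul, mul_zero, zero_div]
  have hGsum : HasSum G
      ((∑ l ∈ Finset.range q, ∏ j : Fin n, (1 - z ^ 2) /
        ((1 - z * ξ ^ ((l:ℤ) * s j)) * (1 - z * (ξ ^ ((l:ℤ) * s j))⁻¹))) / q) :=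
    hsum.congr_fun (fun a => (hpoint a).symm)
  -- Step 2 : regroup by the ℓ¹-norm
  set ν : (Fin n → ℤ) → ℕ := fun a => ∑ i, (a i).natAbs with hν
  have hGfib : ∀ k : ℕ, HasSum (fun c : {a : Fin n → ℤ // ν a = k} => G c.1)
      ((N k : ℂ) * z ^ k) := by
    intro k
    have hfin : {a : Fin n → ℤ | ν a = k}.Finite := by
      apply Set.Finite.subset (Set.Finite.pi
        (fun i : Fin n => Set.finite_Icc (-(k:ℤ)) (k:ℤ)))
      intro a ha
      simp only [Set.mem_setOf_eq] at ha
      rw [Set.mem_pi]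
      intro i _
      have h1 : (a i).natAbs ≤ k := ha ▸ Finset.single_le_sum
        (f := fun i => (a i).natAbs) (fun _ _ => Nat.zero_le _) (Finset.mem_univ i)
      have h2 : |a i| ≤ (k:ℤ) := by
        rw [Int.abs_eq_natAbs]; exact_mod_cast h1
      exact Set.mem_Icc.mpr (abs_le.mp h2)
    have hvanish : ∀ a ∉ hfin.toFinset, Set.indicator {a | ν a = k} G a = 0 := by
      intro a ha
      rw [Set.Finite.mem_toFinset] at ha
      exact Set.indicator_of_notMem ha G
    have hind := hasSum_sum_of_ne_finset_zero (L := SummationFilter.unconditional _) hvanish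
    have hval : ∑ a ∈ hfin.toFinset, Set.indicator {a | ν a = k} G a
        = (N k : ℂ) * z ^ k := by
      have e1 : ∀ a ∈ hfin.toFinset, Set.indicator {a | ν a = k} G a
          = (if (q:ℤ) ∣ (∑ i, a i * s i) then (z ^ k : ℂ) else 0) := by
        intro a ha
        rw [Set.Finite.mem_toFinset] at ha
        rw [Set.indicator_of_mem ha]
        simp only [Set.mem_setOf_eq] at ha
        have ha' : (∑ i, (a i).natAbs) = k := ha
        simp only [hG, ha']
        by_cases hd : (q:ℤ) ∣ (∑ i, a i * s i)
        · rw [if_pos hd, if_pos hd, one_mul]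
        · rw [if_neg hd, if_neg hd, zero_mul]
      rw [Finset.sum_congr rfl e1, ← Finset.sum_filter, Finset.sum_const, nsmul_eq_mul]
      congr 1
      rw [hN k]
      have hseteq : {a : Fin n → ℤ | (q : ℤ) ∣ (∑ i, a i * s i)
          ∧ (∑ i, (a i).natAbs) = k}
          = ↑(hfin.toFinset.filter (fun a => (q:ℤ) ∣ (∑ i, a i * s i))) := by
        ext a
        simp only [Set.mem_setOf_eq, Finset.coe_filter, Set.Finite.mem_toFinset]
        constructor
        · rintro ⟨h1, h2⟩; exact ⟨h2, h1⟩
        · rintro ⟨h1, h2⟩; exact ⟨h2, h1⟩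
      rw [hseteq, Set.ncard_coe_finset]
    rw [← hval]
    have := (hasSum_subtype_iff_indicator (s := {a : Fin n → ℤ | ν a = k})
      (f := G) (a := ∑ a ∈ hfin.toFinset, Set.indicator {a | ν a = k} G a)).mpr hind
    exact this
  have hsig : HasSum (fun k : ℕ => (N k : ℂ) * z ^ k)
      ((∑ l ∈ Finset.range q, ∏ j : Fin n, (1 - z ^ 2) /
        ((1 - z * ξ ^ ((l:ℤ) * s j)) * (1 - z * (ξ ^ ((l:ℤ) * s j))⁻¹))) / q) :=
    HasSum.sigma ((Equiv.sigmaFiberEquiv ν).hasSum_iff.mpr hGsum) (fun k => hGfib k)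
  -- Step 3 : identify the sum with the stated right-hand side
  have hD : ∀ x : ℂ, x ≠ 0 → (1 - z * x) * (1 - z * x⁻¹) = (z - x) * (z - x⁻¹) := by
    intro x hx
    have hxx : x * x⁻¹ = 1 := mul_inv_cancel₀ hx
    linear_combination (z ^ 2 - 1) * hxx
  have hfin : (∑ l ∈ Finset.range q, ∏ j : Fin n, (1 - z ^ 2) /
        ((1 - z * ξ ^ ((l:ℤ) * s j)) * (1 - z * (ξ ^ ((l:ℤ) * s j))⁻¹))) / q
      = (1 - z ^ 2) ^ n / (q : ℂ) *
        ∑ l ∈ Finset.range q, ∏ j : Fin n,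
          1 / ((z - ξ ^ ((l : ℤ) * s j)) * (z - ξ ^ (-((l : ℤ) * s j)))) := by
    have hprodeq : ∀ l ∈ Finset.range q, ∏ j : Fin n, (1 - z ^ 2) /
        ((1 - z * ξ ^ ((l:ℤ) * s j)) * (1 - z * (ξ ^ ((l:ℤ) * s j))⁻¹))
        = (1 - z ^ 2) ^ n * ∏ j : Fin n,
          1 / ((z - ξ ^ ((l : ℤ) * s j)) * (z - ξ ^ (-((l : ℤ) * s j)))) := by
      intro l _
      rw [show (1 - z ^ 2) ^ n = ∏ _j : Fin n, (1 - z ^ 2) by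
        rw [Finset.prod_const, Finset.card_univ, Fintype.card_fin]]
      rw [← Finset.prod_mul_distrib]
      refine Finset.prod_congr rfl fun j _ => ?_
      rw [hD _ (hx0 _), zpow_neg, mul_one_div]
    rw [Finset.sum_congr rfl hprodeq, ← Finset.mul_sum]
    ring
  rw [← hfin]
  exact hsig
end
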